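/- arXiv:1101.3918 — 7 statements merged into one kernel-verified Lean document; each statement's English description precedes it below -/
import Mathlib

section
/- Let v be a weight function and g(x)=v(1-1/x). Suppose u is a real harmonic function on the open unit disk given by u(re^{iφ}) = Re ∑_{n=0}^∞ a_n r^n e^{inφ} (a_n ∈ ℂ, the series converging for 0 ≤ r < 1), and suppose there exists K > 0 such that u(z) ≤ K v(|z|) for all z in the unit disk. Then there exists a constant C > 0 (depending only on K and a_0) such that |a_n| ≤ C g(n) for all integers n ≥ 1. -/
open Complex Real intervalIntegral

lemma aux_expInt (k : ℤ) :
    ∫ θ in (0:ℝ)..(2*Real.pi), Complex.exp (k * θ * Complex.I)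
      = if k = 0 then (2*Real.pi : ℂ) else 0 := by
  rcases eq_or_ne k 0 with hk | hk
  · simp [hk]
  · have hk' : (k : ℂ) * Complex.I ≠ 0 := by
      simp [Complex.I_ne_zero, Complex.ext_iff, hk]
    have : ∀ θ : ℝ, (k : ℂ) * θ * Complex.I = (k * Complex.I) * θ := by
      intro θ; ring
    simp only [this]
    rw [integral_exp_mul_complex hk', if_neg hk]
    have h1 : (k * Complex.I) * (2*Real.pi : ℝ) = k * (2 * Real.pi * Complex.I) := by
      push_cast; ring
    rw [h1, Complex.exp_int_mul_two_pi_mul_I]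
    simp


lemma aux_summable {a : ℕ → ℂ}
    (hconv : ∀ z ∈ Metric.ball (0:ℂ) 1, Summable (fun m : ℕ => a m * z ^ m))
    {r : ℝ} (hr0 : 0 ≤ r) (hr1 : r < 1) :
    Summable (fun m : ℕ => ‖a m‖ * r ^ m) := by
  set ρ : ℝ := (1 + r) / 2 with hρ
  have hrρ : r < ρ := by rw [hρ]; linarith
  have hρ1 : ρ < 1 := by rw [hρ]; linarith
  have hρ0 : 0 < ρ := by rw [hρ]; linarith
  have hmem : (ρ : ℂ) ∈ Metric.ball (0:ℂ) 1 := by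
    simp [abs_of_pos hρ0, hρ1]
  have hsum := hconv _ hmem
  have htend : Filter.Tendsto (fun m : ℕ => ‖a m‖ * ρ ^ m) Filter.atTop (nhds 0) := by
    have := hsum.tendsto_atTop_zero.norm
    simpa [norm_mul, abs_of_pos hρ0] using this
  obtain ⟨C, hC⟩ := htend.bddAbove_range
  have key : ∀ m : ℕ, ‖a m‖ * r ^ m ≤ C * (r / ρ) ^ m := by
    intro m
    have h1 : ‖a m‖ * ρ ^ m ≤ C := hC ⟨m, rfl⟩
    have h2 : ‖a m‖ * r ^ m = (‖a m‖ * ρ ^ m) * (r / ρ) ^ m := by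
      rw [mul_assoc, ← mul_pow, mul_div_assoc', mul_comm ρ r, mul_div_assoc, div_self hρ0.ne', mul_one]
    rw [h2]
    have : (0:ℝ) ≤ (r / ρ) ^ m := by positivity
    nlinarith [norm_nonneg (a m), pow_nonneg hr0 m, pow_nonneg hρ0.le m]
  refine Summable.of_nonneg_of_le (fun m => by positivity) key ?_
  exact (summable_geometric_of_lt_one (by positivity) (by rw [div_lt_one hρ0]; exact hrρ)).mul_left C


lemma aux_hasSum {a : ℕ → ℂ}
    (hconv : ∀ z ∈ Metric.ball (0:ℂ) 1, Summable (fun m : ℕ => a m * z ^ m))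
    {r : ℝ} (hr0 : 0 ≤ r) (hr1 : r < 1) (k : ℤ) :
    HasSum (fun m : ℕ => a m * (r:ℂ) ^ m * (if (m:ℤ) + k = 0 then (2*Real.pi : ℂ) else 0))
      (∫ θ in (0:ℝ)..(2*Real.pi),
        (∑' m : ℕ, a m * ((r:ℂ) * Complex.exp (θ * Complex.I)) ^ m)
          * Complex.exp (k * θ * Complex.I)) := by
  have habs : ∀ θ : ℝ, ‖(r:ℂ) * Complex.exp (θ * Complex.I)‖ = r := by
    intro θ
    rw [norm_mul, Complex.norm_real, Complex.norm_exp_ofReal_mul_I, Real.norm_eq_abs, _root_.abs_of_nonneg hr0, mul_one]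
  have hmem : ∀ θ : ℝ, (r:ℂ) * Complex.exp (θ * Complex.I) ∈ Metric.ball (0:ℂ) 1 := by
    intro θ
    rw [Metric.mem_ball, dist_zero_right, habs θ]
    exact hr1
  -- integral of each term
  have hterm : ∀ m : ℕ, (∫ θ in (0:ℝ)..(2*Real.pi),
      a m * ((r:ℂ) * Complex.exp (θ * Complex.I)) ^ m * Complex.exp (k * θ * Complex.I))
      = a m * (r:ℂ) ^ m * (if (m:ℤ) + k = 0 then (2*Real.pi : ℂ) else 0) := by
    intro m
    have heq : ∀ θ : ℝ,
        a m * ((r:ℂ) * Complex.exp (θ * Complex.I)) ^ m * Complex.exp (k * θ * Complex.I)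
          = a m * (r:ℂ) ^ m * Complex.exp (((m:ℤ) + k : ℤ) * θ * Complex.I) := by
      intro θ
      have hme : Complex.exp ((m:ℂ) * (θ * Complex.I)) * Complex.exp ((k:ℂ) * θ * Complex.I)
          = Complex.exp (((m:ℤ) + k : ℤ) * θ * Complex.I) := by
        rw [← Complex.exp_add]; push_cast; ring_nf
      rw [mul_pow, ← Complex.exp_nat_mul, ← hme]
      ring
    simp only [heq]
    rw [intervalIntegral.integral_const_mul, aux_expInt ((m:ℤ) + k)]
  rw [show (fun m : ℕ => a m * (r:ℂ) ^ m * (if (m:ℤ) + k = 0 then (2*Real.pi : ℂ) else 0))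
      = fun m : ℕ => (∫ θ in (0:ℝ)..(2*Real.pi),
        a m * ((r:ℂ) * Complex.exp (θ * Complex.I)) ^ m * Complex.exp (k * θ * Complex.I))
      from funext fun m => (hterm m).symm]
  apply intervalIntegral.hasSum_integral_of_dominated_convergence
    (bound := fun m (_ : ℝ) => ‖a m‖ * r ^ m)
  · intro m
    apply Continuous.aestronglyMeasurable
    continuity
  · intro m
    filter_upwards with θ hθ
    rw [norm_mul, norm_mul, norm_pow]
    have h2 : ‖Complex.exp ((k:ℂ) * θ * Complex.I)‖ = 1 := by
      rw [Complex.norm_exp]; simp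
    simp only [habs θ, h2, mul_one, le_refl]
  · filter_upwards with θ hθ
    exact (aux_summable hconv hr0 hr1)
  · exact intervalIntegrable_const
  · filter_upwards with θ hθ
    exact ((hconv _ (hmem θ)).hasSum).mul_right _

lemma aux_coeff
    (v : ℝ → ℝ) (a : ℕ → ℂ) (u : ℂ → ℝ) (K : ℝ)
    (hconv : ∀ z ∈ Metric.ball (0:ℂ) 1, Summable (fun m : ℕ => a m * z ^ m))
    (hu : ∀ z ∈ Metric.ball (0:ℂ) 1, u z = (∑' m : ℕ, a m * z ^ m).re)
    (hbdd : ∀ z ∈ Metric.ball (0:ℂ) 1, u z ≤ K * v ‖z‖)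
    {r : ℝ} (hr0 : 0 < r) (hr1 : r < 1) {n : ℕ} (hn : 1 ≤ n) :
    ‖a n‖ * r ^ n ≤ 2 * (K * v r - (a 0).re) := by
  set f : ℝ → ℂ := fun θ => ∑' m : ℕ, a m * ((r:ℂ) * Complex.exp (θ * Complex.I)) ^ m with hf
  have habs : ∀ θ : ℝ, ‖(r:ℂ) * Complex.exp (θ * Complex.I)‖ = r := by
    intro θ
    rw [norm_mul, Complex.norm_real, Complex.norm_exp_ofReal_mul_I, Real.norm_eq_abs,
      _root_.abs_of_nonneg hr0.le, mul_one]
  have hmem : ∀ θ : ℝ, (r:ℂ) * Complex.exp (θ * Complex.I) ∈ Metric.ball (0:ℂ) 1 := by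
    intro θ
    rw [Metric.mem_ball, dist_zero_right, habs θ]
    exact hr1
  -- continuity of f
  have hcont : Continuous f := by
    rw [← continuousOn_univ]
    apply TendstoUniformlyOn.continuousOn
      (tendstoUniformlyOn_tsum (aux_summable hconv hr0.le hr1) ?_)
    · refine Filter.Frequently.of_forall fun t => ?_
      apply Continuous.continuousOn
      apply continuous_finset_sum
      intro m _
      continuity
    · intro m x _
      rw [norm_mul, norm_pow, habs x]
  have hpi : (0:ℝ) < Real.pi := Real.pi_pos
  -- the three integrals
  have h1 : (∫ θ in (0:ℝ)..(2*Real.pi), f θ * Complex.exp ((-(n:ℤ) : ℤ) * θ * Complex.I))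
      = a n * (r:ℂ) ^ n * (2*Real.pi) := by
    have hs : HasSum
        (fun m : ℕ => a m * (r:ℂ) ^ m * (if (m:ℤ) + (-(n:ℤ)) = 0 then (2*Real.pi : ℂ) else 0))
        (a n * (r:ℂ) ^ n * (2*Real.pi)) := by
      have := hasSum_single (f := fun m : ℕ =>
          a m * (r:ℂ) ^ m * (if (m:ℤ) + (-(n:ℤ)) = 0 then (2*Real.pi : ℂ) else 0)) n ?_
      · simpa using this
      · intro b hb
        have : ((b:ℤ) + (-(n:ℤ))) ≠ 0 := by omega
        simp [this]
    exact ((aux_hasSum hconv hr0.le hr1 (-(n:ℤ))).unique hs)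
  have h2 : (∫ θ in (0:ℝ)..(2*Real.pi), f θ * Complex.exp ((n:ℤ) * θ * Complex.I)) = 0 := by
    have hs : HasSum
        (fun m : ℕ => a m * (r:ℂ) ^ m * (if (m:ℤ) + (n:ℤ) = 0 then (2*Real.pi : ℂ) else 0))
        0 := by
      have : (fun m : ℕ => a m * (r:ℂ) ^ m * (if (m:ℤ) + (n:ℤ) = 0 then (2*Real.pi : ℂ) else 0))
          = fun _ => 0 := by
        funext m
        have : ((m:ℤ) + (n:ℤ)) ≠ 0 := by omega
        simp [this]
      rw [this]
      exact hasSum_zero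
    exact ((aux_hasSum hconv hr0.le hr1 (n:ℤ)).unique hs)
  have h3 : (∫ θ in (0:ℝ)..(2*Real.pi), f θ) = ((2*Real.pi : ℝ) : ℂ) * a 0 := by
    have hs : HasSum
        (fun m : ℕ => a m * (r:ℂ) ^ m * (if (m:ℤ) + (0:ℤ) = 0 then (2*Real.pi : ℂ) else 0))
        (2*Real.pi * a 0) := by
      have := hasSum_single (f := fun m : ℕ =>
          a m * (r:ℂ) ^ m * (if (m:ℤ) + (0:ℤ) = 0 then (2*Real.pi : ℂ) else 0)) 0 ?_
      · simpa [mul_comm] using this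
      · intro b hb
        have : ((b:ℤ) + (0:ℤ)) ≠ 0 := by omega
        simp only [if_neg this, mul_zero]
    have h0 := aux_hasSum hconv hr0.le hr1 (0:ℤ)
    simp only [Int.cast_zero, zero_mul, Complex.exp_zero, mul_one] at h0
    rw [h0.unique hs]
    push_cast
    ring
  have hEcont : Continuous fun θ:ℝ => Complex.exp ((-(n:ℤ) : ℤ) * θ * Complex.I) := by
    continuity
  have hEcont' : Continuous fun θ:ℝ => Complex.exp ((n:ℤ) * θ * Complex.I) := by
    continuity
  have hEabs : ∀ θ:ℝ, ‖Complex.exp ((-(n:ℤ) : ℤ) * θ * Complex.I)‖ = 1 := by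
    intro θ; rw [Complex.norm_exp]; simp
  -- conjugate integral vanishes
  have hconj : (∫ θ in (0:ℝ)..(2*Real.pi),
      (starRingEnd ℂ) (f θ) * Complex.exp ((-(n:ℤ) : ℤ) * θ * Complex.I)) = 0 := by
    have heq : ∀ θ : ℝ, (starRingEnd ℂ) (f θ) * Complex.exp ((-(n:ℤ) : ℤ) * θ * Complex.I)
        = (starRingEnd ℂ) (f θ * Complex.exp ((n:ℤ) * θ * Complex.I)) := by
      intro θ
      rw [map_mul, ← Complex.exp_conj]
      congr 1
      simp [Complex.conj_I]
    rw [intervalIntegral.integral_congr (fun θ _ => heq θ)]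
    have hint : IntervalIntegrable (fun θ : ℝ => f θ * Complex.exp ((n:ℤ) * θ * Complex.I))
        MeasureTheory.volume 0 (2*Real.pi) := (hcont.mul hEcont').intervalIntegrable _ _
    have := (Complex.conjCLE.toContinuousLinearMap).intervalIntegral_comp_comm hint
    simp only [ContinuousLinearEquiv.coe_coe, Complex.conjCLE_apply] at this
    rw [this, h2, map_zero]
  -- integral of real part against exponential
  have hfc : Continuous fun θ : ℝ => (starRingEnd ℂ) (f θ) := Complex.continuous_conj.comp hcont
  have hre_cont : Continuous fun θ : ℝ => ((f θ).re : ℂ) :=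
    Complex.continuous_ofReal.comp (Complex.continuous_re.comp hcont)
  have hre_cont' : Continuous fun θ : ℝ => (f θ).re := Complex.continuous_re.comp hcont
  have h4 : (∫ θ in (0:ℝ)..(2*Real.pi),
      ((f θ).re : ℂ) * Complex.exp ((-(n:ℤ) : ℤ) * θ * Complex.I))
      = Real.pi * (a n * (r:ℂ) ^ n) := by
    have heq : ∀ θ : ℝ, ((f θ).re : ℂ) * Complex.exp ((-(n:ℤ) : ℤ) * θ * Complex.I)
        = (1/2:ℂ) * (f θ * Complex.exp ((-(n:ℤ) : ℤ) * θ * Complex.I))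
          + (1/2:ℂ) * ((starRingEnd ℂ) (f θ) * Complex.exp ((-(n:ℤ) : ℤ) * θ * Complex.I)) := by
      intro θ
      have hc : ((f θ).re : ℂ) = (f θ + (starRingEnd ℂ) (f θ)) / 2 := by
        rw [Complex.add_conj]; push_cast; ring
      rw [hc]; ring
    rw [intervalIntegral.integral_congr (fun θ _ => heq θ),
      intervalIntegral.integral_add
        (f := fun θ => (1/2:ℂ) * (f θ * Complex.exp ((-(n:ℤ) : ℤ) * θ * Complex.I)))
        (g := fun θ => (1/2:ℂ) * ((starRingEnd ℂ) (f θ) * Complex.exp ((-(n:ℤ) : ℤ) * θ * Complex.I)))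
        ((continuous_const.mul (hcont.mul hEcont)).intervalIntegrable _ _)
        ((continuous_const.mul (hfc.mul hEcont)).intervalIntegrable _ _),
      intervalIntegral.integral_const_mul, intervalIntegral.integral_const_mul, h1, hconj]
    push_cast
    ring
  -- integral of real part
  have h5 : (∫ θ in (0:ℝ)..(2*Real.pi), (f θ).re) = 2*Real.pi * (a 0).re := by
    have hfi : IntervalIntegrable f MeasureTheory.volume 0 (2*Real.pi) :=
      hcont.intervalIntegrable 0 (2*Real.pi)
    have := Complex.reCLM.intervalIntegral_comp_comm hfi
    simp only [Complex.reCLM_apply] at this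
    rw [this, h3, Complex.re_ofReal_mul]
  set M := K * v r with hMdef
  have hM : ∀ θ : ℝ, (f θ).re ≤ M := by
    intro θ
    have := hbdd _ (hmem θ)
    rw [hu _ (hmem θ), habs θ] at this
    exact this
  have hEzero : (∫ θ in (0:ℝ)..(2*Real.pi),
      (M:ℂ) * Complex.exp ((-(n:ℤ) : ℤ) * θ * Complex.I)) = 0 := by
    rw [intervalIntegral.integral_const_mul, aux_expInt]
    have : (-(n:ℤ)) ≠ 0 := by omega
    simp [this]
  have key : (∫ θ in (0:ℝ)..(2*Real.pi),
      (((f θ).re : ℂ) - M) * Complex.exp ((-(n:ℤ) : ℤ) * θ * Complex.I))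
      = Real.pi * (a n * (r:ℂ) ^ n) := by
    have heq : (fun θ : ℝ => (((f θ).re : ℂ) - M) * Complex.exp ((-(n:ℤ) : ℤ) * θ * Complex.I))
        = fun θ : ℝ => ((f θ).re : ℂ) * Complex.exp ((-(n:ℤ) : ℤ) * θ * Complex.I)
          - (M:ℂ) * Complex.exp ((-(n:ℤ) : ℤ) * θ * Complex.I) := by
      funext θ; ring
    rw [heq, intervalIntegral.integral_sub
        (f := fun θ => ((f θ).re : ℂ) * Complex.exp ((-(n:ℤ) : ℤ) * θ * Complex.I))
        (g := fun θ => (M:ℂ) * Complex.exp ((-(n:ℤ) : ℤ) * θ * Complex.I))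
        ((hre_cont.mul hEcont).intervalIntegrable _ _)
        ((continuous_const.mul hEcont).intervalIntegrable _ _),
      h4, hEzero, sub_zero]
  have hnorm : Real.pi * (‖a n‖ * r ^ n)
      ≤ ∫ θ in (0:ℝ)..(2*Real.pi), (M - (f θ).re) := by
    have hb := intervalIntegral.norm_integral_le_integral_norm
      (μ := MeasureTheory.volume)
      (f := fun θ : ℝ => (((f θ).re : ℂ) - M) * Complex.exp ((-(n:ℤ) : ℤ) * θ * Complex.I))
      (by positivity : (0:ℝ) ≤ 2*Real.pi)
    rw [key] at hb
    have hL : ‖(Real.pi : ℂ) * (a n * (r:ℂ) ^ n)‖ = Real.pi * (‖a n‖ * r ^ n) := by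
      rw [norm_mul, norm_mul, norm_pow, Complex.norm_real, Complex.norm_real,
        Real.norm_eq_abs, Real.norm_eq_abs, _root_.abs_of_nonneg hpi.le,
        _root_.abs_of_nonneg hr0.le]
    rw [hL] at hb
    refine hb.trans (le_of_eq (intervalIntegral.integral_congr fun θ _ => ?_))
    rw [norm_mul, hEabs θ, mul_one]
    rw [← Complex.ofReal_sub, Complex.norm_real, Real.norm_eq_abs,
      _root_.abs_of_nonpos (by linarith [hM θ])]
    ring
  have hInt : (∫ θ in (0:ℝ)..(2*Real.pi), (M - (f θ).re))
      = 2*Real.pi * M - 2*Real.pi * (a 0).re := by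
    rw [intervalIntegral.integral_sub (intervalIntegrable_const)
      (hre_cont'.intervalIntegrable _ _),
      intervalIntegral.integral_const, h5]
    simp
  rw [hInt] at hnorm
  have hfin : Real.pi * (‖a n‖ * r ^ n) ≤ Real.pi * (2 * (M - (a 0).re)) := by
    have hrr : Real.pi * (2 * (M - (a 0).re)) = 2*Real.pi*M - 2*Real.pi*(a 0).re := by ring
    rw [hrr]
    exact hnorm
  rw [hMdef] at hfin
  exact le_of_mul_le_mul_left hfin hpi

/-
STATEMENT 0

A weight function is a positive increasing continuous function v on [0,1) with
v(0)=1 and v(r) → ∞ as r → 1⁻; g(x) = v(1-1/x).  If the real harmonic function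
u(z) = Re ∑ a_n z^n on the unit disk satisfies the one-sided bound
u(z) ≤ K v(|z|), then |a_n| ≤ C g(n) for all n ≥ 1, for some C > 0.
-/
theorem stmt_0
    (v : ℝ → ℝ)
    (hv_pos : ∀ r ∈ Set.Ico (0:ℝ) 1, 0 < v r)
    (hv_mono : StrictMonoOn v (Set.Ico (0:ℝ) 1))
    (hv_cont : ContinuousOn v (Set.Ico (0:ℝ) 1))
    (hv_zero : v 0 = 1)
    (hv_top : Filter.Tendsto v (nhdsWithin 1 (Set.Iio (1:ℝ))) Filter.atTop)
    (g : ℝ → ℝ) (hg : ∀ x, g x = v (1 - 1/x))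
    (a : ℕ → ℂ)
    (hconv : ∀ z ∈ Metric.ball (0:ℂ) 1, Summable (fun m : ℕ => a m * z ^ m))
    (u : ℂ → ℝ)
    (hu : ∀ z ∈ Metric.ball (0:ℂ) 1, u z = (∑' m : ℕ, a m * z ^ m).re)
    (K : ℝ) (hK : 0 < K)
    (hbdd : ∀ z ∈ Metric.ball (0:ℂ) 1, u z ≤ K * v ‖z‖) :
    ∃ C > 0, ∀ m : ℕ, 1 ≤ m → ‖a m‖ ≤ C * g m := by
  have ha0 : -‖a 0‖ ≤ (a 0).re := by
    have h := abs_le.mp (Complex.abs_re_le_norm (a 0))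
    exact h.1
  have hv1 : ∀ r : ℝ, 0 ≤ r → r < 1 → 1 ≤ v r := by
    intro r h0 h1
    rcases eq_or_lt_of_le h0 with rfl | h0'
    · rw [hv_zero]
    · have := hv_mono ⟨le_refl 0, one_pos⟩ ⟨h0, h1⟩ h0'
      rw [hv_zero] at this
      linarith
  have hvhalf : 1 ≤ v (1/2) := hv1 _ (by norm_num) (by norm_num)
  have habs0 : (0:ℝ) ≤ ‖a 0‖ := norm_nonneg _
  obtain ⟨C, hC⟩ : ∃ C : ℝ, C = 16 * (K + ‖a 0‖ + 1) * (v (1/2) + 1) := ⟨_, rfl⟩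
  have hCpos : 0 < C := by rw [hC]; positivity
  refine ⟨C, hCpos, ?_⟩
  intro m hm
  rcases eq_or_lt_of_le hm with hm1 | hm2
  · -- m = 1
    have hm1' : m = 1 := hm1.symm
    subst hm1'
    have hcf := aux_coeff v a u K hconv hu hbdd (r := 1/2) (by norm_num) (by norm_num) (le_refl 1)
    have hg1 : g 1 = 1 := by rw [hg]; norm_num; exact hv_zero
    rw [Nat.cast_one, hg1, mul_one]
    have h8 : ‖a 1‖ ≤ 4 * (K * v (1/2) - (a 0).re) := by
      rw [pow_one] at hcf
      linarith
    rw [hC]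
    nlinarith [norm_nonneg (a 1), hK, hvhalf, habs0,
      mul_nonneg (le_of_lt hK) (by linarith : (0:ℝ) ≤ v (1/2)),
      mul_nonneg habs0 (by linarith : (0:ℝ) ≤ v (1/2))]
  · -- m ≥ 2
    have hm2' : 2 ≤ m := hm2
    have hmr : (2:ℝ) ≤ (m:ℝ) := by exact_mod_cast hm2'
    obtain ⟨r, hr⟩ : ∃ r : ℝ, r = 1 - 1/(m:ℝ) := ⟨_, rfl⟩
    have hm0 : (0:ℝ) < (m:ℝ) := by linarith
    have hrhalf : (1/2 : ℝ) ≤ r := by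
      rw [hr]
      have : 1/(m:ℝ) ≤ 1/2 := one_div_le_one_div_of_le (by norm_num) hmr
      linarith
    have hr0 : (0:ℝ) < r := by linarith
    have hr1 : r < 1 := by
      rw [hr]
      have : 0 < 1/(m:ℝ) := by positivity
      linarith
    have hvr : 1 ≤ v r := hv1 _ hr0.le hr1
    have hvrpos : 0 < v r := by linarith
    -- lower bound on r^m
    have hrn : (1/8 : ℝ) ≤ r ^ m := by
      obtain ⟨x, hx⟩ : ∃ x : ℝ, x = 1/((m:ℝ) - 1) := ⟨_, rfl⟩
      have hm1 : (1:ℝ) ≤ (m:ℝ) - 1 := by linarith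
      have hx0 : (0:ℝ) < x := by rw [hx]; positivity
      have hid : r * (1 + x) = 1 := by
        rw [hr, hx]
        field_simp
        ring
      have hpow : (1 + x) ^ m ≤ 8 := by
        have h1 : (1 + x) ≤ Real.exp x := by
          have := Real.add_one_le_exp x
          linarith
        have h2 : (1 + x) ^ m ≤ Real.exp x ^ m :=
          pow_le_pow_left₀ (by linarith) h1 m
        rw [← Real.exp_nat_mul] at h2
        have h3 : (m:ℝ) * x ≤ 2 := by
          rw [hx, mul_one_div, div_le_iff₀ (by linarith : (0:ℝ) < (m:ℝ) - 1)]
          linarith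
        have h4 : Real.exp ((m:ℝ) * x) ≤ Real.exp 2 := Real.exp_le_exp.mpr h3
        have h5 : Real.exp 2 ≤ 8 := by
          have he := Real.exp_one_lt_d9
          have : Real.exp 2 = Real.exp 1 * Real.exp 1 := by
            rw [← Real.exp_add]; norm_num
          nlinarith [Real.exp_pos 1]
        linarith
      have hprod : r ^ m * (1 + x) ^ m = 1 := by
        rw [← mul_pow, hid, one_pow]
      have hxpos : (0:ℝ) < (1+x)^m := by positivity
      rw [show r ^ m = 1 / (1+x)^m by field_simp at hprod ⊢; linarith]
      rw [div_le_div_iff₀ (by norm_num) hxpos]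
      linarith
    have hcf := aux_coeff v a u K hconv hu hbdd hr0 hr1 hm
    have hgm : g m = v r := by rw [hg, hr]
    rw [hgm]
    have hstep : ‖a m‖ * (1/8 : ℝ) ≤ 2 * (K + ‖a 0‖) * v r := by
      have h1 : ‖a m‖ * (1/8:ℝ) ≤ ‖a m‖ * r ^ m :=
        mul_le_mul_of_nonneg_left hrn (norm_nonneg _)
      have h2 : K * v r + ‖a 0‖ ≤ (K + ‖a 0‖) * v r := by nlinarith
      nlinarith
    have hCge : 16 * (K + ‖a 0‖) ≤ C := by
      rw [hC]
      nlinarith [mul_nonneg (by linarith : (0:ℝ) ≤ K + ‖a 0‖) (by linarith : (0:ℝ) ≤ v (1/2))]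
    have h1 : ‖a m‖ ≤ 16 * (K + ‖a 0‖) * v r := by linarith
    have h2 : 16 * (K + ‖a 0‖) * v r ≤ C * v r :=
      mul_le_mul_of_nonneg_right hCge hvrpos.le
    linarith
end

section
/- Let v be a weight function satisfying the doubling condition. Let (n_k)_{k≥1} be a Hadamard gap sequence with ratio λ > 1, let a_{n_k} ∈ ℂ, and suppose u(z) = Re ∑_k a_{n_k} z^{n_k} converges for all z in the open unit disk. Then the following are equivalent: (i) there exists K > 0 with u(z) ≤ K v(|z|) for all z in the disk; (ii) there exists K > 0 with |u(z)| ≤ K v(|z|) for all z in the disk. -/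
open Finset

noncomputable def Complex.abs : AbsoluteValue ℂ ℝ := NormedField.toAbsoluteValue ℂ

theorem Complex.norm_eq_abs (z : ℂ) : ‖z‖ = Complex.abs z := rfl

@[simp] theorem Complex.abs_ofReal (r : ℝ) : Complex.abs (r : ℂ) = |r| := Complex.norm_real r

@[simp] theorem Complex.abs_conj (z : ℂ) : Complex.abs ((starRingEnd ℂ) z) = Complex.abs z :=
  Complex.norm_conj z

theorem Complex.abs_exp_ofReal_mul_I (x : ℝ) : Complex.abs (Complex.exp (x * Complex.I)) = 1 :=
  Complex.norm_exp_ofReal_mul_I x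

@[simp] theorem Complex.abs_two : Complex.abs 2 = 2 := by
  rw [← Complex.norm_eq_abs]; norm_num

theorem Complex.abs_re_le_abs (z : ℂ) : |z.re| ≤ Complex.abs z := Complex.abs_re_le_norm z

theorem Complex.normSq_eq_abs (z : ℂ) : Complex.normSq z = Complex.abs z ^ 2 :=
  Complex.normSq_eq_norm_sq z

namespace Stmt3

lemma sum3 (n : ℕ → ℕ) (F : Finset ℕ)
    (hpair : ∀ k ∈ F, ∀ k' ∈ F, k < k' → 4 * n k ≤ n k') :
    ∀ M : ℕ, (∀ k ∈ F, 4 * n k ≤ n M) → 3 * ∑ k ∈ F, n k ≤ n M := by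
  induction F using Finset.induction_on_max with
  | empty => intro M _; simp
  | insert a s ha ih =>
    intro M hM
    have hane : a ∉ s := fun h => absurd (ha a h) (lt_irrefl a)
    rw [Finset.sum_insert hane]
    have hs : 3 * ∑ k ∈ s, n k ≤ n a := by
      refine ih (fun k hk k' hk' hlt => hpair k (mem_insert_of_mem hk) k' (mem_insert_of_mem hk') hlt) a
        (fun k hk => hpair k (mem_insert_of_mem hk) a (mem_insert_self a s) (ha k hk))
    have hMa : 4 * n a ≤ n M := hM a (mem_insert_self a s)
    omega

lemma core (n : ℕ → ℕ) (hpos : ∀ k, 0 < n k) (F : Finset ℕ)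
    (hpair : ∀ k ∈ F, ∀ k' ∈ F, k < k' → 4 * n k ≤ n k') :
    ∀ d : ℕ → ℤ, (∀ k ∈ F, |d k| ≤ 2) → (∑ k ∈ F, d k * n k = 0) →
    ∀ k ∈ F, d k = 0 := by
  induction F using Finset.induction_on_max with
  | empty => intro d _ _ k hk; simp at hk
  | insert a s ha ih =>
    intro d hd hsum k hk
    have hane : a ∉ s := fun h => absurd (ha a h) (lt_irrefl a)
    rw [Finset.sum_insert hane] at hsum
    have hs3 : 3 * ∑ k ∈ s, n k ≤ n a :=
      sum3 n s (fun k hk k' hk' hlt => hpair k (mem_insert_of_mem hk) k' (mem_insert_of_mem hk') hlt) a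
        (fun k hk => hpair k (mem_insert_of_mem hk) a (mem_insert_self a s) (ha k hk))
    have habs : |∑ k ∈ s, d k * n k| ≤ 2 * ∑ k ∈ s, (n k : ℤ) := by
      calc |∑ k ∈ s, d k * n k| ≤ ∑ k ∈ s, |d k * (n k : ℤ)| := Finset.abs_sum_le_sum_abs _ _
        _ ≤ ∑ k ∈ s, 2 * (n k : ℤ) := by
            refine Finset.sum_le_sum fun k hk => ?_
            rw [abs_mul, abs_of_nonneg (by positivity : (0:ℤ) ≤ (n k : ℤ))]
            exact mul_le_mul_of_nonneg_right (hd k (mem_insert_of_mem hk)) (by positivity)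
        _ = 2 * ∑ k ∈ s, (n k : ℤ) := by rw [Finset.mul_sum]
    have hda : d a = 0 := by
      by_contra hda
      have h1 : (1:ℤ) ≤ |d a| := by have := abs_pos.mpr hda; omega
      have : (n a : ℤ) ≤ |d a| * n a := le_mul_of_one_le_left (by positivity) h1
      have h2 : |d a * (n a : ℤ)| = |∑ k ∈ s, d k * n k| := by
        rw [abs_eq_abs]; right; linarith [hsum]
      rw [abs_mul, abs_of_nonneg (by positivity : (0:ℤ) ≤ (n a : ℤ))] at h2
      have hsz : (3: ℤ) * ∑ k ∈ s, (n k:ℤ) ≤ (n a : ℤ) := by exact_mod_cast hs3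
      have := hpos a
      have hna : (0:ℤ) < n a := by exact_mod_cast this
      nlinarith [habs, h2, hsz, hna]
    rcases Finset.mem_insert.1 hk with rfl | hk'
    · exact hda
    · refine ih (fun p hp q hq h => hpair p (mem_insert_of_mem hp) q (mem_insert_of_mem hq) h) d
        (fun p hp => hd p (mem_insert_of_mem hp)) ?_ k hk'
      rw [hda] at hsum; simpa using hsum

end Stmt3

open Finset Complex MeasureTheory
open scoped Real

namespace Stmt3

noncomputable def ex (q : ℤ) (θ : ℝ) : ℂ := Complex.exp (q * θ * Complex.I)

lemma ex_cont (q : ℤ) : Continuous (ex q) := by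
  unfold ex; fun_prop

lemma abs_ex (q : ℤ) (θ : ℝ) : Complex.abs (ex q θ) = 1 := by
  unfold ex
  have : (q : ℂ) * θ * Complex.I = ((q * θ : ℝ) : ℂ) * Complex.I := by push_cast; ring
  rw [this, Complex.abs_exp_ofReal_mul_I]

lemma ex_mul (q q' : ℤ) (θ : ℝ) : ex q θ * ex q' θ = ex (q + q') θ := by
  unfold ex; rw [← Complex.exp_add]; push_cast; ring_nf

lemma integral_ex (q : ℤ) :
    ∫ θ in (0:ℝ)..(2*Real.pi), ex q θ = if q = 0 then ((2*Real.pi : ℝ) : ℂ) else 0 := by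
  rcases eq_or_ne q 0 with rfl | hq
  · simp [ex]
  · rw [if_neg hq]
    have h1 : ∀ θ : ℝ, ex q θ = Complex.exp ((q * Complex.I) * θ) := by
      intro θ; unfold ex; ring_nf
    simp_rw [h1]
    rw [integral_exp_mul_complex (by simp [Complex.ext_iff, hq] : (q:ℂ) * Complex.I ≠ 0)]
    have h2 : (q:ℂ) * Complex.I * ((2*Real.pi : ℝ) : ℂ) = (q : ℂ) * (2 * Real.pi * Complex.I) := by push_cast; ring
    rw [h2, Complex.exp_int_mul_two_pi_mul_I]
    simp

end Stmt3

namespace Stmt3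

def E3 : Finset ℤ := {-1, 0, 1}

noncomputable def cc (w : ℕ → ℂ) (δ : ℝ) (k : ℕ) (e : ℤ) : ℂ :=
  if e = 1 then ((δ/2 : ℝ) : ℂ) * w k
  else if e = -1 then ((δ/2 : ℝ) : ℂ) * (starRingEnd ℂ) (w k) else 1

noncomputable def P (n : ℕ → ℕ) (w : ℕ → ℂ) (δ : ℝ) (F : Finset ℕ) (θ : ℝ) : ℝ :=
  ∏ k ∈ F, (1 + δ * (w k * ex (n k) θ).re)

noncomputable def Pc (n : ℕ → ℕ) (w : ℕ → ℂ) (δ : ℝ) (F : Finset ℕ) (θ : ℝ) : ℂ :=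
  ∏ k ∈ F, ∑ e ∈ E3, cc w δ k e * ex (e * n k) θ

def pt (F : Finset ℕ) (p : (a : ℕ) → a ∈ F → ℤ) (a : ℕ) : ℤ :=
  if h : a ∈ F then p a h else 0

def sg (n : ℕ → ℕ) (F : Finset ℕ) (p : (a : ℕ) → a ∈ F → ℤ) : ℤ :=
  ∑ k ∈ F, pt F p k * n k

lemma sum_E3 (f : ℤ → ℂ) : ∑ e ∈ E3, f e = f (-1) + f 0 + f 1 := by
  rw [show E3 = insert (-1 : ℤ) (insert 0 {1}) from rfl]
  rw [Finset.sum_insert (by decide), Finset.sum_insert (by decide), Finset.sum_singleton]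
  ring

lemma conj_ex (q : ℤ) (θ : ℝ) : (starRingEnd ℂ) (ex q θ) = ex (-q) θ := by
  unfold ex
  rw [← Complex.exp_conj]
  congr 1
  simp [Complex.ext_iff]

lemma coe_P (n : ℕ → ℕ) (w : ℕ → ℂ) (δ : ℝ) (F : Finset ℕ) (θ : ℝ) :
    ((P n w δ F θ : ℝ) : ℂ) = Pc n w δ F θ := by
  unfold P Pc
  push_cast
  refine Finset.prod_congr rfl fun k _ => ?_
  rw [sum_E3 (fun e => cc w δ k e * ex (e * n k) θ)]
  have hz : (((w k * ex (n k) θ).re : ℝ) : ℂ)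
      = (w k * ex (n k) θ + (starRingEnd ℂ) (w k * ex (n k) θ))/2 := by
    rw [Complex.add_conj]; push_cast; ring
  rw [hz, map_mul, conj_ex]
  have e1 : ((-1 : ℤ) * (n k) : ℤ) = -(n k : ℤ) := by ring
  have e2 : ((0 : ℤ) * (n k) : ℤ) = 0 := by ring
  have e3 : ((1 : ℤ) * (n k) : ℤ) = (n k : ℤ) := by ring
  rw [e1, e2, e3]
  unfold cc
  norm_num
  have : ex 0 θ = 1 := by unfold ex; simp
  rw [this]
  push_cast
  ring

lemma prod_ex (F : Finset ℕ) (g : ℕ → ℤ) (θ : ℝ) :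
    ∏ k ∈ F, ex (g k) θ = ex (∑ k ∈ F, g k) θ := by
  unfold ex
  rw [← Complex.exp_sum]
  congr 1
  push_cast
  rw [Finset.sum_mul, Finset.sum_mul]

lemma Pc_expand (n : ℕ → ℕ) (w : ℕ → ℂ) (δ : ℝ) (F : Finset ℕ) (θ : ℝ) :
    Pc n w δ F θ = ∑ p ∈ F.pi (fun _ => E3),
      (∏ k ∈ F, cc w δ k (pt F p k)) * ex (sg n F p) θ := by
  unfold Pc
  rw [Finset.prod_sum]
  refine Finset.sum_congr rfl fun p hp => ?_
  have hpt : ∀ (x : {x // x ∈ F}), p x.1 x.2 = pt F p x.1 := by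
    intro x; unfold pt; rw [dif_pos x.2]
  calc ∏ x ∈ F.attach, cc w δ x.1 (p x.1 x.2) * ex (p x.1 x.2 * n x.1) θ
      = ∏ x ∈ F.attach, cc w δ x.1 (pt F p x.1) * ex (pt F p x.1 * n x.1) θ := by
        refine Finset.prod_congr rfl fun x _ => by rw [hpt x]
    _ = (∏ x ∈ F.attach, cc w δ x.1 (pt F p x.1)) * ∏ x ∈ F.attach, ex (pt F p x.1 * n x.1) θ := by
        rw [Finset.prod_mul_distrib]
    _ = (∏ k ∈ F, cc w δ k (pt F p k)) * ex (sg n F p) θ := by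
        rw [Finset.prod_attach F (fun k => cc w δ k (pt F p k)),
          Finset.prod_attach F (fun k => ex (pt F p k * n k) θ), prod_ex]
        rfl

end Stmt3

namespace Stmt3

noncomputable def RR (n : ℕ → ℕ) (w : ℕ → ℂ) (δ : ℝ) (F : Finset ℕ) (q : ℤ) : ℂ :=
  ∑ p ∈ (F.pi fun _ => E3).filter (fun p => sg n F p = -q),
    ∏ k ∈ F, cc w δ k (pt F p k)

lemma Pc_cont (n : ℕ → ℕ) (w : ℕ → ℂ) (δ : ℝ) (F : Finset ℕ) :
    Continuous (Pc n w δ F) := by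
  unfold Pc
  refine continuous_finset_prod _ fun k _ => continuous_finset_sum _ fun e _ => ?_
  exact continuous_const.mul (ex_cont _)

lemma integral_ex_mul_Pc (n : ℕ → ℕ) (w : ℕ → ℂ) (δ : ℝ) (F : Finset ℕ) (q : ℤ) :
    ∫ θ in (0:ℝ)..(2*Real.pi), ex q θ * Pc n w δ F θ
      = ((2*Real.pi : ℝ) : ℂ) * RR n w δ F q := by
  have hpw : ∀ θ : ℝ, ex q θ * Pc n w δ F θ = ∑ p ∈ F.pi (fun _ => E3),
      (∏ k ∈ F, cc w δ k (pt F p k)) * ex (q + sg n F p) θ := by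
    intro θ
    rw [Pc_expand, Finset.mul_sum]
    refine Finset.sum_congr rfl fun p _ => ?_
    rw [← ex_mul q (sg n F p) θ]
    ring
  rw [intervalIntegral.integral_congr (g := fun θ => ∑ p ∈ F.pi (fun _ => E3),
      (∏ k ∈ F, cc w δ k (pt F p k)) * ex (q + sg n F p) θ) (fun θ _ => hpw θ)]
  rw [intervalIntegral.integral_finset_sum (f := fun p θ => (∏ k ∈ F, cc w δ k (pt F p k)) * ex (q + sg n F p) θ) (fun p _ =>
    (continuous_const.mul (ex_cont _)).intervalIntegrable _ _)]
  have : ∀ p ∈ F.pi (fun _ => E3),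
      (∫ θ in (0:ℝ)..(2*Real.pi), (∏ k ∈ F, cc w δ k (pt F p k)) * ex (q + sg n F p) θ)
        = if sg n F p = -q then ((2*Real.pi : ℝ) : ℂ) * (∏ k ∈ F, cc w δ k (pt F p k)) else 0 := by
    intro p _
    rw [intervalIntegral.integral_const_mul, integral_ex]
    rcases eq_or_ne (sg n F p) (-q) with h | h
    · rw [if_pos h, if_pos (by omega), mul_comm]
    · rw [if_neg h, if_neg (by omega), mul_zero]
  rw [Finset.sum_congr rfl this, Finset.sum_ite, Finset.sum_const_zero, add_zero,
    ← Finset.mul_sum]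
  rfl

end Stmt3

namespace Stmt3

lemma mem_E3 {e : ℤ} : e ∈ E3 ↔ e = -1 ∨ e = 0 ∨ e = 1 := by
  rw [show E3 = insert (-1 : ℤ) (insert 0 {1}) from rfl]
  simp [Finset.mem_insert]

lemma sg_inj (n : ℕ → ℕ) (hpos : ∀ k, 0 < n k) (F : Finset ℕ)
    (hpair : ∀ k ∈ F, ∀ k' ∈ F, k < k' → 4 * n k ≤ n k')
    {p p' : (a : ℕ) → a ∈ F → ℤ}
    (hp : p ∈ F.pi fun _ => E3) (hp' : p' ∈ F.pi fun _ => E3)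
    (h : sg n F p = sg n F p') : p = p' := by
  have hd : ∀ k ∈ F, pt F p k - pt F p' k = 0 := by
    refine core n hpos F hpair (fun k => pt F p k - pt F p' k) ?_ ?_
    · intro k hk
      have h1 := mem_E3.1 (Finset.mem_pi.1 hp k hk)
      have h2 := mem_E3.1 (Finset.mem_pi.1 hp' k hk)
      simp only [pt, dif_pos hk]
      rcases h1 with h1 | h1 | h1 <;> rcases h2 with h2 | h2 | h2 <;> rw [h1, h2] <;> decide
    · have : ∑ k ∈ F, (pt F p k - pt F p' k) * (n k : ℤ)
          = sg n F p - sg n F p' := by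
        unfold sg
        rw [← Finset.sum_sub_distrib]
        exact Finset.sum_congr rfl fun k _ => by ring
      rw [this, h, sub_self]
  funext a ha
  have := hd a ha
  unfold pt at this
  rw [dif_pos ha, dif_pos ha] at this
  omega

lemma RR_zero (n : ℕ → ℕ) (w : ℕ → ℂ) (δ : ℝ) (hpos : ∀ k, 0 < n k) (F : Finset ℕ)
    (hpair : ∀ k ∈ F, ∀ k' ∈ F, k < k' → 4 * n k ≤ n k') :
    RR n w δ F 0 = 1 := by
  unfold RR
  have hp0 : (fun (a : ℕ) (_ : a ∈ F) => (0:ℤ)) ∈ F.pi (fun _ => E3) :=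
    Finset.mem_pi.2 fun a ha => by decide
  have hsg0 : sg n F (fun a _ => (0:ℤ)) = 0 := by
    unfold sg
    refine Finset.sum_eq_zero fun k hk => ?_
    unfold pt
    rw [dif_pos hk]
    simp
  have hfil : (F.pi fun _ => E3).filter (fun p => sg n F p = -(0:ℤ))
      = {fun a _ => (0:ℤ)} := by
    ext p
    simp only [Finset.mem_filter, Finset.mem_singleton]
    constructor
    · rintro ⟨hp, hs⟩
      exact sg_inj n hpos F hpair hp hp0 (by rw [hs, hsg0]; ring)
    · rintro rfl
      exact ⟨hp0, by rw [hsg0]; ring⟩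
  rw [hfil, Finset.sum_singleton]
  refine Finset.prod_eq_one fun k hk => ?_
  unfold pt cc
  rw [dif_pos hk]
  norm_num

lemma RR_mem (n : ℕ → ℕ) (w : ℕ → ℂ) (δ : ℝ) (hpos : ∀ k, 0 < n k) (F : Finset ℕ)
    (hpair : ∀ k ∈ F, ∀ k' ∈ F, k < k' → 4 * n k ≤ n k')
    {j : ℕ} (hj : j ∈ F) (s : ℤ) (hs : s = 1 ∨ s = -1) :
    RR n w δ F (-(s * n j)) = cc w δ j s := by
  unfold RR
  set p₁ : (a : ℕ) → a ∈ F → ℤ := fun a _ => if a = j then s else 0 with hp₁def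
  have hp₁ : p₁ ∈ F.pi (fun _ => E3) := by
    refine Finset.mem_pi.2 fun a ha => ?_
    by_cases h : a = j <;> simp [hp₁def, h, mem_E3] <;> tauto
  have hsg : sg n F p₁ = s * n j := by
    unfold sg pt
    rw [Finset.sum_eq_single_of_mem j hj]
    · rw [dif_pos hj]; simp [hp₁def]
    · intro b hb hbj
      rw [dif_pos hb]
      simp [hp₁def, hbj]
  have hfil : (F.pi fun _ => E3).filter (fun p => sg n F p = -(-(s * n j)))
      = {p₁} := by
    ext p
    simp only [Finset.mem_filter, Finset.mem_singleton]
    constructor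
    · rintro ⟨hp, hsp⟩
      exact sg_inj n hpos F hpair hp hp₁ (by rw [hsp, hsg]; ring)
    · rintro rfl
      exact ⟨hp₁, by rw [hsg]; ring⟩
  rw [hfil, Finset.sum_singleton]
  rw [Finset.prod_eq_single_of_mem j hj]
  · unfold pt
    rw [dif_pos hj]
    simp [hp₁def]
  · intro b hb hbj
    unfold pt cc
    rw [dif_pos hb]
    simp [hp₁def, hbj]

end Stmt3

namespace Stmt3

lemma abs_cc (w : ℕ → ℂ) (δ : ℝ) (hw : ∀ k, Complex.abs (w k) = 1) (hδ0 : 0 ≤ δ)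
    (k : ℕ) (e : ℤ) :
    Complex.abs (cc w δ k e) = if e = 0 then 1 else if e = 1 ∨ e = -1 then δ/2 else 1 := by
  unfold cc
  rcases eq_or_ne e 1 with rfl | h1
  · rw [if_pos rfl, map_mul, hw k]
    simp [Complex.abs_ofReal, _root_.abs_of_nonneg hδ0]
  · rcases eq_or_ne e (-1) with rfl | h2
    · rw [if_neg (by decide), if_pos rfl, map_mul]
      have : Complex.abs ((starRingEnd ℂ) (w k)) = 1 := by rw [Complex.abs_conj, hw k]
      rw [this]
      simp [Complex.abs_ofReal, _root_.abs_of_nonneg hδ0]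
    · rcases eq_or_ne e 0 with rfl | h0
      · simp
      · rw [if_neg h1, if_neg h2, if_neg h0, if_neg (by tauto)]
        simp

lemma RR_bound (n : ℕ → ℕ) (w : ℕ → ℂ) (δ : ℝ) (hpos : ∀ k, 0 < n k) (F : Finset ℕ)
    (hpair : ∀ k ∈ F, ∀ k' ∈ F, k < k' → 4 * n k ≤ n k')
    (hw : ∀ k, Complex.abs (w k) = 1) (hδ0 : 0 ≤ δ) (hδ2 : δ ≤ 2)
    (q : ℤ) (hq0 : q ≠ 0) (hq : ∀ k ∈ F, q ≠ (n k : ℤ) ∧ q ≠ -(n k : ℤ)) :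
    Complex.abs (RR n w δ F q) ≤ (δ/2)^2 := by
  unfold RR
  set Φ := (F.pi fun _ => E3).filter (fun p => sg n F p = -q) with hΦ
  rcases Φ.eq_empty_or_nonempty with he | ⟨p, hpΦ⟩
  · rw [he]
    simpa using (by positivity : (0:ℝ) ≤ (δ/2)^2)
  · have hpmem := (Finset.mem_filter.1 hpΦ).1
    have hpsg := (Finset.mem_filter.1 hpΦ).2
    have hfil : Φ = {p} := by
      ext p'
      simp only [hΦ, Finset.mem_filter, Finset.mem_singleton]
      constructor
      · rintro ⟨hp', hs'⟩
        exact sg_inj n hpos F hpair hp' hpmem (by rw [hs', hpsg])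
      · rintro rfl
        exact ⟨hpmem, hpsg⟩
    rw [hfil, Finset.sum_singleton]
    set S := F.filter (fun k => pt F p k ≠ 0) with hS
    have hptE : ∀ k ∈ F, pt F p k = -1 ∨ pt F p k = 0 ∨ pt F p k = 1 := by
      intro k hk
      have := mem_E3.1 (Finset.mem_pi.1 hpmem k hk)
      unfold pt
      rw [dif_pos hk]
      simpa using this
    have habs : Complex.abs (∏ k ∈ F, cc w δ k (pt F p k)) = (δ/2) ^ S.card := by
      rw [map_prod]
      rw [← Finset.prod_filter_mul_prod_filter_not F (fun k => pt F p k ≠ 0)]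
      have h1 : ∏ k ∈ F.filter (fun k => pt F p k ≠ 0), Complex.abs (cc w δ k (pt F p k))
          = (δ/2) ^ S.card := by
        rw [← hS, Finset.prod_congr rfl (fun k hk => ?_), Finset.prod_const]
        rw [abs_cc w δ hw hδ0]
        have hk1 := Finset.mem_filter.1 hk
        have := hptE k hk1.1
        rw [if_neg hk1.2, if_pos (by rcases this with h|h|h <;> simp [h] at hk1 ⊢ <;> tauto)]
      have h2 : ∏ k ∈ F.filter (fun k => ¬ pt F p k ≠ 0), Complex.abs (cc w δ k (pt F p k))
          = 1 := by
        refine Finset.prod_eq_one fun k hk => ?_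
        have hk1 := Finset.mem_filter.1 hk
        rw [abs_cc w δ hw hδ0, if_pos (by simpa using hk1.2)]
      rw [h1, h2, mul_one]
    rw [habs]
    have hSne : S.Nonempty := by
      by_contra hSe
      rw [Finset.not_nonempty_iff_eq_empty] at hSe
      have : sg n F p = 0 := by
        unfold sg
        refine Finset.sum_eq_zero fun k hk => ?_
        have : pt F p k = 0 := by
          by_contra hne
          have : k ∈ S := Finset.mem_filter.2 ⟨hk, hne⟩
          rw [hSe] at this
          simp at this
        rw [this, zero_mul]
      omega
    have hcard : 2 ≤ S.card := by
      rcases Nat.lt_or_ge S.card 2 with h | h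
      · exfalso
        interval_cases h' : S.card
        · rw [Finset.card_eq_zero] at h'
          exact absurd h' (Finset.nonempty_iff_ne_empty.1 hSne)
        · obtain ⟨k, hk⟩ := Finset.card_eq_one.1 h'
          have hkF : k ∈ F := by
            have : k ∈ S := by rw [hk]; simp
            exact (Finset.mem_filter.1 this).1
          have hsgk : sg n F p = pt F p k * n k := by
            unfold sg
            rw [Finset.sum_eq_single_of_mem k hkF]
            intro b hb hbk
            have : pt F p b = 0 := by
              by_contra hne
              have : b ∈ S := Finset.mem_filter.2 ⟨hb, hne⟩
              rw [hk] at this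
              simp at this
              exact hbk this
            rw [this, zero_mul]
          have hknz : pt F p k ≠ 0 := by
            have : k ∈ S := by rw [hk]; simp
            exact (Finset.mem_filter.1 this).2
          have := hptE k hkF
          have hqk := hq k hkF
          rcases this with h|h|h
          · rw [h] at hsgk; omega
          · exact hknz h
          · rw [h] at hsgk; omega
      · exact h
    calc (δ/2) ^ S.card ≤ (δ/2) ^ 2 :=
          pow_le_pow_of_le_one (by positivity) (by linarith) hcard
      _ = (δ/2)^2 := rfl

end Stmt3

namespace Stmt3

lemma P_nonneg (n : ℕ → ℕ) (w : ℕ → ℂ) (δ : ℝ) (F : Finset ℕ)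
    (hw : ∀ k, Complex.abs (w k) = 1) (hδ0 : 0 ≤ δ) (hδ1 : δ ≤ 1) (θ : ℝ) :
    0 ≤ P n w δ F θ := by
  unfold P
  refine Finset.prod_nonneg fun k _ => ?_
  have h1 : |(w k * ex (n k) θ).re| ≤ 1 := by
    refine le_trans (Complex.abs_re_le_abs _) ?_
    rw [map_mul, hw, abs_ex, mul_one]
  have := abs_le.1 h1
  nlinarith

lemma P_le (n : ℕ → ℕ) (w : ℕ → ℂ) (δ : ℝ) (F : Finset ℕ)
    (hw : ∀ k, Complex.abs (w k) = 1) (hδ0 : 0 ≤ δ) (hδ1 : δ ≤ 1) (θ : ℝ) :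
    P n w δ F θ ≤ 2 ^ F.card := by
  unfold P
  calc ∏ k ∈ F, (1 + δ * (w k * ex (n k) θ).re) ≤ ∏ k ∈ F, 2 := by
        refine Finset.prod_le_prod (fun k _ => ?_) (fun k _ => ?_)
        · have h1 : |(w k * ex (n k) θ).re| ≤ 1 := by
            refine le_trans (Complex.abs_re_le_abs _) ?_
            rw [map_mul, hw, abs_ex, mul_one]
          have := abs_le.1 h1
          nlinarith
        · have h1 : |(w k * ex (n k) θ).re| ≤ 1 := by
            refine le_trans (Complex.abs_re_le_abs _) ?_
            rw [map_mul, hw, abs_ex, mul_one]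
          have := abs_le.1 h1
          nlinarith
    _ = 2 ^ F.card := by rw [Finset.prod_const]

lemma P_cont (n : ℕ → ℕ) (w : ℕ → ℂ) (δ : ℝ) (F : Finset ℕ) :
    Continuous (P n w δ F) := by
  unfold P
  refine continuous_finset_prod _ fun k _ => ?_
  exact continuous_const.add (continuous_const.mul (Complex.continuous_re.comp
    (continuous_const.mul (ex_cont _))))

lemma integral_P (n : ℕ → ℕ) (w : ℕ → ℂ) (δ : ℝ) (hpos : ∀ k, 0 < n k) (F : Finset ℕ)
    (hpair : ∀ k ∈ F, ∀ k' ∈ F, k < k' → 4 * n k ≤ n k') :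
    ∫ θ in (0:ℝ)..(2*Real.pi), P n w δ F θ = 2*Real.pi := by
  have h1 : ((∫ θ in (0:ℝ)..(2*Real.pi), P n w δ F θ : ℝ) : ℂ)
      = ∫ θ in (0:ℝ)..(2*Real.pi), Pc n w δ F θ := by
    rw [← intervalIntegral.integral_ofReal]
    exact intervalIntegral.integral_congr fun θ _ => coe_P n w δ F θ
  have h2 : ∫ θ in (0:ℝ)..(2*Real.pi), Pc n w δ F θ = ((2*Real.pi : ℝ) : ℂ) := by
    have : ∀ θ : ℝ, Pc n w δ F θ = ex 0 θ * Pc n w δ F θ := by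
      intro θ
      have : ex 0 θ = 1 := by unfold ex; simp
      rw [this, one_mul]
    rw [intervalIntegral.integral_congr (fun θ _ => this θ), integral_ex_mul_Pc,
      RR_zero n w δ hpos F hpair, mul_one]
  rw [h2] at h1
  exact_mod_cast h1

end Stmt3

namespace Stmt3

lemma perF (n : ℕ → ℕ) (hpos : ∀ k, 0 < n k) (hinj : Function.Injective n)
    (b : ℕ → ℂ) (hb : Summable fun k => Complex.abs (b k))
    (M : ℝ) (hM : ∀ θ : ℝ, (∑' j, b j * ex (n j) θ).re ≤ M)
    (F : Finset ℕ) (hF4 : ∀ k ∈ F, ∀ k' ∈ F, k < k' → 4 * n k ≤ n k')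
    (δ : ℝ) (hδ0 : 0 < δ) (hδ1 : δ ≤ 1) :
    (δ/2) * ∑ k ∈ F, Complex.abs (b k) ≤ M + (δ^2/4) * ∑' k, Complex.abs (b k) := by
  classical
  have twopi_pos : (0:ℝ) < 2*Real.pi := by positivity
  set w : ℕ → ℂ := fun k => if b k = 0 then 1 else b k / Complex.abs (b k) with hwdef
  have hw : ∀ k, Complex.abs (w k) = 1 := by
    intro k
    by_cases h : b k = 0
    · simp [hwdef, h]
    · have habs : Complex.abs (b k) ≠ 0 := by simpa [Complex.abs.eq_zero] using h
      simp only [hwdef, h, if_false, map_div₀, Complex.abs_ofReal,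
        _root_.abs_of_nonneg (Complex.abs.nonneg (b k))]
      exact div_self habs
  have hbw : ∀ k, b k * (starRingEnd ℂ) (w k) = ((Complex.abs (b k) : ℝ) : ℂ) := by
    intro k
    by_cases h : b k = 0
    · simp [h]
    · have habs : (Complex.abs (b k) : ℝ) ≠ 0 := by simpa [Complex.abs.eq_zero] using h
      simp only [hwdef, h, if_false, map_div₀, Complex.conj_ofReal]
      rw [mul_div_assoc'] -- b * (conj b / c) = b * conj b / c
      rw [Complex.mul_conj, Complex.normSq_eq_abs]
      rw [show ((Complex.abs (b k) ^ 2 : ℝ) : ℂ) = ((Complex.abs (b k) : ℝ) : ℂ) * ((Complex.abs (b k) : ℝ) : ℂ) by push_cast; ring]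
      rw [mul_div_assoc, div_self (by exact_mod_cast habs), mul_one]
  have hbw' : ∀ k, (starRingEnd ℂ) (b k) * w k = ((Complex.abs (b k) : ℝ) : ℂ) := by
    intro k
    have := congrArg (starRingEnd ℂ) (hbw k)
    simpa [map_mul, Complex.conj_conj, Complex.conj_ofReal, mul_comm] using this
  have hnorm : ∀ (θ : ℝ) (j : ℕ), ‖b j * ex (n j) θ‖ = Complex.abs (b j) := by
    intro θ j
    rw [Complex.norm_eq_abs, map_mul, abs_ex, mul_one]
  have hnorm' : ∀ (θ : ℝ) (j : ℕ), ‖(starRingEnd ℂ) (b j) * ex (-(n j : ℤ)) θ‖ = Complex.abs (b j) := by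
    intro θ j
    rw [Complex.norm_eq_abs, map_mul, abs_ex, mul_one, Complex.abs_conj]
  -- the h functions
  set h : ℕ → ℝ → ℂ := fun j θ =>
    (b j * ex (n j) θ + (starRingEnd ℂ) (b j) * ex (-(n j : ℤ)) θ) * (Pc n w δ F θ / 2)
    with hhdef
  have hPcnorm : ∀ θ, ‖Pc n w δ F θ‖ = P n w δ F θ := by
    intro θ
    rw [← coe_P, Complex.norm_eq_abs, Complex.abs_ofReal,
      _root_.abs_of_nonneg (P_nonneg n w δ F hw hδ0.le hδ1 θ)]
  have hcont_h : ∀ j, Continuous (h j) := by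
    intro j
    refine Continuous.mul ?_ ((Pc_cont n w δ F).div_const 2)
    exact ((continuous_const.mul (ex_cont _)).add (continuous_const.mul (ex_cont _)))
  have hbound_h : ∀ j θ, ‖h j θ‖ ≤ Complex.abs (b j) * 2 ^ F.card := by
    intro j θ
    rw [hhdef]
    calc ‖(b j * ex (n j) θ + (starRingEnd ℂ) (b j) * ex (-(n j : ℤ)) θ) * (Pc n w δ F θ / 2)‖
        = ‖b j * ex (n j) θ + (starRingEnd ℂ) (b j) * ex (-(n j : ℤ)) θ‖ * (‖Pc n w δ F θ‖/2) := by
          rw [norm_mul, norm_div]; norm_num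
      _ ≤ (Complex.abs (b j) + Complex.abs (b j)) * (2 ^ F.card / 2) := by
          refine mul_le_mul ?_ ?_ (by positivity) (by positivity)
          · refine le_trans (norm_add_le _ _) ?_
            rw [hnorm θ j, hnorm' θ j]
          · rw [hPcnorm θ]
            have := P_le n w δ F hw hδ0.le hδ1 θ
            linarith
      _ ≤ Complex.abs (b j) * 2 ^ F.card := by
          have h1 : (0:ℝ) ≤ Complex.abs (b j) := Complex.abs.nonneg _
          have h2 : (0:ℝ) < 2 ^ F.card := by positivity
          rw [show (Complex.abs (b j) + Complex.abs (b j)) * (2 ^ F.card / 2)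
            = Complex.abs (b j) * 2 ^ F.card from by ring]
  -- summability of the series defining the boundary function
  have hsum1 : ∀ θ : ℝ, Summable fun j => b j * ex ((n j : ℤ)) θ := by
    intro θ
    refine Summable.of_norm ?_
    simpa only [hnorm θ] using hb
  have hsum2 : ∀ θ : ℝ, Summable fun j => (starRingEnd ℂ) (b j) * ex (-(n j : ℤ)) θ := by
    intro θ
    refine Summable.of_norm ?_
    simpa only [hnorm' θ] using hb
  -- pointwise identity
  have hpt : ∀ θ : ℝ, (((∑' j, b j * ex ((n j : ℤ)) θ).re * P n w δ F θ : ℝ) : ℂ)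
      = ∑' j, h j θ := by
    intro θ
    have hconj : (starRingEnd ℂ) (∑' j, b j * ex ((n j : ℤ)) θ)
        = ∑' j, (starRingEnd ℂ) (b j) * ex (-(n j : ℤ)) θ := by
      rw [Complex.conj_tsum]
      refine tsum_congr fun j => ?_
      rw [map_mul, conj_ex]
    have hre : (((∑' j, b j * ex ((n j : ℤ)) θ).re : ℝ) : ℂ)
        = ((∑' j, b j * ex ((n j : ℤ)) θ) + ∑' j, (starRingEnd ℂ) (b j) * ex (-(n j : ℤ)) θ) / 2 := by
      rw [← hconj, Complex.add_conj]
      push_cast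
      ring
    rw [Complex.ofReal_mul, hre, coe_P, ← Summable.tsum_add (hsum1 θ) (hsum2 θ)]
    rw [div_mul_eq_mul_div, ← tsum_mul_right, ← tsum_div_const]
    refine tsum_congr fun j => ?_
    rw [hhdef]
    ring
  -- interchanging integral and sum
  have hC2 : (0:ℝ) ≤ (2:ℝ) ^ F.card := by positivity
  have hswap : ((∫ θ in (0:ℝ)..(2*Real.pi), (∑' j, b j * ex ((n j : ℤ)) θ).re * P n w δ F θ : ℝ) : ℂ)
      = ∑' j, ∫ θ in (0:ℝ)..(2*Real.pi), h j θ := by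
    rw [← intervalIntegral.integral_ofReal]
    rw [intervalIntegral.integral_congr (fun θ _ => hpt θ)]
    rw [intervalIntegral.integral_of_le twopi_pos.le]
    rw [MeasureTheory.integral_tsum (fun j => (hcont_h j).aestronglyMeasurable) ?_]
    · exact tsum_congr fun j => (intervalIntegral.integral_of_le twopi_pos.le).symm
    · -- lintegral bound
      have hle : ∀ j, (∫⁻ θ in Set.Ioc (0:ℝ) (2*Real.pi), ‖h j θ‖₊ ∂MeasureTheory.volume)
          ≤ ENNReal.ofReal (Complex.abs (b j) * 2 ^ F.card * (2*Real.pi)) := by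
        intro j
        calc ∫⁻ θ in Set.Ioc (0:ℝ) (2*Real.pi), (‖h j θ‖₊ : ENNReal) ∂MeasureTheory.volume
            ≤ ∫⁻ _ in Set.Ioc (0:ℝ) (2*Real.pi), ENNReal.ofReal (Complex.abs (b j) * 2 ^ F.card) ∂MeasureTheory.volume := by
              refine MeasureTheory.lintegral_mono fun θ => ?_
              rw [← enorm_eq_nnnorm, ← ofReal_norm]
              exact ENNReal.ofReal_le_ofReal (hbound_h j θ)
          _ = ENNReal.ofReal (Complex.abs (b j) * 2 ^ F.card) * MeasureTheory.volume (Set.Ioc (0:ℝ) (2*Real.pi)) := by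
              rw [MeasureTheory.setLIntegral_const]
          _ = ENNReal.ofReal (Complex.abs (b j) * 2 ^ F.card * (2*Real.pi)) := by
              rw [Real.volume_Ioc, sub_zero, ← ENNReal.ofReal_mul (by positivity)]
      refine ne_top_of_le_ne_top ?_ (ENNReal.tsum_le_tsum hle)
      rw [← ENNReal.ofReal_tsum_of_nonneg (fun j => by positivity)
        (by simpa [mul_assoc] using hb.mul_right ((2:ℝ) ^ F.card * (2*Real.pi)))]
      exact ENNReal.ofReal_ne_top
  -- value of each integral
  have hJ : ∀ j, ∫ θ in (0:ℝ)..(2*Real.pi), h j θ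
      = (b j * (((2*Real.pi:ℝ):ℂ) * RR n w δ F ((n j : ℤ)))
        + (starRingEnd ℂ) (b j) * (((2*Real.pi:ℝ):ℂ) * RR n w δ F (-(n j : ℤ)))) / 2 := by
    intro j
    have hptw : ∀ θ, h j θ = (b j * (ex ((n j:ℤ)) θ * Pc n w δ F θ)
        + (starRingEnd ℂ) (b j) * (ex (-(n j:ℤ)) θ * Pc n w δ F θ)) / 2 := by
      intro θ; rw [hhdef]; ring
    rw [intervalIntegral.integral_congr (fun θ _ => hptw θ)]
    rw [intervalIntegral.integral_div]
    rw [intervalIntegral.integral_add (f := fun x => b j * (ex ((n j:ℤ)) x * Pc n w δ F x))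
      (g := fun x => (starRingEnd ℂ) (b j) * (ex (-(n j:ℤ)) x * Pc n w δ F x))
      ((continuous_const.mul ((ex_cont _).mul (Pc_cont n w δ F))).intervalIntegrable _ _)
      ((continuous_const.mul ((ex_cont _).mul (Pc_cont n w δ F))).intervalIntegrable _ _)]
    rw [intervalIntegral.integral_const_mul, intervalIntegral.integral_const_mul]
    rw [integral_ex_mul_Pc, integral_ex_mul_Pc]
  -- summability of the integrals
  have hsumJ : Summable fun j => ∫ θ in (0:ℝ)..(2*Real.pi), h j θ := by
    refine Summable.of_norm_bounded (g := fun j => Complex.abs (b j) * (2 ^ F.card * (2*Real.pi)))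
      (hb.mul_right _) (fun j => ?_)
    have h1 := intervalIntegral.norm_integral_le_of_norm_le_const
      (a := 0) (b := 2*Real.pi) (C := Complex.abs (b j) * 2 ^ F.card) (f := h j)
      (fun θ _ => hbound_h j θ)
    rw [sub_zero, _root_.abs_of_pos twopi_pos] at h1
    calc ‖∫ θ in (0:ℝ)..(2*Real.pi), h j θ‖ ≤ Complex.abs (b j) * 2 ^ F.card * (2*Real.pi) := h1
      _ = Complex.abs (b j) * (2 ^ F.card * (2*Real.pi)) := by ring
  set A : ℝ := ∫ θ in (0:ℝ)..(2*Real.pi), (∑' j, b j * ex ((n j : ℤ)) θ).re * P n w δ F θ with hAdef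
  have hhsre : HasSum (fun j => (∫ θ in (0:ℝ)..(2*Real.pi), h j θ).re) A := by
    have h1 := Complex.hasSum_re hsumJ.hasSum
    rwa [← hswap, Complex.ofReal_re] at h1
  -- values on F
  have htF : ∀ j ∈ F, (∫ θ in (0:ℝ)..(2*Real.pi), h j θ).re
      = 2*Real.pi * ((δ/2) * Complex.abs (b j)) := by
    intro j hj
    rw [hJ j]
    have h1 : RR n w δ F ((n j : ℤ)) = cc w δ j (-1) := by
      rw [show ((n j : ℤ)) = -((-1) * (n j : ℤ)) from by ring,
        RR_mem n w δ hpos F hF4 hj (-1) (Or.inr rfl)]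
    have h2 : RR n w δ F (-(n j : ℤ)) = cc w δ j 1 := by
      rw [show (-(n j : ℤ)) = -((1:ℤ) * (n j : ℤ)) from by ring,
        RR_mem n w δ hpos F hF4 hj 1 (Or.inl rfl)]
    have hc1 : cc w δ j (-1) = ((δ/2:ℝ):ℂ) * (starRingEnd ℂ) (w j) := by unfold cc; norm_num
    have hc2 : cc w δ j 1 = ((δ/2:ℝ):ℂ) * w j := by unfold cc; norm_num
    rw [h1, h2, hc1, hc2]
    rw [show (b j * (((2*Real.pi:ℝ):ℂ) * (((δ/2:ℝ):ℂ) * (starRingEnd ℂ) (w j)))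
        + (starRingEnd ℂ) (b j) * (((2*Real.pi:ℝ):ℂ) * (((δ/2:ℝ):ℂ) * w j))) / 2
        = ((2*Real.pi:ℝ):ℂ) * ((δ/2:ℝ):ℂ)
          * ((b j * (starRingEnd ℂ) (w j)) + ((starRingEnd ℂ) (b j) * w j)) / 2 from by ring]
    rw [hbw j, hbw' j]
    rw [show ((2*Real.pi:ℝ):ℂ) * ((δ/2:ℝ):ℂ)
        * (((Complex.abs (b j):ℝ):ℂ) + ((Complex.abs (b j):ℝ):ℂ)) / 2
        = (((2*Real.pi * ((δ/2) * Complex.abs (b j))):ℝ):ℂ) from by push_cast; ring]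
    rw [Complex.ofReal_re]
  -- bounds off F
  have htnF : ∀ j ∉ F, |(∫ θ in (0:ℝ)..(2*Real.pi), h j θ).re|
      ≤ 2*Real.pi * ((δ^2/4) * Complex.abs (b j)) := by
    intro j hj
    have hjne : ∀ k ∈ F, j ≠ k := fun k hk hc => hj (hc ▸ hk)
    have hq1 : Complex.abs (RR n w δ F ((n j : ℤ))) ≤ (δ/2)^2 := by
      refine RR_bound n w δ hpos F hF4 hw hδ0.le (by linarith) _ ?_ ?_
      · have := hpos j; omega
      · intro k hk
        constructor
        · intro hc
          have hnn : n j = n k := by exact_mod_cast hc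
          exact hjne k hk (hinj hnn)
        · intro hc
          have := hpos k; have := hpos j; omega
    have hq2 : Complex.abs (RR n w δ F (-(n j : ℤ))) ≤ (δ/2)^2 := by
      refine RR_bound n w δ hpos F hF4 hw hδ0.le (by linarith) _ ?_ ?_
      · have := hpos j; omega
      · intro k hk
        constructor
        · intro hc
          have := hpos k; have := hpos j; omega
        · intro hc
          have hnn : n j = n k := by omega
          exact hjne k hk (hinj hnn)
    rw [hJ j]
    refine le_trans (Complex.abs_re_le_abs _) ?_
    rw [map_div₀]
    have habs2 : Complex.abs (2:ℂ) = 2 := by norm_num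
    rw [habs2]
    have hx : Complex.abs (b j * (((2*Real.pi:ℝ):ℂ) * RR n w δ F ((n j : ℤ))))
        ≤ Complex.abs (b j) * (2*Real.pi * (δ/2)^2) := by
      rw [map_mul, map_mul, Complex.abs_ofReal, _root_.abs_of_pos twopi_pos]
      refine mul_le_mul_of_nonneg_left ?_ (Complex.abs.nonneg _)
      exact mul_le_mul_of_nonneg_left hq1 twopi_pos.le
    have hy : Complex.abs ((starRingEnd ℂ) (b j) * (((2*Real.pi:ℝ):ℂ) * RR n w δ F (-(n j : ℤ))))
        ≤ Complex.abs (b j) * (2*Real.pi * (δ/2)^2) := by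
      rw [map_mul, map_mul, Complex.abs_conj, Complex.abs_ofReal, _root_.abs_of_pos twopi_pos]
      refine mul_le_mul_of_nonneg_left ?_ (Complex.abs.nonneg _)
      exact mul_le_mul_of_nonneg_left hq2 twopi_pos.le
    have hsumabs := Complex.abs.add_le (b j * (((2*Real.pi:ℝ):ℂ) * RR n w δ F ((n j : ℤ))))
      ((starRingEnd ℂ) (b j) * (((2*Real.pi:ℝ):ℂ) * RR n w δ F (-(n j : ℤ))))
    have : (δ/2)^2 = δ^2/4 := by ring
    nlinarith [Complex.abs.nonneg (b j)]
  -- lower bound function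
  have hsumL1 : Summable fun j => (if j ∈ F then Complex.abs (b j) else 0) :=
    summable_of_ne_finset_zero (s := F) (fun j hj => if_neg hj)
  have hLle : ∀ j, (2*Real.pi * (δ/2)) * (if j ∈ F then Complex.abs (b j) else 0)
      - (2*Real.pi * (δ^2/4)) * Complex.abs (b j)
      ≤ (∫ θ in (0:ℝ)..(2*Real.pi), h j θ).re := by
    intro j
    by_cases hj : j ∈ F
    · rw [htF j hj, if_pos hj]
      have h0 : 0 ≤ 2*Real.pi * (δ^2/4) * Complex.abs (b j) := by positivity
      nlinarith [h0]
    · rw [if_neg hj]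
      have h1 := htnF j hj
      have h2 := (abs_le.1 h1).1
      nlinarith [h2]
  have hAlow : (2*Real.pi * (δ/2)) * (∑ k ∈ F, Complex.abs (b k))
      - (2*Real.pi * (δ^2/4)) * (∑' k, Complex.abs (b k)) ≤ A := by
    have hsumLa : Summable (fun j => (2*Real.pi * (δ/2)) * (if j ∈ F then Complex.abs (b j) else 0)
        - (2*Real.pi * (δ^2/4)) * Complex.abs (b j)) :=
      (hsumL1.mul_left _).sub (hb.mul_left _)
    have hts := Summable.tsum_le_tsum hLle hsumLa hhsre.summable
    rw [hhsre.tsum_eq] at hts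
    refine le_trans (le_of_eq ?_) hts
    rw [Summable.tsum_sub (hsumL1.mul_left _) (hb.mul_left _), tsum_mul_left, tsum_mul_left]
    congr 2
    rw [tsum_eq_sum (s := F) (fun j hj => if_neg hj)]
    exact Finset.sum_congr rfl fun j hj => (if_pos hj).symm
  -- upper bound
  have hgcont : Continuous (fun θ : ℝ => ∑' j, b j * ex ((n j : ℤ)) θ) :=
    continuous_tsum (fun j => continuous_const.mul (ex_cont _)) hb (fun j θ => (hnorm θ j).le)
  have hAup : A ≤ M * (2*Real.pi) := by
    rw [hAdef]
    have hile : ∀ θ ∈ Set.Icc (0:ℝ) (2*Real.pi),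
        (∑' j, b j * ex ((n j : ℤ)) θ).re * P n w δ F θ ≤ M * P n w δ F θ :=
      fun θ _ => mul_le_mul_of_nonneg_right (hM θ) (P_nonneg n w δ F hw hδ0.le hδ1 θ)
    calc (∫ θ in (0:ℝ)..(2*Real.pi), (∑' j, b j * ex ((n j : ℤ)) θ).re * P n w δ F θ)
        ≤ ∫ θ in (0:ℝ)..(2*Real.pi), M * P n w δ F θ := by
          refine intervalIntegral.integral_mono_on twopi_pos.le ?_ ?_ hile
          · exact ((Complex.continuous_re.comp hgcont).mul (P_cont n w δ F)).intervalIntegrable _ _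
          · exact (continuous_const.mul (P_cont n w δ F)).intervalIntegrable _ _
      _ = M * (2*Real.pi) := by
          rw [intervalIntegral.integral_const_mul, integral_P n w δ hpos F hF4]
  have hfinal : (2*Real.pi * (δ/2)) * (∑ k ∈ F, Complex.abs (b k))
      - (2*Real.pi * (δ^2/4)) * (∑' k, Complex.abs (b k)) ≤ M * (2*Real.pi) :=
    le_trans hAlow hAup
  nlinarith [hfinal, twopi_pos, Real.pi_pos]

end Stmt3

namespace Stmt3

lemma key (n : ℕ → ℕ) (hpos : ∀ k, 0 < n k) (hinj : Function.Injective n)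
    (m : ℕ) (hm : 0 < m)
    (hlac : ∀ k k', k + m ≤ k' → 4 * n k ≤ n k')
    (b : ℕ → ℂ) (hb : Summable fun k => Complex.abs (b k))
    (M : ℝ) (hM : ∀ θ : ℝ, (∑' j, b j * ex ((n j : ℤ)) θ).re ≤ M) :
    3 * ∑' k, Complex.abs (b k) ≤ 16 * (m:ℝ)^2 * M := by
  classical
  have hmR : (1:ℝ) ≤ m := by exact_mod_cast hm
  set δ : ℝ := 1/(2*m) with hδdef
  have hδ0 : 0 < δ := by positivity
  have hδ1 : δ ≤ 1 := by
    rw [hδdef]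
    rw [div_le_one (by positivity)]
    linarith
  have hG : ∀ G : Finset ℕ, ∑ k ∈ G, Complex.abs (b k)
      ≤ 4*(m:ℝ)^2*M + (1/4) * ∑' k, Complex.abs (b k) := by
    intro G
    have hsplit : ∑ k ∈ G, Complex.abs (b k)
        = ∑ i ∈ Finset.range m, ∑ k ∈ G.filter (fun k => k % m = i), Complex.abs (b k) :=
      (Finset.sum_fiberwise_of_maps_to (fun k _ => Finset.mem_range.2 (Nat.mod_lt k hm)) _).symm
    have hclass : ∀ i ∈ Finset.range m,
        ∑ k ∈ G.filter (fun k => k % m = i), Complex.abs (b k)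
          ≤ (2/δ)*M + (δ/2) * ∑' k, Complex.abs (b k) := by
      intro i _
      set F := G.filter (fun k => k % m = i) with hFdef
      have hF4 : ∀ k ∈ F, ∀ k' ∈ F, k < k' → 4 * n k ≤ n k' := by
        intro k hk k' hk' hlt
        have h1 : k % m = i := (Finset.mem_filter.1 hk).2
        have h2 : k' % m = i := (Finset.mem_filter.1 hk').2
        have hmod : k ≡ k' [MOD m] := by unfold Nat.ModEq; rw [h1, h2]
        have hdvd : m ∣ k' - k := (Nat.modEq_iff_dvd' hlt.le).1 hmod
        have hge : m ≤ k' - k := Nat.le_of_dvd (by omega) hdvd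
        exact hlac k k' (by omega)
      have hperF := perF n hpos hinj b hb M hM F hF4 δ hδ0 hδ1
      have h2δ : 0 < 2/δ := by positivity
      calc ∑ k ∈ F, Complex.abs (b k)
          = (2/δ) * ((δ/2) * ∑ k ∈ F, Complex.abs (b k)) := by
            field_simp
        _ ≤ (2/δ) * (M + (δ^2/4) * ∑' k, Complex.abs (b k)) := by
            exact mul_le_mul_of_nonneg_left hperF h2δ.le
        _ = (2/δ)*M + (δ/2) * ∑' k, Complex.abs (b k) := by
            field_simp
            ring
    have h2δm : (m:ℝ) * (2/δ) = 4*(m:ℝ)^2 := by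
      have hm0 : (m:ℝ) ≠ 0 := by positivity
      rw [hδdef]
      field_simp
      ring
    have hδ2m : (m:ℝ) * (δ/2) = 1/4 := by
      have hm0 : (m:ℝ) ≠ 0 := by positivity
      rw [hδdef]
      field_simp
      ring
    calc ∑ k ∈ G, Complex.abs (b k)
        = ∑ i ∈ Finset.range m, ∑ k ∈ G.filter (fun k => k % m = i), Complex.abs (b k) := hsplit
      _ ≤ ∑ _i ∈ Finset.range m, ((2/δ)*M + (δ/2) * ∑' k, Complex.abs (b k)) :=
          Finset.sum_le_sum hclass
      _ = (m:ℝ) * ((2/δ)*M + (δ/2) * ∑' k, Complex.abs (b k)) := by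
          rw [Finset.sum_const, Finset.card_range, nsmul_eq_mul]
      _ = 4*(m:ℝ)^2*M + (1/4) * ∑' k, Complex.abs (b k) := by
          rw [mul_add, ← mul_assoc, ← mul_assoc, h2δm, hδ2m]
  have hB := Summable.tsum_le_of_sum_le hb hG
  linarith

lemma summable_pow (n : ℕ → ℕ) (hge : ∀ k, k + 1 ≤ n k) (a : ℕ → ℂ)
    (hconv : ∀ z ∈ Metric.ball (0:ℂ) 1, Summable (fun k : ℕ => a k * z ^ (n k)))
    (ρ : ℝ) (h0 : 0 ≤ ρ) (h1 : ρ < 1) :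
    Summable fun k => Complex.abs (a k) * ρ ^ (n k) := by
  rcases eq_or_lt_of_le h0 with rfl | hρ
  · have hz : ∀ k, Complex.abs (a k) * (0:ℝ) ^ (n k) = 0 := by
      intro k
      rw [zero_pow (by have := hge k; omega), mul_zero]
    exact (summable_congr hz).2 summable_zero
  · set ρ' : ℝ := (1+ρ)/2 with hρ'def
    have hρ'0 : 0 < ρ' := by rw [hρ'def]; linarith
    have hρ'1 : ρ' < 1 := by rw [hρ'def]; linarith
    have hρρ' : ρ < ρ' := by rw [hρ'def]; linarith
    have hzball : ((ρ' : ℝ) : ℂ) ∈ Metric.ball (0:ℂ) 1 := by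
      rw [mem_ball_zero_iff, Complex.norm_eq_abs, Complex.abs_ofReal,
        _root_.abs_of_pos hρ'0]
      exact hρ'1
    have hsum := hconv _ hzball
    obtain ⟨B, hB⟩ := (hsum.tendsto_atTop_zero.norm.bddAbove_range)
    have hBk : ∀ k, Complex.abs (a k) * ρ' ^ (n k) ≤ B := by
      intro k
      have := hB (Set.mem_range_self k)
      rwa [Complex.norm_eq_abs, map_mul, map_pow, Complex.abs_ofReal,
        _root_.abs_of_pos hρ'0] at this
    have hB0 : 0 ≤ B := le_trans (norm_nonneg _) (hB (Set.mem_range_self 0))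
    set s : ℝ := ρ / ρ' with hsdef
    have hs0 : 0 ≤ s := by positivity
    have hs1 : s < 1 := by rw [hsdef, div_lt_one hρ'0]; exact hρρ'
    refine Summable.of_nonneg_of_le (fun k => by positivity) (fun k => ?_)
      (((summable_geometric_of_lt_one hs0 hs1).mul_left (B*s)).congr
        (fun k => by rw [mul_assoc, ← pow_succ']))
    have hps : ρ = ρ' * s := by rw [hsdef]; field_simp
    calc Complex.abs (a k) * ρ ^ (n k)
        = (Complex.abs (a k) * ρ' ^ (n k)) * s ^ (n k) := by
          rw [hps, mul_pow]; ring
      _ ≤ B * s ^ (n k) := by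
          refine mul_le_mul_of_nonneg_right (hBk k) (by positivity)
      _ ≤ B * s ^ (k+1) := by
          refine mul_le_mul_of_nonneg_left (pow_le_pow_of_le_one hs0 hs1.le (hge k)) hB0

end Stmt3

open Stmt3

/-
STATEMENT 3

v is a weight function satisfying the doubling condition, (n_k) is a Hadamard
gap sequence with ratio λ > 1, and u(z) = Re ∑_k a_{n_k} z^{n_k} converges on
the unit disk.  Then the one-sided bound u(z) ≤ K v(|z|) (for some K > 0) holds
if and only if the two-sided bound |u(z)| ≤ K v(|z|) (for some K > 0) holds.
-/
theorem stmt_3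
    (v : ℝ → ℝ)
    (hv_pos : ∀ r ∈ Set.Ico (0:ℝ) 1, 0 < v r)
    (hv_mono : StrictMonoOn v (Set.Ico (0:ℝ) 1))
    (hv_cont : ContinuousOn v (Set.Ico (0:ℝ) 1))
    (hv_zero : v 0 = 1)
    (hv_top : Filter.Tendsto v (nhdsWithin 1 (Set.Iio (1:ℝ))) Filter.atTop)
    (D : ℝ) (hD : 1 < D)
    (hdbl : ∀ d ∈ Set.Ioc (0:ℝ) (1/2:ℝ), v (1 - d) ≤ D * v (1 - 2*d))
    (lam : ℝ) (hlam : 1 < lam)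
    (n : ℕ → ℕ) (hn : ∀ k, 0 < n k)
    (hgap : ∀ k, lam * (n k : ℝ) ≤ (n (k+1) : ℝ))
    (a : ℕ → ℂ)
    (hconv : ∀ z ∈ Metric.ball (0:ℂ) 1, Summable (fun k : ℕ => a k * z ^ (n k)))
    (u : ℂ → ℝ)
    (hu : ∀ z ∈ Metric.ball (0:ℂ) 1, u z = (∑' k : ℕ, a k * z ^ (n k)).re) :
    (∃ K > 0, ∀ z ∈ Metric.ball (0:ℂ) 1, u z ≤ K * v ‖z‖) ↔
    (∃ K > 0, ∀ z ∈ Metric.ball (0:ℂ) 1, |u z| ≤ K * v ‖z‖) := by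
  simp only [Complex.norm_eq_abs]
  constructor
  · rintro ⟨K, hK0, hKb⟩
    -- basic facts about n
    have hmono : StrictMono n := by
      refine strictMono_nat_of_lt_succ fun k => ?_
      have h1 := hgap k
      have h2 := hn k
      have h3 : (n k : ℝ) < lam * n k := by
        nlinarith [hlam, (by exact_mod_cast h2 : (0:ℝ) < (n k : ℝ))]
      exact_mod_cast lt_of_lt_of_le h3 h1
    have hinj := hmono.injective
    have hge : ∀ k, k + 1 ≤ n k := by
      intro k
      induction k with
      | zero => exact hn 0
      | succ k ih =>
        have := hmono (Nat.lt_succ_self k)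
        simp only [Nat.succ_eq_add_one] at *
        omega
    -- pick m with lam ^ m ≥ 4
    obtain ⟨m, hm4⟩ := pow_unbounded_of_one_lt (4:ℝ) hlam
    have hm : 0 < m := by
      rcases Nat.eq_zero_or_pos m with rfl | h
      · norm_num at hm4
      · exact h
    have hchain : ∀ k t, lam ^ t * (n k : ℝ) ≤ (n (k + t) : ℝ) := by
      intro k t
      induction t with
      | zero => simp
      | succ t ih =>
        have h1 : lam ^ (t+1) * (n k : ℝ) = lam * (lam ^ t * n k) := by ring
        rw [h1]
        calc lam * (lam ^ t * (n k : ℝ)) ≤ lam * (n (k + t) : ℝ) :=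
              mul_le_mul_of_nonneg_left ih (by linarith)
          _ ≤ (n (k + t + 1) : ℝ) := hgap (k + t)
    have hlac : ∀ k k', k + m ≤ k' → 4 * n k ≤ n k' := by
      intro k k' hkk
      have ht : m ≤ k' - k := by omega
      have h1 : lam ^ m ≤ lam ^ (k' - k) := pow_le_pow_right₀ (by linarith) ht
      have h2 : lam ^ (k' - k) * (n k : ℝ) ≤ (n (k + (k' - k)) : ℝ) := hchain k (k' - k)
      rw [show k + (k' - k) = k' from by omega] at h2
      have h3 : (4:ℝ) * (n k : ℝ) ≤ (n k' : ℝ) := by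
        have hnk : (0:ℝ) ≤ (n k : ℝ) := by positivity
        nlinarith [hm4]
      exact_mod_cast h3
    refine ⟨6 * (m:ℝ)^2 * K, by positivity, fun z hz => ?_⟩
    have hzlt : Complex.abs z < 1 := by
      rwa [Metric.mem_ball, dist_zero_right, Complex.norm_eq_abs] at hz
    rcases eq_or_ne z 0 with rfl | hz0
    · have hu0 : u 0 = 0 := by
        rw [hu 0 (by simpa using hz)]
        have : ∀ k, a k * (0:ℂ) ^ (n k) = 0 := by
          intro k
          rw [zero_pow (by have := hn k; omega), mul_zero]
        rw [tsum_congr this, tsum_zero]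
        simp
      rw [hu0]
      simp only [map_zero, hv_zero, mul_one, abs_zero]
      positivity
    · set r : ℝ := Complex.abs z with hrdef
      have hr0 : 0 < r := by
        rw [hrdef]
        simpa [Complex.abs.pos_iff] using hz0
      have hr1 : r < 1 := hzlt
      set b : ℕ → ℂ := fun k => a k * ((r:ℝ):ℂ) ^ (n k) with hbdef
      have habs_b : ∀ k, Complex.abs (b k) = Complex.abs (a k) * r ^ (n k) := by
        intro k
        rw [hbdef, map_mul, map_pow, Complex.abs_ofReal, _root_.abs_of_pos hr0]
      have hb : Summable fun k => Complex.abs (b k) := by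
        refine (summable_congr habs_b).2 ?_
        exact summable_pow n hge a hconv r hr0.le hr1
      have hvr_pos : 0 < v r := hv_pos r ⟨hr0.le, hr1⟩
      have hM : ∀ θ : ℝ, (∑' j, b j * ex ((n j : ℤ)) θ).re ≤ K * v r := by
        intro θ
        set z' : ℂ := ((r:ℝ):ℂ) * Complex.exp (θ * Complex.I) with hz'def
        have habs_z' : Complex.abs z' = r := by
          rw [hz'def, map_mul, Complex.abs_ofReal, _root_.abs_of_pos hr0]
          rw [show ((θ:ℝ):ℂ) * Complex.I = ((θ:ℝ):ℂ) * Complex.I from rfl]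
          rw [Complex.abs_exp_ofReal_mul_I, mul_one]
        have hz'ball : z' ∈ Metric.ball (0:ℂ) 1 := by
          rw [Metric.mem_ball, dist_zero_right, Complex.norm_eq_abs, habs_z']
          exact hr1
        have h1 := hKb z' hz'ball
        rw [hu z' hz'ball, habs_z'] at h1
        have h2 : ∀ j, a j * z' ^ (n j) = b j * ex ((n j : ℤ)) θ := by
          intro j
          rw [hz'def, hbdef, mul_pow, ← Complex.exp_nat_mul]
          unfold ex
          rw [mul_assoc]
          congr 2
          push_cast
          ring
        rw [show (∑' k, a k * z' ^ (n k)) = ∑' j, b j * ex ((n j : ℤ)) θ from tsum_congr h2] at h1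
        exact h1
      have hkey := key n hn hinj m hm hlac b hb (K * v r) hM
      -- conclude
      have huz : |u z| ≤ ∑' k, Complex.abs (b k) := by
        rw [hu z hz]
        refine le_trans (Complex.abs_re_le_abs _) ?_
        have h1 : ‖∑' k, a k * z ^ (n k)‖ ≤ ∑' k, ‖a k * z ^ (n k)‖ := by
          refine norm_tsum_le_tsum_norm ?_
          have : ∀ k, ‖a k * z ^ (n k)‖ = Complex.abs (b k) := by
            intro k
            rw [Complex.norm_eq_abs, map_mul, map_pow, habs_b k, hrdef]
          exact (summable_congr this).2 hb
        rw [Complex.norm_eq_abs] at h1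
        refine le_trans h1 (le_of_eq (tsum_congr fun k => ?_))
        rw [Complex.norm_eq_abs, map_mul, map_pow, habs_b k, hrdef]
      have hKvr : 0 ≤ K * v r := by positivity
      calc |u z| ≤ ∑' k, Complex.abs (b k) := huz
        _ ≤ 16 * (m:ℝ)^2 * (K * v r) / 3 := by linarith
        _ ≤ 6 * (m:ℝ)^2 * K * v r := by
            have hm2 : (0:ℝ) ≤ (m:ℝ)^2 := by positivity
            nlinarith [hKvr, hm2]
  · rintro ⟨K, hK0, hKb⟩
    exact ⟨K, hK0, fun z hz => le_trans (le_abs_self _) (hKb z hz)⟩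
end

section
/- Let v be a weight function satisfying the doubling condition. Let f(z) = ∑_k a_{n_k} z^{n_k} be a holomorphic function on the open unit disk whose exponents (n_k) form a Hadamard gap sequence with ratio λ > 1. If there exists K > 0 with Re f(z) ≤ K v(|z|) for all z in the disk, then there exists C > 0 such that both |Re f(z)| ≤ C v(|z|) and |Im f(z)| ≤ C v(|z|) for all z in the disk. -/
open Complex intervalIntegral Real Finset

noncomputable def E (q : ℤ) (θ : ℝ) : ℂ := Complex.exp (q * θ * Complex.I)

lemma E_cont (q : ℤ) : Continuous (E q) := by
  unfold E
  exact Complex.continuous_exp.comp ((continuous_const.mul Complex.continuous_ofReal).mul continuous_const)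

lemma E_mul (q p : ℤ) (θ : ℝ) : E q θ * E p θ = E (q+p) θ := by
  unfold E
  rw [← Complex.exp_add]
  congr 1
  push_cast
  ring

lemma E_conj (q : ℤ) (θ : ℝ) : (starRingEnd ℂ) (E q θ) = E (-q) θ := by
  unfold E
  rw [← Complex.exp_conj]
  congr 1
  simp [Complex.conj_I]

lemma E_abs (q : ℤ) (θ : ℝ) : ‖E q θ‖ = 1 := by
  unfold E
  have : (q:ℂ) * θ * Complex.I = ((q*θ : ℝ):ℂ) * Complex.I := by push_cast; ring
  rw [this, Complex.norm_exp_ofReal_mul_I]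

lemma E_zero (θ : ℝ) : E 0 θ = 1 := by simp [E]

lemma intE (q : ℤ) : (∫ θ in (0:ℝ)..(2*π), E q θ) = if q = 0 then (2*π:ℂ) else 0 := by
  unfold E
  by_cases h : q = 0
  · simp [h]
  · rw [if_neg h]
    have hc : ((q:ℂ) * Complex.I) ≠ 0 := by
      simp [Complex.I_ne_zero, h]
    have heq : ∀ θ : ℝ, (q:ℂ) * θ * Complex.I = ((q:ℂ)*Complex.I) * θ := by intro θ; ring
    simp_rw [heq]
    rw [integral_exp_mul_complex hc]
    have h2 : ((q:ℂ)*Complex.I) * ((2*π:ℝ):ℂ) = (q:ℤ) * (2*π*Complex.I) := by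
      push_cast; ring
    rw [h2, Complex.exp_int_mul_two_pi_mul_I]
    simp

lemma sum_sep_bound (lam0 : ℝ) (hl : 2 ≤ lam0) (w : ℕ → ℝ) (hw : ∀ k, 0 ≤ w k) :
    ∀ s : Finset ℕ, (∀ j ∈ s, ∀ k ∈ s, j < k → lam0 * w j ≤ w k) →
    ∀ B : ℝ, 0 ≤ B → (∀ j ∈ s, lam0 * w j ≤ B) → (lam0 - 1) * ∑ j ∈ s, w j ≤ B := by
  intro s
  induction s using Finset.induction_on_max with
  | empty => intro _ B hB _; simpa
  | insert a s ha ih =>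
    intro hsep B hB hub
    have hs' : ∀ j ∈ s, ∀ k ∈ s, j < k → lam0 * w j ≤ w k :=
      fun j hj k hk h => hsep j (mem_insert_of_mem hj) k (mem_insert_of_mem hk) h
    have hwa : ∀ j ∈ s, lam0 * w j ≤ w a :=
      fun j hj => hsep j (mem_insert_of_mem hj) a (mem_insert_self a s) (ha j hj)
    have ihs := ih hs' (w a) (hw a) hwa
    have hnotin : a ∉ s := fun h => lt_irrefl a (ha a h)
    rw [Finset.sum_insert hnotin]
    have hBa := hub a (mem_insert_self a s)
    nlinarith [hw a, Finset.sum_nonneg (fun j (_ : j ∈ s) => hw j)]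

lemma safe_window (lam lam0 : ℝ) (hlam : 1 < lam)
    (n : ℕ → ℕ) (hn : ∀ k, 0 < n k)
    (hlt : ∀ j k : ℕ, j < k → lam * (n j:ℝ) ≤ (n k:ℝ))
    (hl3 : 3 < lam0)
    (hN1 : 1/lam < (lam0-2)/(lam0-1))
    (hN2 : lam0/(lam0-1) < lam)
    (K : ℕ) (u : ℤ) (hu : u ≠ 0) (hub : ((|u|:ℤ):ℝ) ≤ (n K:ℝ)/(lam0-1)) (j : ℕ) :
    (n j:ℤ) ≠ (n K:ℤ) + u ∧ (n j:ℤ) ≠ -((n K:ℤ) + u) := by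
  have h1 : (0:ℝ) < lam0 - 1 := by linarith
  have hlam0 : (0:ℝ) < lam := by linarith
  have hK : (0:ℝ) < (n K:ℝ) := by exact_mod_cast hn K
  set x : ℤ := (n K:ℤ) + u with hx
  have hxr : (x:ℝ) = (n K:ℝ) + (u:ℝ) := by rw [hx]; push_cast; ring
  have hau : |(u:ℝ)| ≤ (n K:ℝ)/(lam0-1) := by
    rw [← Int.cast_abs] at *; exact hub
  have hxlo : (n K:ℝ) - (n K:ℝ)/(lam0-1) ≤ (x:ℝ) := by
    rw [hxr]
    have := abs_le.mp hau
    linarith [this.1]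
  have hxhi : (x:ℝ) ≤ (n K:ℝ) + (n K:ℝ)/(lam0-1) := by
    rw [hxr]
    have := abs_le.mp hau
    linarith [this.2]
  have hwin_lo : (n K:ℝ)/lam < (x:ℝ) := by
    have e1 : (n K:ℝ) - (n K:ℝ)/(lam0-1) = (n K:ℝ) * ((lam0-2)/(lam0-1)) := by
      field_simp; ring
    have e2 : (n K:ℝ)/lam = (n K:ℝ) * (1/lam) := by ring
    have := mul_lt_mul_of_pos_left hN1 hK
    linarith [hxlo, e1 ▸ this]
  have hwin_hi : (x:ℝ) < lam * (n K:ℝ) := by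
    have e1 : (n K:ℝ) + (n K:ℝ)/(lam0-1) = (n K:ℝ) * (lam0/(lam0-1)) := by
      field_simp; ring
    have := mul_lt_mul_of_pos_left hN2 hK
    nlinarith
  have hxpos : (0:ℝ) < (x:ℝ) := by
    have : (0:ℝ) < (n K:ℝ)/lam := by positivity
    linarith
  have hxposz : (0:ℤ) < x := by exact_mod_cast hxpos
  constructor
  · rcases lt_trichotomy j K with hj | hj | hj
    · have : lam * (n j:ℝ) ≤ (n K:ℝ) := hlt j K hj
      have hnj : (n j:ℝ) < (x:ℝ) := by
        have h2 : (n j:ℝ) ≤ (n K:ℝ)/lam := by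
          rw [le_div_iff₀ hlam0]; linarith
        linarith
      intro hcon
      have hc2 : ((n j:ℕ):ℝ) = ((x:ℤ):ℝ) := by exact_mod_cast hcon
      linarith
    · subst hj; omega
    · have hKj : lam * (n K:ℝ) ≤ (n j:ℝ) := hlt K j hj
      have hnj : (x:ℝ) < (n j:ℝ) := lt_of_lt_of_le hwin_hi hKj
      intro hcon
      have hc2 : ((n j:ℕ):ℝ) = ((x:ℤ):ℝ) := by exact_mod_cast hcon
      linarith
  · have : (0:ℤ) < (n j:ℤ) := by exact_mod_cast hn j
    omega

lemma riesz_expand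
    (lam lam0 : ℝ) (hlam : 1 < lam)
    (n : ℕ → ℕ) (hn : ∀ k, 0 < n k)
    (hlt : ∀ j k : ℕ, j < k → lam * (n j:ℝ) ≤ (n k:ℝ))
    (hl3 : 3 < lam0)
    (hN1 : 1/lam < (lam0-2)/(lam0-1))
    (hN2 : lam0/(lam0-1) < lam)
    (c : ℕ → ℂ) :
    ∀ F : Finset ℕ, (∀ j ∈ F, ∀ k ∈ F, j < k → lam0 * (n j:ℝ) ≤ (n k:ℝ)) →
    ∃ (Q : Finset ℤ) (b : ℤ → ℂ),
      (∀ θ : ℝ, (∏ k ∈ F, (1 + (c k * E ((n k:ℤ)) θ + (starRingEnd ℂ) (c k) * E (-(n k:ℤ)) θ)/2))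
          = ∑ q ∈ Q, b q * E q θ) ∧
      b 0 = 1 ∧ (0:ℤ) ∈ Q ∧
      (∀ q, q ∉ Q → b q = 0) ∧
      (∀ k ∈ F, b ((n k:ℤ)) = c k / 2 ∧ b (-(n k:ℤ)) = (starRingEnd ℂ) (c k) / 2) ∧
      (∀ q ∈ Q, ((|q|:ℤ):ℝ) ≤ ∑ k ∈ F, (n k:ℝ)) ∧
      (∀ q ∈ Q, q = 0 ∨ (∃ k ∈ F, q = (n k:ℤ)) ∨ (∃ k ∈ F, q = -(n k:ℤ)) ∨
        (∀ j : ℕ, (n j:ℤ) ≠ q ∧ (n j:ℤ) ≠ -q)) := by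
  have h1 : (0:ℝ) < lam0 - 1 := by linarith
  intro F
  induction F using Finset.induction_on_max with
  | empty =>
    intro _
    refine ⟨{0}, fun q => if q = 0 then 1 else 0, ?_, by simp, by simp, ?_, by simp, ?_, ?_⟩
    · intro θ; simp [E_zero]
    · intro q hq
      have : q ≠ 0 := by simpa using hq
      simp [this]
    · intro q hq
      simp at hq
      simp [hq]
    · intro q hq
      left
      simpa using hq
  | insert K s hKmax ih =>
    intro hsep
    have hs' : ∀ j ∈ s, ∀ k ∈ s, j < k → lam0 * (n j:ℝ) ≤ (n k:ℝ) :=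
      fun j hj k hk h => hsep j (mem_insert_of_mem hj) k (mem_insert_of_mem hk) h
    obtain ⟨Q, b, hPeq, hb0, h0Q, hbz, hbF, hQbd, hQcls⟩ := ih hs'
    have hKnot : K ∉ s := fun h => lt_irrefl K (hKmax K h)
    have hKpos : (0:ℝ) < (n K:ℝ) := by exact_mod_cast hn K
    have hKs : ∀ j ∈ s, lam0 * (n j:ℝ) ≤ (n K:ℝ) :=
      fun j hj => hsep j (mem_insert_of_mem hj) K (mem_insert_self K s) (hKmax j hj)
    have hSB : (lam0 - 1) * ∑ j ∈ s, (n j:ℝ) ≤ (n K:ℝ) :=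
      sum_sep_bound lam0 (by linarith) (fun j => (n j:ℝ)) (fun k => by positivity) s hs' ((n K:ℝ)) hKpos.le hKs
    have hST : ∑ j ∈ s, (n j:ℝ) ≤ (n K:ℝ)/(lam0-1) := by
      rw [le_div_iff₀ h1]; linarith
    have hTK : 2*((n K:ℝ)/(lam0-1)) < (n K:ℝ) := by
      rw [show 2*((n K:ℝ)/(lam0-1)) = (2*(n K:ℝ))/(lam0-1) by ring, div_lt_iff₀ h1]
      nlinarith
    have hTpos : 0 < (n K:ℝ)/(lam0-1) := by positivity
    have hbT : ∀ x : ℤ, (n K:ℝ)/(lam0-1) < |(x:ℝ)| → b x = 0 := by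
      intro x hx
      apply hbz
      intro hmem
      have := hQbd x hmem
      rw [show ((|x|:ℤ):ℝ) = |(x:ℝ)| by push_cast; ring] at this
      exact absurd (this.trans hST) (not_le.mpr hx)
    have hbνK : b ((n K:ℤ)) = 0 := by
      apply hbT; push_cast
      rw [abs_of_pos hKpos]; linarith
    have hbmνK : b (-(n K:ℤ)) = 0 := by
      apply hbT; push_cast
      rw [abs_neg, abs_of_pos hKpos]; linarith
    have hb2νK : b (2*(n K:ℤ)) = 0 := by
      apply hbT; push_cast
      rw [abs_of_pos (by linarith)]; linarith
    have hbm2νK : b (-(2*(n K:ℤ))) = 0 := by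
      apply hbT; push_cast
      rw [abs_neg, abs_of_pos (by linarith)]; linarith
    have hks_le : ∀ k ∈ s, (n k:ℝ) ≤ (n K:ℝ)/(lam0-1) := by
      intro k hk
      exact (Finset.single_le_sum (f := fun j => (n j:ℝ)) (fun j _ => by positivity) hk).trans hST
    have hmid : ∀ k ∈ s, b ((n k:ℤ) - (n K:ℤ)) = 0 ∧ b ((n k:ℤ) + (n K:ℤ)) = 0 ∧
        b (-(n k:ℤ) - (n K:ℤ)) = 0 ∧ b (-(n k:ℤ) + (n K:ℤ)) = 0 := by
      intro k hk
      have hkT := hks_le k hk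
      have hkpos : (0:ℝ) < (n k:ℝ) := by exact_mod_cast hn k
      refine ⟨?_, ?_, ?_, ?_⟩ <;> apply hbT <;> push_cast
      · refine lt_of_lt_of_le ?_ (neg_le_abs _)
        linarith
      · refine lt_of_lt_of_le ?_ (le_abs_self _)
        linarith
      · refine lt_of_lt_of_le ?_ (neg_le_abs _)
        linarith
      · refine lt_of_lt_of_le ?_ (le_abs_self _)
        linarith
    classical
    refine ⟨(Q ∪ Q.image (· + (n K:ℤ))) ∪ Q.image (· - (n K:ℤ)),
      fun q => b q + (c K/2) * b (q - (n K:ℤ)) + ((starRingEnd ℂ) (c K)/2) * b (q + (n K:ℤ)),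
      ?_, ?_, ?_, ?_, ?_, ?_, ?_⟩
    · -- product formula
      intro θ
      rw [Finset.prod_insert hKnot, hPeq θ]
      have hQsub : Q ⊆ (Q ∪ Q.image (· + (n K:ℤ))) ∪ Q.image (· - (n K:ℤ)) :=
        fun q h => Finset.mem_union_left _ (Finset.mem_union_left _ h)
      have hsubP : Q.image (· + (n K:ℤ)) ⊆ (Q ∪ Q.image (· + (n K:ℤ))) ∪ Q.image (· - (n K:ℤ)) :=
        fun q h => Finset.mem_union_left _ (Finset.mem_union_right _ h)
      have hsubM : Q.image (· - (n K:ℤ)) ⊆ (Q ∪ Q.image (· + (n K:ℤ))) ∪ Q.image (· - (n K:ℤ)) :=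
        fun q h => Finset.mem_union_right _ h
      have hsplit : ∑ q ∈ (Q ∪ Q.image (· + (n K:ℤ))) ∪ Q.image (· - (n K:ℤ)),
            (b q + (c K/2) * b (q - (n K:ℤ)) + ((starRingEnd ℂ) (c K)/2) * b (q + (n K:ℤ))) * E q θ
          = (∑ q ∈ (Q ∪ Q.image (· + (n K:ℤ))) ∪ Q.image (· - (n K:ℤ)), b q * E q θ)
            + ((c K/2) * ∑ q ∈ (Q ∪ Q.image (· + (n K:ℤ))) ∪ Q.image (· - (n K:ℤ)), b (q - (n K:ℤ)) * E q θ)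
            + ((starRingEnd ℂ) (c K)/2) * ∑ q ∈ (Q ∪ Q.image (· + (n K:ℤ))) ∪ Q.image (· - (n K:ℤ)), b (q + (n K:ℤ)) * E q θ := by
        rw [Finset.mul_sum, Finset.mul_sum, ← Finset.sum_add_distrib, ← Finset.sum_add_distrib]
        exact Finset.sum_congr rfl fun q _ => by ring
      have hS1 : ∑ q ∈ (Q ∪ Q.image (· + (n K:ℤ))) ∪ Q.image (· - (n K:ℤ)), b q * E q θ
          = ∑ q ∈ Q, b q * E q θ :=
        (Finset.sum_subset hQsub (fun q _ hq => by rw [hbz _ hq, zero_mul])).symm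
      have hzP : ∀ q ∈ (Q ∪ Q.image (· + (n K:ℤ))) ∪ Q.image (· - (n K:ℤ)),
          q ∉ Q.image (· + (n K:ℤ)) → b (q - (n K:ℤ)) * E q θ = 0 := by
        intro q _ hq
        have hnin : q - (n K:ℤ) ∉ Q := by
          intro hc
          exact hq (Finset.mem_image.mpr ⟨q - (n K:ℤ), hc, by ring⟩)
        rw [hbz _ hnin, zero_mul]
      have hzM : ∀ q ∈ (Q ∪ Q.image (· + (n K:ℤ))) ∪ Q.image (· - (n K:ℤ)),
          q ∉ Q.image (· - (n K:ℤ)) → b (q + (n K:ℤ)) * E q θ = 0 := by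
        intro q _ hq
        have hnin : q + (n K:ℤ) ∉ Q := by
          intro hc
          exact hq (Finset.mem_image.mpr ⟨q + (n K:ℤ), hc, by ring⟩)
        rw [hbz _ hnin, zero_mul]
      have hS2 : ∑ q ∈ (Q ∪ Q.image (· + (n K:ℤ))) ∪ Q.image (· - (n K:ℤ)), b (q - (n K:ℤ)) * E q θ
          = ∑ p ∈ Q, b p * E (p + (n K:ℤ)) θ := by
        rw [← Finset.sum_subset hsubP hzP, Finset.sum_image (fun x _ y _ h => by omega)]
        exact Finset.sum_congr rfl fun p _ => by rw [add_sub_cancel_right]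
      have hS3 : ∑ q ∈ (Q ∪ Q.image (· + (n K:ℤ))) ∪ Q.image (· - (n K:ℤ)), b (q + (n K:ℤ)) * E q θ
          = ∑ p ∈ Q, b p * E (p - (n K:ℤ)) θ := by
        rw [← Finset.sum_subset hsubM hzM, Finset.sum_image (fun x _ y _ h => by omega)]
        exact Finset.sum_congr rfl fun p _ => by rw [sub_add_cancel]
      have hA : E ((n K:ℤ)) θ * (∑ q ∈ Q, b q * E q θ) = ∑ q ∈ Q, b q * E (q + (n K:ℤ)) θ := by
        rw [Finset.mul_sum]
        exact Finset.sum_congr rfl fun q _ => by rw [← E_mul q ((n K:ℤ)) θ]; ring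
      have hB : E (-(n K:ℤ)) θ * (∑ q ∈ Q, b q * E q θ) = ∑ q ∈ Q, b q * E (q - (n K:ℤ)) θ := by
        rw [Finset.mul_sum]
        refine Finset.sum_congr rfl fun q _ => ?_
        rw [show q - (n K:ℤ) = q + (-(n K:ℤ)) by ring, ← E_mul q (-(n K:ℤ)) θ]; ring
      rw [hsplit, hS1, hS2, hS3, ← hA, ← hB]
      ring
    · -- b' 0 = 1
      simp only [zero_sub, zero_add]
      rw [hb0, hbνK, hbmνK]
      ring
    · exact Finset.mem_union_left _ (Finset.mem_union_left _ h0Q)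
    · -- vanishing off Q'
      intro q hq
      have h1' : q ∉ Q := fun h => hq (Finset.mem_union_left _ (Finset.mem_union_left _ h))
      have h2' : q - (n K:ℤ) ∉ Q := by
        intro h
        exact hq (Finset.mem_union_left _ (Finset.mem_union_right _
          (Finset.mem_image.mpr ⟨q - (n K:ℤ), h, by ring⟩)))
      have h3' : q + (n K:ℤ) ∉ Q := by
        intro h
        exact hq (Finset.mem_union_right _ (Finset.mem_image.mpr ⟨q + (n K:ℤ), h, by ring⟩))
      beta_reduce
      rw [hbz _ h1', hbz _ h2', hbz _ h3']
      ring
    · -- coefficient values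
      intro k hk
      rcases Finset.mem_insert.mp hk with rfl | hks_
      · constructor
        · beta_reduce
          rw [sub_self, hbνK, hb0, show (n k:ℤ) + (n k:ℤ) = 2*(n k:ℤ) by ring, hb2νK]
          ring
        · beta_reduce
          rw [show -(n k:ℤ) - (n k:ℤ) = -(2*(n k:ℤ)) by ring, hbm2νK, hbmνK, neg_add_cancel, hb0]
          ring
      · obtain ⟨hm1, hm2, hm3, hm4⟩ := hmid k hks_
        obtain ⟨hv1, hv2⟩ := hbF k hks_
        constructor
        · beta_reduce
          rw [hv1, hm1, hm2]; ring
        · beta_reduce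
          rw [hv2, hm3, hm4]; ring
    · -- size bound
      intro q hq
      rw [Finset.sum_insert hKnot]
      have hS0 : (0:ℝ) ≤ ∑ j ∈ s, (n j:ℝ) := Finset.sum_nonneg (fun j _ => by positivity)
      rcases Finset.mem_union.mp hq with hq' | hq'
      · rcases Finset.mem_union.mp hq' with hq'' | hq''
        · exact (hQbd q hq'').trans (by linarith)
        · obtain ⟨p, hp, rfl⟩ := Finset.mem_image.mp hq''
          have h1' : ((|p + (n K:ℤ)|:ℤ):ℝ) ≤ ((|p|:ℤ):ℝ) + ((|(n K:ℤ)|:ℤ):ℝ) := by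
            exact_mod_cast abs_add_le p ((n K:ℤ))
          have h2' : ((|(n K:ℤ)|:ℤ):ℝ) = (n K:ℝ) := by
            push_cast
            rw [abs_of_pos hKpos]
          linarith [hQbd p hp]
      · obtain ⟨p, hp, rfl⟩ := Finset.mem_image.mp hq'
        have h1' : ((|p - (n K:ℤ)|:ℤ):ℝ) ≤ ((|p|:ℤ):ℝ) + ((|(n K:ℤ)|:ℤ):ℝ) := by
          exact_mod_cast abs_sub p ((n K:ℤ))
        have h2' : ((|(n K:ℤ)|:ℤ):ℝ) = (n K:ℝ) := by
          push_cast
          rw [abs_of_pos hKpos]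
        linarith [hQbd p hp]
    · -- classification
      intro q hq
      rcases Finset.mem_union.mp hq with hq' | hq'
      · rcases Finset.mem_union.mp hq' with hq'' | hq''
        · rcases hQcls q hq'' with h | ⟨k, hk, he⟩ | ⟨k, hk, he⟩ | hsafe
          · exact Or.inl h
          · exact Or.inr (Or.inl ⟨k, mem_insert_of_mem hk, he⟩)
          · exact Or.inr (Or.inr (Or.inl ⟨k, mem_insert_of_mem hk, he⟩))
          · exact Or.inr (Or.inr (Or.inr hsafe))
        · obtain ⟨p, hp, rfl⟩ := Finset.mem_image.mp hq''
          by_cases hp0 : p = 0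
          · subst hp0
            exact Or.inr (Or.inl ⟨K, mem_insert_self K s, by ring⟩)
          · refine Or.inr (Or.inr (Or.inr fun j => ?_))
            have hub : ((|p|:ℤ):ℝ) ≤ (n K:ℝ)/(lam0-1) := (hQbd p hp).trans hST
            obtain ⟨ha', hb'⟩ := safe_window lam lam0 hlam n hn hlt hl3 hN1 hN2 K p hp0 hub j
            exact ⟨by omega, by omega⟩
      · obtain ⟨p, hp, rfl⟩ := Finset.mem_image.mp hq'
        by_cases hp0 : p = 0
        · subst hp0
          exact Or.inr (Or.inr (Or.inl ⟨K, mem_insert_self K s, by ring⟩))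
        · refine Or.inr (Or.inr (Or.inr fun j => ?_))
          have hub : ((|(-p)|:ℤ):ℝ) ≤ (n K:ℝ)/(lam0-1) := by
            rw [abs_neg]
            exact (hQbd p hp).trans hST
          obtain ⟨ha', hb'⟩ := safe_window lam lam0 hlam n hn hlt hl3 hN1 hN2 K (-p) (by omega) hub j
          exact ⟨by omega, by omega⟩

lemma int_Pc (Q : Finset ℤ) (b : ℤ → ℂ) (hbz : ∀ q, q ∉ Q → b q = 0) (M : ℤ) :
    (∫ θ in (0:ℝ)..(2*π), (∑ q ∈ Q, b q * E q θ) * E M θ) = 2*(π:ℂ) * b (-M) := by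
  have hrw : ∀ θ:ℝ, (∑ q ∈ Q, b q * E q θ) * E M θ = ∑ q ∈ Q, b q * E (q+M) θ := by
    intro θ
    rw [Finset.sum_mul]
    exact Finset.sum_congr rfl fun q _ => by rw [mul_assoc, E_mul]
  simp_rw [hrw]
  rw [intervalIntegral.integral_finset_sum (f := fun q θ => b q * E (q+M) θ)
    (fun q _ => ((continuous_const.mul (E_cont (q+M))).intervalIntegrable _ _))]
  have hval : ∀ q ∈ Q, (∫ θ in (0:ℝ)..(2*π), b q * E (q+M) θ) = if q = -M then b q * (2*(π:ℂ)) else 0 := by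
    intro q _
    rw [intervalIntegral.integral_const_mul, intE]
    by_cases h : q = -M
    · rw [if_pos (by omega), if_pos h]
    · rw [if_neg (by omega), if_neg h, mul_zero]
  rw [Finset.sum_congr rfl hval, Finset.sum_ite_eq' Q (-M) (fun q => b q * (2*(π:ℂ)))]
  by_cases h : -M ∈ Q
  · rw [if_pos h]; ring
  · rw [if_neg h, hbz _ h]; ring

lemma block_bound
    (lam lam0 : ℝ) (hlam : 1 < lam) (hl3 : 3 < lam0)
    (hN1 : 1/lam < (lam0-2)/(lam0-1)) (hN2 : lam0/(lam0-1) < lam)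
    (n : ℕ → ℕ) (hn : ∀ k, 0 < n k) (hmono : StrictMono n)
    (hlt : ∀ j k : ℕ, j < k → lam * (n j:ℝ) ≤ (n k:ℝ))
    (A : ℕ → ℂ) (hsum : Summable (fun k => ‖A k‖))
    (g : ℝ → ℂ) (hgc : Continuous g)
    (hg : ∀ θ, g θ = ∑' k, A k * E ((n k:ℤ)) θ)
    (B : ℝ) (hgB : ∀ θ, (g θ).re ≤ B)
    (F : Finset ℕ) (hsep : ∀ j ∈ F, ∀ k ∈ F, j < k → lam0 * (n j:ℝ) ≤ (n k:ℝ)) :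
    ∑ k ∈ F, ‖A k‖ ≤ 2 * B := by
  classical
  set c : ℕ → ℂ := fun k => if A k = 0 then 1 else A k / (‖A k‖ : ℂ) with hc
  obtain ⟨Q, b, hPeq, hb0, h0Q, hbz, hbF, hQbd, hQcls⟩ :=
    riesz_expand lam lam0 hlam n hn hlt hl3 hN1 hN2 c F hsep
  set P : ℝ → ℝ := fun θ => ∏ k ∈ F, (1 + (c k * E ((n k:ℤ)) θ).re) with hP
  have habsc : ∀ k, ‖c k‖ ≤ 1 := by
    intro k
    rw [hc]
    by_cases h : A k = 0
    · simp [h]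
    · have hA0 : ‖A k‖ ≠ 0 := by
        simpa using h
      simp only [h, if_false]
      rw [norm_div, Complex.norm_real, Real.norm_eq_abs, _root_.abs_of_nonneg (norm_nonneg _),
        div_self hA0]
  have hcoP : ∀ θ, ((P θ : ℝ) : ℂ) = ∑ q ∈ Q, b q * E q θ := by
    intro θ
    rw [← hPeq θ, hP]
    beta_reduce
    rw [Complex.ofReal_prod]
    refine Finset.prod_congr rfl fun k _ => ?_
    have h1 : (starRingEnd ℂ) (c k * E ((n k:ℤ)) θ) = (starRingEnd ℂ) (c k) * E (-(n k:ℤ)) θ := by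
      rw [map_mul, E_conj]
    have h2 : c k * E ((n k:ℤ)) θ + (starRingEnd ℂ) (c k) * E (-(n k:ℤ)) θ
        = 2*(((c k * E ((n k:ℤ)) θ).re : ℝ) : ℂ) := by
      rw [← h1, Complex.add_conj]
      push_cast
      ring
    rw [h2]
    push_cast
    ring
  have hPnn : ∀ θ, 0 ≤ P θ := by
    intro θ
    rw [hP]
    apply Finset.prod_nonneg
    intro k _
    have habs : ‖c k * E ((n k:ℤ)) θ‖ ≤ 1 := by
      rw [norm_mul, E_abs, mul_one]; exact habsc k
    have := (abs_le.mp ((Complex.abs_re_le_norm _).trans habs)).1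
    linarith
  have hPub : ∀ θ, P θ ≤ 2^F.card := by
    intro θ
    rw [hP]
    beta_reduce
    calc ∏ k ∈ F, (1 + (c k * E ((n k:ℤ)) θ).re) ≤ ∏ k ∈ F, 2 := by
          apply Finset.prod_le_prod
          · intro k _
            have habs : ‖c k * E ((n k:ℤ)) θ‖ ≤ 1 := by
              rw [norm_mul, E_abs, mul_one]; exact habsc k
            have := (abs_le.mp ((Complex.abs_re_le_norm _).trans habs)).1
            linarith
          · intro k _
            have habs : ‖c k * E ((n k:ℤ)) θ‖ ≤ 1 := by
              rw [norm_mul, E_abs, mul_one]; exact habsc k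
            have := (abs_le.mp ((Complex.abs_re_le_norm _).trans habs)).2
            linarith
      _ = 2^F.card := by rw [Finset.prod_const]
  have hPcont : Continuous P := by
    rw [hP]
    apply continuous_finset_prod
    intro k _
    exact continuous_const.add (Complex.continuous_re.comp (continuous_const.mul (E_cont _)))
  have hPccont : Continuous (fun θ => ((P θ : ℝ):ℂ)) := Complex.continuous_ofReal.comp hPcont
  -- ∫ P = 2π
  have hintP : (∫ θ in (0:ℝ)..(2*π), P θ) = 2*π := by
    have h1 : ((∫ θ in (0:ℝ)..(2*π), P θ : ℝ) : ℂ) = 2*(π:ℂ) := by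
      rw [← intervalIntegral.integral_ofReal]
      have h2 : (∫ θ in (0:ℝ)..(2*π), ((P θ:ℝ):ℂ))
          = ∫ θ in (0:ℝ)..(2*π), (∑ q ∈ Q, b q * E q θ) :=
        intervalIntegral.integral_congr (fun θ _ => hcoP θ)
      rw [h2]
      have h3 := int_Pc Q b hbz 0
      simp only [E_zero, mul_one, neg_zero] at h3
      rw [h3, hb0, mul_one]
    exact_mod_cast h1
  -- key integral per index
  have hbout : ∀ k:ℕ, k ∉ F → b (-(n k:ℤ)) = 0 := by
    intro k hkF
    by_contra hne
    have hmemQ : -(n k:ℤ) ∈ Q := by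
      by_contra hq
      exact hne (hbz _ hq)
    rcases hQcls _ hmemQ with h | ⟨j, hj, he⟩ | ⟨j, hj, he⟩ | hsafe
    · have := hn k; omega
    · have := hn j; have := hn k; omega
    · have hjk : n j = n k := by omega
      exact hkF (by rwa [hmono.injective hjk] at hj)
    · exact (hsafe k).2 (by omega)
  have hIk : ∀ k : ℕ, (∫ θ in (0:ℝ)..(2*π), P θ * (A k * E ((n k:ℤ)) θ).re)
      = if k ∈ F then π * ‖A k‖ else 0 := by
    intro k
    have hwcont : Continuous (fun θ => (P θ:ℂ) * (A k * E ((n k:ℤ)) θ)) :=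
      hPccont.mul (continuous_const.mul (E_cont _))
    have hcc : (∫ θ in (0:ℝ)..(2*π), ((P θ:ℂ) * (A k * E ((n k:ℤ)) θ)))
        = 2*(π:ℂ) * (A k * b (-(n k:ℤ))) := by
      have he : ∀ θ ∈ Set.uIcc (0:ℝ) (2*π), (P θ:ℂ) * (A k * E ((n k:ℤ)) θ)
          = A k * ((∑ q ∈ Q, b q * E q θ) * E ((n k:ℤ)) θ) := by
        intro θ _
        rw [← hcoP θ]
        ring
      rw [intervalIntegral.integral_congr he, intervalIntegral.integral_const_mul,
        int_Pc Q b hbz ((n k:ℤ))]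
      ring
    have hre : (∫ θ in (0:ℝ)..(2*π), P θ * (A k * E ((n k:ℤ)) θ).re)
        = (∫ θ in (0:ℝ)..(2*π), ((P θ:ℂ) * (A k * E ((n k:ℤ)) θ))).re := by
      have h4 := Complex.reCLM.intervalIntegral_comp_comm
        (μ := MeasureTheory.volume) (hwcont.intervalIntegrable (0:ℝ) (2*π))
      have h5 : (∫ θ in (0:ℝ)..(2*π), P θ * (A k * E ((n k:ℤ)) θ).re)
          = ∫ θ in (0:ℝ)..(2*π), Complex.reCLM ((P θ:ℂ) * (A k * E ((n k:ℤ)) θ)) :=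
        intervalIntegral.integral_congr (fun θ _ => by simp [Complex.re_ofReal_mul])
      rw [h5, h4]
      simp
    rw [hre, hcc]
    by_cases hkF : k ∈ F
    · rw [if_pos hkF, (hbF k hkF).2]
      by_cases hA : A k = 0
      · simp [hA, hc]
      · have hA0 : ‖A k‖ ≠ 0 := by simpa using hA
        have hval : A k * ((starRingEnd ℂ) (c k) / 2) = ((‖A k‖ / 2 : ℝ) : ℂ) := by
          rw [hc]
          simp only [hA, if_false]
          rw [map_div₀, Complex.conj_ofReal]
          have hA0' : ((‖A k‖:ℝ):ℂ) ≠ 0 := Complex.ofReal_ne_zero.mpr hA0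
          field_simp
          rw [Complex.mul_conj, Complex.normSq_eq_norm_sq]
          push_cast
          ring
        rw [hval, show (2*(π:ℂ) * ((‖A k‖ / 2 : ℝ):ℂ))
            = (((π * ‖A k‖):ℝ):ℂ) by push_cast; ring, Complex.ofReal_re]
    · rw [if_neg hkF, hbout k hkF]
      simp
  -- summability and tails
  have hAbs : ∀ (θ:ℝ) (k:ℕ), ‖A k * E ((n k:ℤ)) θ‖ = ‖A k‖ := by
    intro θ k
    rw [norm_mul, E_abs, mul_one]
  have hsm : ∀ θ:ℝ, Summable (fun k => A k * E ((n k:ℤ)) θ) := by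
    intro θ
    apply Summable.of_norm
    simpa only [hAbs θ] using hsum
  have htails : ∀ (T:ℕ) (θ:ℝ), |(g θ).re - ∑ k ∈ Finset.range T, (A k * E ((n k:ℤ)) θ).re|
      ≤ ∑' k, ‖A (k + T)‖ := by
    intro T θ
    have hsplit := Summable.sum_add_tsum_nat_add T (hsm θ)
    have hsum' : Summable (fun k => ‖A (k+T) * E ((n (k+T):ℤ)) θ‖) := by
      simp only [hAbs θ]
      exact (summable_nat_add_iff T).mpr hsum
    have hgθ : (g θ).re - ∑ k ∈ Finset.range T, (A k * E ((n k:ℤ)) θ).re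
        = (∑' k, A (k+T) * E ((n (k+T):ℤ)) θ).re := by
      rw [hg θ, ← hsplit, Complex.add_re, Complex.re_sum]
      ring
    rw [hgθ]
    have h1 : |(∑' k, A (k+T) * E ((n (k+T):ℤ)) θ).re| ≤ ‖∑' k, A (k+T) * E ((n (k+T):ℤ)) θ‖ :=
      Complex.abs_re_le_norm _
    have h2 : ‖∑' k, A (k+T) * E ((n (k+T):ℤ)) θ‖ ≤ ∑' k, ‖A (k+T) * E ((n (k+T):ℤ)) θ‖ :=
      norm_tsum_le_tsum_norm hsum'
    have h3 : (∑' k, ‖A (k+T) * E ((n (k+T):ℤ)) θ‖) = ∑' k, ‖A (k + T)‖ :=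
      tsum_congr (fun k => hAbs θ (k+T))
    linarith
  have hcore : ∀ T : ℕ, F ⊆ Finset.range T →
      π * ∑ k ∈ F, ‖A k‖ ≤ 2*π*B + 2*π * (∑' k, ‖A (k + T)‖) := by
    intro T hFT
    have hScont : Continuous (fun θ => ∑ k ∈ Finset.range T, (A k * E ((n k:ℤ)) θ).re) := by
      apply continuous_finset_sum
      intro k _
      exact Complex.continuous_re.comp (continuous_const.mul (E_cont _))
    have hIS : (∫ θ in (0:ℝ)..(2*π), P θ * (∑ k ∈ Finset.range T, (A k * E ((n k:ℤ)) θ).re))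
        = π * ∑ k ∈ F, ‖A k‖ := by
      have he : ∀ θ ∈ Set.uIcc (0:ℝ) (2*π), P θ * (∑ k ∈ Finset.range T, (A k * E ((n k:ℤ)) θ).re)
          = ∑ k ∈ Finset.range T, P θ * (A k * E ((n k:ℤ)) θ).re := by
        intro θ _
        rw [Finset.mul_sum]
      have hck : ∀ k ∈ Finset.range T, IntervalIntegrable
          (fun θ => P θ * (A k * E ((n k:ℤ)) θ).re) MeasureTheory.volume 0 (2*π) := by
        intro k _
        exact ((hPcont.mul (Complex.continuous_re.comp (continuous_const.mul (E_cont _)))).intervalIntegrable _ _)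
      rw [intervalIntegral.integral_congr he,
        intervalIntegral.integral_finset_sum hck,
        Finset.sum_congr rfl (fun k _ => hIk k), Finset.sum_ite_mem,
        Finset.inter_eq_right.mpr hFT, ← Finset.mul_sum]
    set eT : ℝ := ∑' k, ‖A (k + T)‖ with heT
    have hpt : ∀ θ ∈ Set.Icc (0:ℝ) (2*π),
        P θ * (∑ k ∈ Finset.range T, (A k * E ((n k:ℤ)) θ).re) ≤ P θ * (g θ).re + P θ * eT := by
      intro θ _
      have h1 := htails T θ
      have h2 := hPnn θ
      have hS : (∑ k ∈ Finset.range T, (A k * E ((n k:ℤ)) θ).re) ≤ (g θ).re + eT := by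
        have := (abs_le.mp h1).1
        rw [← heT] at this
        linarith
      calc P θ * (∑ k ∈ Finset.range T, (A k * E ((n k:ℤ)) θ).re)
          ≤ P θ * ((g θ).re + eT) := mul_le_mul_of_nonneg_left hS h2
        _ = P θ * (g θ).re + P θ * eT := by ring
    have hic1 : IntervalIntegrable (fun θ => P θ * (∑ k ∈ Finset.range T, (A k * E ((n k:ℤ)) θ).re))
        MeasureTheory.volume 0 (2*π) := (hPcont.mul hScont).intervalIntegrable _ _
    have hic2 : IntervalIntegrable (fun θ => P θ * (g θ).re + P θ * eT)
        MeasureTheory.volume 0 (2*π) :=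
      ((hPcont.mul (Complex.continuous_re.comp hgc)).add (hPcont.mul continuous_const)).intervalIntegrable _ _
    have hint1 := intervalIntegral.integral_mono_on (by positivity) hic1 hic2 hpt
    have hi1 : IntervalIntegrable (fun θ => P θ * (g θ).re) MeasureTheory.volume 0 (2*π) :=
      (hPcont.mul (Complex.continuous_re.comp hgc)).intervalIntegrable _ _
    have hi2 : IntervalIntegrable (fun θ => P θ * eT) MeasureTheory.volume 0 (2*π) :=
      (hPcont.mul continuous_const).intervalIntegrable _ _
    have hi3 : IntervalIntegrable (fun θ => P θ * B) MeasureTheory.volume 0 (2*π) :=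
      (hPcont.mul continuous_const).intervalIntegrable _ _
    have hint2 : (∫ θ in (0:ℝ)..(2*π), (P θ * (g θ).re + P θ * eT))
        = (∫ θ in (0:ℝ)..(2*π), P θ * (g θ).re) + (∫ θ in (0:ℝ)..(2*π), P θ) * eT := by
      rw [intervalIntegral.integral_add hi1 hi2, intervalIntegral.integral_mul_const]
    have hint3 : (∫ θ in (0:ℝ)..(2*π), P θ * (g θ).re) ≤ (∫ θ in (0:ℝ)..(2*π), P θ * B) := by
      apply intervalIntegral.integral_mono_on (by positivity) hi1 hi3
      intro θ _
      exact mul_le_mul_of_nonneg_left (hgB θ) (hPnn θ)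
    have hint4 : (∫ θ in (0:ℝ)..(2*π), P θ * B) = 2*π*B := by
      rw [intervalIntegral.integral_mul_const, hintP]
    rw [hIS, hint2] at hint1
    rw [hintP] at hint2
    calc π * ∑ k ∈ F, ‖A k‖
        ≤ (∫ θ in (0:ℝ)..(2*π), P θ * (g θ).re) + (∫ θ in (0:ℝ)..(2*π), P θ) * eT := hint1
      _ ≤ 2*π*B + 2*π*eT := by
          rw [hintP]
          linarith [hint3, hint4]
  -- pass to the limit
  have htend : Filter.Tendsto (fun T:ℕ => ∑' k, ‖A (k + T)‖) Filter.atTop (nhds 0) :=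
    tendsto_sum_nat_add (fun k => ‖A k‖)
  have hev : ∀ᶠ T in Filter.atTop, π * ∑ k ∈ F, ‖A k‖
      ≤ 2*π*B + 2*π * (∑' k, ‖A (k + T)‖) := by
    refine Filter.eventually_atTop.mpr ⟨(F.sup id) + 1, fun T hT => hcore T ?_⟩
    intro k hk
    have hk' : k ≤ F.sup id := Finset.le_sup (f := id) hk
    exact Finset.mem_range.mpr (by omega)
  have hlim : Filter.Tendsto (fun T:ℕ => 2*π*B + 2*π * (∑' k, ‖A (k + T)‖))
      Filter.atTop (nhds (2*π*B)) := by
    have h2 : Filter.Tendsto (fun T:ℕ => 2*π * (∑' k, ‖A (k + T)‖))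
        Filter.atTop (nhds 0) := by
      simpa using htend.const_mul (2*π)
    simpa using (Filter.Tendsto.const_add (2*π*B) h2)
  have hfin : π * ∑ k ∈ F, ‖A k‖ ≤ 2*π*B := ge_of_tendsto hlim hev
  have h2 : π * (∑ k ∈ F, ‖A k‖) ≤ π * (2*B) := by linarith
  exact le_of_mul_le_mul_left h2 Real.pi_pos


/-
STATEMENT 4

v is a weight function satisfying the doubling condition, and
f(z) = ∑_k a_{n_k} z^{n_k} is a holomorphic Hadamard gap series on the unit
disk.  If Re f(z) ≤ K v(|z|) on the disk for some K > 0, then both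
|Re f(z)| ≤ C v(|z|) and |Im f(z)| ≤ C v(|z|) on the disk for some C > 0.
-/
set_option maxHeartbeats 2000000 in
theorem stmt_4
    (v : ℝ → ℝ)
    (hv_pos : ∀ r ∈ Set.Ico (0:ℝ) 1, 0 < v r)
    (hv_mono : StrictMonoOn v (Set.Ico (0:ℝ) 1))
    (hv_cont : ContinuousOn v (Set.Ico (0:ℝ) 1))
    (hv_zero : v 0 = 1)
    (hv_top : Filter.Tendsto v (nhdsWithin 1 (Set.Iio (1:ℝ))) Filter.atTop)
    (D : ℝ) (hD : 1 < D)
    (hdbl : ∀ d ∈ Set.Ioc (0:ℝ) (1/2:ℝ), v (1 - d) ≤ D * v (1 - 2*d))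
    (lam : ℝ) (hlam : 1 < lam)
    (n : ℕ → ℕ) (hn : ∀ k, 0 < n k)
    (hgap : ∀ k, lam * (n k : ℝ) ≤ (n (k+1) : ℝ))
    (a : ℕ → ℂ)
    (f : ℂ → ℂ)
    (hf_diff : DifferentiableOn ℂ f (Metric.ball (0:ℂ) 1))
    (hconv : ∀ z ∈ Metric.ball (0:ℂ) 1, Summable (fun k : ℕ => a k * z ^ (n k)))
    (hf : ∀ z ∈ Metric.ball (0:ℂ) 1, f z = ∑' k : ℕ, a k * z ^ (n k))
    (K : ℝ) (hK : 0 < K)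
    (hbdd : ∀ z ∈ Metric.ball (0:ℂ) 1, (f z).re ≤ K * v (‖z‖)) :
    ∃ C > 0, ∀ z ∈ Metric.ball (0:ℂ) 1,
      |(f z).re| ≤ C * v (‖z‖) ∧ |(f z).im| ≤ C * v (‖z‖) := by
  classical
  have hmono : StrictMono n := by
    apply strictMono_nat_of_lt_succ
    intro k
    have h1 := hgap k
    have h2 : (0:ℝ) < n k := by exact_mod_cast hn k
    have h3 : (n k:ℝ) < (n (k+1):ℝ) := lt_of_lt_of_le (by nlinarith) h1
    exact_mod_cast h3
  have hlt : ∀ j k : ℕ, j < k → lam * (n j:ℝ) ≤ (n k:ℝ) := by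
    intro j k hjk
    have h1 := hgap j
    have h2 : (n (j+1):ℝ) ≤ (n k:ℝ) := by
      exact_mod_cast hmono.monotone (Nat.succ_le_of_lt hjk)
    exact h1.trans h2
  have hchain : ∀ j t : ℕ, lam^t * (n j:ℝ) ≤ (n (j+t):ℝ) := by
    intro j t
    induction t with
    | zero => simp
    | succ t ihs =>
      have h2 : lam^(t+1) * (n j:ℝ) = lam * (lam^t * (n j:ℝ)) := by ring
      rw [h2]
      calc lam * (lam^t * (n j:ℝ)) ≤ lam * (n (j+t):ℝ) :=
            mul_le_mul_of_nonneg_left ihs (by linarith)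
        _ ≤ (n (j+t+1):ℝ) := hgap (j+t)
  have hlam1 : (0:ℝ) < lam - 1 := by linarith
  set lam0 : ℝ := 2 + 2*lam/(lam-1) with hlam0
  have hfrac : 1 < 2*lam/(lam-1) := by
    rw [lt_div_iff₀ hlam1]; nlinarith
  have hl3 : 3 < lam0 := by rw [hlam0]; linarith
  have e3 : (lam0-2)/(lam0-1) = 2*lam/(3*lam-1) := by
    rw [hlam0]
    field_simp
    ring
  have e5 : lam0/(lam0-1) = (4*lam-2)/(3*lam-1) := by
    rw [hlam0]
    field_simp
    ring
  have h3l : (0:ℝ) < 3*lam-1 := by linarith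
  have hN1 : 1/lam < (lam0-2)/(lam0-1) := by
    rw [e3, div_lt_div_iff₀ (by linarith) h3l]
    nlinarith
  have hN2 : lam0/(lam0-1) < lam := by
    rw [e5, div_lt_iff₀ h3l]
    nlinarith
  obtain ⟨m, hm⟩ : ∃ m:ℕ, lam0 ≤ lam^m := by
    have h := (tendsto_pow_atTop_atTop_of_one_lt hlam).eventually_ge_atTop lam0
    obtain ⟨m, hm⟩ := h.exists
    exact ⟨m, hm⟩
  have hm0 : 0 < m := by
    by_contra h
    push_neg at h
    have hm00 : m = 0 := by omega
    rw [hm00] at hm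
    simp at hm
    linarith
  -- summability of the modulus series at each radius
  have hsumm : ∀ ρ:ℝ, 0 ≤ ρ → ρ < 1 → Summable (fun k => ‖a k * (ρ:ℂ)^(n k)‖) := by
    intro ρ h0ρ h1ρ
    have h0ρ' : 0 < (1+ρ)/2 := by linarith
    have h1ρ' : (1+ρ)/2 < 1 := by linarith
    have hρρ' : ρ < (1+ρ)/2 := by linarith
    have hzball : ((((1+ρ)/2:ℝ)):ℂ) ∈ Metric.ball (0:ℂ) 1 := by
      rw [mem_ball_zero_iff, Complex.norm_real, Real.norm_eq_abs, abs_of_pos h0ρ']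
      exact h1ρ'
    have hs1 := hconv _ hzball
    have htz := hs1.tendsto_atTop_zero
    have hev : ∀ᶠ k in Filter.atTop, ‖a k * ((((1+ρ)/2:ℝ)):ℂ)^(n k)‖ ≤ 1 := by
      have h2 := htz.norm
      simp only [norm_zero] at h2
      exact h2.eventually_le_const (by norm_num)
    obtain ⟨N, hN⟩ := Filter.eventually_atTop.mp hev
    set C0 : ℝ := 1 + ∑ j ∈ Finset.range N, ‖a j * ((((1+ρ)/2:ℝ)):ℂ)^(n j)‖ with hC0
    have hC0nn : ∀ k, ‖a k * ((((1+ρ)/2:ℝ)):ℂ)^(n k)‖ ≤ C0 := by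
      intro k
      rcases le_or_gt N k with h | h
      · have := hN k h
        rw [hC0]
        have hnn : (0:ℝ) ≤ ∑ j ∈ Finset.range N, ‖a j * ((((1+ρ)/2:ℝ)):ℂ)^(n j)‖ :=
          Finset.sum_nonneg (fun j _ => norm_nonneg _)
        linarith
      · rw [hC0]
        have hle : ‖a k * ((((1+ρ)/2:ℝ)):ℂ)^(n k)‖
            ≤ ∑ j ∈ Finset.range N, ‖a j * ((((1+ρ)/2:ℝ)):ℂ)^(n j)‖ :=
          Finset.single_le_sum (f := fun j => ‖a j * ((((1+ρ)/2:ℝ)):ℂ)^(n j)‖)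
            (fun j _ => norm_nonneg _) (Finset.mem_range.mpr h)
        linarith
    set q : ℝ := ρ / ((1+ρ)/2) with hq
    have hq0 : 0 ≤ q := by positivity
    have hq1 : q < 1 := by
      rw [hq, div_lt_one h0ρ']
      linarith
    refine Summable.of_nonneg_of_le (fun k => norm_nonneg _) (fun k => ?_)
      ((summable_geometric_of_lt_one hq0 hq1).mul_left C0)
    · have hC0nonneg : (0:ℝ) ≤ C0 := by
        rw [hC0]
        have : (0:ℝ) ≤ ∑ j ∈ Finset.range N, ‖a j * ((((1+ρ)/2:ℝ)):ℂ)^(n j)‖ :=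
          Finset.sum_nonneg (fun j _ => norm_nonneg _)
        linarith
      have hρeq : ρ = ((1+ρ)/2) * q := by
        rw [hq]
        field_simp
      calc ‖a k * (ρ:ℂ)^(n k)‖
          = ‖a k‖ * ρ^(n k) := by
            rw [norm_mul, norm_pow, Complex.norm_real, Real.norm_eq_abs, _root_.abs_of_nonneg h0ρ]
        _ = ‖a k‖ * ((1+ρ)/2)^(n k) * q^(n k) := by
            rw [show ρ^(n k) = ((1+ρ)/2)^(n k) * q^(n k) by rw [← mul_pow, ← hρeq]]
            ring
        _ ≤ C0 * q^(n k) := by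
            have h := hC0nn k
            rw [norm_mul, norm_pow, Complex.norm_real, Real.norm_eq_abs, abs_of_pos h0ρ'] at h
            have hqpow : (0:ℝ) ≤ q^(n k) := by positivity
            nlinarith [norm_nonneg (a k)]
        _ ≤ C0 * q^k := by
            apply mul_le_mul_of_nonneg_left _ hC0nonneg
            exact pow_le_pow_of_le_one hq0 hq1.le hmono.le_apply
  -- main per-radius bound
  have main : ∀ ρ:ℝ, 0 ≤ ρ → ρ < 1 →
      (∑' k, ‖a k * (ρ:ℂ)^(n k)‖) ≤ (m:ℝ) * (2*(K * v ρ)) := by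
    intro ρ h0ρ h1ρ
    have hsum := hsumm ρ h0ρ h1ρ
    set A : ℕ → ℂ := fun k => a k * (ρ:ℂ)^(n k) with hA
    set φ : ℝ → ℂ := fun θ => (ρ:ℂ) * Complex.exp (θ * Complex.I) with hφ
    have hφball : ∀ θ:ℝ, φ θ ∈ Metric.ball (0:ℂ) 1 := by
      intro θ
      rw [hφ, mem_ball_zero_iff, norm_mul, Complex.norm_real, Real.norm_eq_abs,
        Complex.norm_exp_ofReal_mul_I, mul_one, _root_.abs_of_nonneg h0ρ]
      exact h1ρ
    have hφabs : ∀ θ:ℝ, ‖φ θ‖ = ρ := by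
      intro θ
      rw [hφ, norm_mul, Complex.norm_real, Real.norm_eq_abs, Complex.norm_exp_ofReal_mul_I, mul_one,
        _root_.abs_of_nonneg h0ρ]
    have hφcont : Continuous φ := by
      rw [hφ]
      exact continuous_const.mul
        (Complex.continuous_exp.comp (Complex.continuous_ofReal.mul continuous_const))
    set g : ℝ → ℂ := fun θ => f (φ θ) with hgdef
    have hgc : Continuous g :=
      (hf_diff.continuousOn).comp_continuous hφcont hφball
    have hzpow : ∀ (θ:ℝ) (k:ℕ), (φ θ)^(n k) = (ρ:ℂ)^(n k) * E ((n k:ℤ)) θ := by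
      intro θ k
      rw [hφ]
      beta_reduce
      rw [mul_pow, ← Complex.exp_nat_mul]
      congr 1
      unfold E
      congr 1
      push_cast
      ring
    have hg : ∀ θ:ℝ, g θ = ∑' k, A k * E ((n k:ℤ)) θ := by
      intro θ
      rw [hgdef]
      beta_reduce
      rw [hf _ (hφball θ)]
      apply tsum_congr
      intro k
      rw [hzpow θ k, hA]
      ring
    have hgB : ∀ θ:ℝ, (g θ).re ≤ K * v ρ := by
      intro θ
      have := hbdd _ (hφball θ)
      rwa [hφabs θ] at this
    have hblock : ∀ G : Finset ℕ, ∑ k ∈ G, ‖A k‖ ≤ (m:ℝ) * (2*(K* v ρ)) := by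
      intro G
      have hGsplit : ∑ k ∈ G, ‖A k‖
          = ∑ c0 ∈ Finset.range m, ∑ k ∈ G.filter (fun k => k % m = c0), ‖A k‖ :=
        (Finset.sum_fiberwise_of_maps_to (fun k _ => Finset.mem_range.mpr (Nat.mod_lt k hm0)) _).symm
      rw [hGsplit]
      have hcls : ∀ c0 ∈ Finset.range m,
          ∑ k ∈ G.filter (fun k => k % m = c0), ‖A k‖ ≤ 2*(K*v ρ) := by
        intro c0 _
        apply block_bound lam lam0 hlam hl3 hN1 hN2 n hn hmono hlt A hsum g hgc hg (K * v ρ) hgB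
        intro j hj k hk hjk
        have hj' := (Finset.mem_filter.mp hj).2
        have hk' := (Finset.mem_filter.mp hk).2
        have hdvd : m ∣ k - j := (Nat.modEq_iff_dvd' hjk.le).mp (hj'.trans hk'.symm)
        have htm : m ≤ k - j := Nat.le_of_dvd (by omega) hdvd
        have hch := hchain j (k - j)
        rw [show j + (k-j) = k by omega] at hch
        have hpow : lam0 ≤ lam^(k-j) := hm.trans (pow_le_pow_right₀ hlam.le htm)
        have hnj : (0:ℝ) ≤ (n j:ℝ) := by positivity
        nlinarith [hch, hpow, hnj]
      calc ∑ c0 ∈ Finset.range m, ∑ k ∈ G.filter (fun k => k % m = c0), ‖A k‖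
          ≤ ∑ _c0 ∈ Finset.range m, 2*(K*v ρ) := Finset.sum_le_sum hcls
        _ = (m:ℝ) * (2*(K*v ρ)) := by
            rw [Finset.sum_const, Finset.card_range, nsmul_eq_mul]
    exact Summable.tsum_le_of_sum_le hsum hblock
  -- conclusion
  refine ⟨2*(m:ℝ)*K + K, by nlinarith [hK, (Nat.cast_nonneg m : (0:ℝ) ≤ (m:ℝ))], ?_⟩
  intro z hz
  have hρ : ‖z‖ < 1 := by
    rwa [mem_ball_zero_iff] at hz
  have h0ρ : 0 ≤ ‖z‖ := norm_nonneg _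
  have hvpos : 0 < v (‖z‖) := hv_pos _ ⟨h0ρ, hρ⟩
  have hnormeq : ∀ k:ℕ, ‖a k * z^(n k)‖ = ‖a k * ((‖z‖:ℝ):ℂ)^(n k)‖ := by
    intro k
    rw [norm_mul, norm_mul, norm_pow, norm_pow, Complex.norm_real, Real.norm_eq_abs,
      _root_.abs_of_nonneg h0ρ]
  have hsum := hsumm (‖z‖) h0ρ hρ
  have hsum' : Summable (fun k => ‖a k * z^(n k)‖) := by
    simpa only [hnormeq] using hsum
  have h1 : ‖f z‖ ≤ ∑' k, ‖a k * ((‖z‖:ℝ):ℂ)^(n k)‖ := by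
    rw [hf z hz]
    calc ‖∑' k, a k * z^(n k)‖ ≤ ∑' k, ‖a k * z^(n k)‖ := norm_tsum_le_tsum_norm hsum'
      _ = ∑' k, ‖a k * ((‖z‖:ℝ):ℂ)^(n k)‖ := tsum_congr hnormeq
  have h2 := main (‖z‖) h0ρ hρ
  have habsf : ‖f z‖ ≤ (2*(m:ℝ)*K + K) * v (‖z‖) := by
    have hKv : 0 ≤ K * v (‖z‖) := le_of_lt (by positivity)
    calc ‖f z‖ ≤ (m:ℝ) * (2*(K * v (‖z‖))) := h1.trans h2
      _ ≤ (2*(m:ℝ)*K + K) * v (‖z‖) := by nlinarith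
  constructor
  · exact (Complex.abs_re_le_norm _).trans habsf
  · exact (Complex.abs_im_le_norm _).trans habsf
end

section
/- Let v be a weight function satisfying the doubling condition, let g(x)=v(1-1/x), let A > 1, and define integers b_k by b_0 = 1 and b_{k+1} = min{ l ∈ ℕ : g(2^l) > A g(2^{b_k}) } (this minimum exists since g(x) → ∞). Then the function u(z) = Re ∑_{k=0}^∞ g(2^{b_k}) z^{2^{b_k}} converges on the open unit disk and there exists K > 0 with |u(z)| ≤ K v(|z|) for all z in the disk. -/
/-
STATEMENT 8

v is a weight function satisfying the doubling condition, g(x) = v(1-1/x),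
A > 1, and b_0 = 1, b_{k+1} = min{ l ∈ ℕ : g(2^l) > A g(2^{b_k}) }.  Then the
gap series u(z) = Re ∑_k g(2^{b_k}) z^{2^{b_k}} converges on the unit disk and
satisfies |u(z)| ≤ K v(|z|) for some K > 0.
-/
theorem stmt_8
    (v : ℝ → ℝ)
    (hv_pos : ∀ r ∈ Set.Ico (0:ℝ) 1, 0 < v r)
    (hv_mono : StrictMonoOn v (Set.Ico (0:ℝ) 1))
    (hv_cont : ContinuousOn v (Set.Ico (0:ℝ) 1))
    (hv_zero : v 0 = 1)
    (hv_top : Filter.Tendsto v (nhdsWithin 1 (Set.Iio (1:ℝ))) Filter.atTop)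
    (D : ℝ) (hD : 1 < D)
    (hdbl : ∀ d ∈ Set.Ioc (0:ℝ) (1/2:ℝ), v (1 - d) ≤ D * v (1 - 2*d))
    (g : ℝ → ℝ) (hg : ∀ x, g x = v (1 - 1/x))
    (A : ℝ) (hA : 1 < A)
    (b : ℕ → ℕ) (hb0 : b 0 = 1)
    (hbrec : ∀ k : ℕ, b (k+1) = sInf {l : ℕ | A * g ((2:ℝ) ^ (b k)) < g ((2:ℝ) ^ l)}) :
    (∀ z ∈ Metric.ball (0:ℂ) 1,
      Summable (fun k : ℕ => (g ((2:ℝ) ^ (b k)) : ℂ) * z ^ (2 ^ (b k)))) ∧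
    ∃ K > 0, ∀ z ∈ Metric.ball (0:ℂ) 1,
      |(∑' k : ℕ, (g ((2:ℝ) ^ (b k)) : ℂ) * z ^ (2 ^ (b k))).re|
        ≤ K * v ‖z‖ := by
  have hA0 : (0:ℝ) < A := by linarith
  have hA1 : (0:ℝ) < A - 1 := by linarith
  have hD0 : (0:ℝ) < D := by linarith
  -- basic facts about g
  have hmemIco : ∀ x : ℝ, 1 ≤ x → (1 - 1/x) ∈ Set.Ico (0:ℝ) 1 := by
    intro x hx
    have hx0 : 0 < x := by linarith
    constructor
    · have : 1/x ≤ 1 := by rw [div_le_one hx0]; linarith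
      linarith
    · have : 0 < 1/x := by positivity
      show 1 - 1/x < 1
      linarith
  have hgpos : ∀ x : ℝ, 1 ≤ x → 0 < g x := by
    intro x hx; rw [hg]; exact hv_pos _ (hmemIco x hx)
  have hgmono : ∀ x y : ℝ, 1 ≤ x → x ≤ y → g x ≤ g y := by
    intro x y hx hxy
    have hy : 1 ≤ y := le_trans hx hxy
    rw [hg, hg]
    refine hv_mono.monotoneOn (hmemIco x hx) (hmemIco y hy) ?_
    have hx0 : 0 < x := by linarith
    have : 1/y ≤ 1/x := one_div_le_one_div_of_le hx0 hxy
    linarith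
  have hgdbl : ∀ x : ℝ, 1 ≤ x → g (2*x) ≤ D * g x := by
    intro x hx
    have hx0 : 0 < x := by linarith
    have hmem : (1/(2*x)) ∈ Set.Ioc (0:ℝ) (1/2) := by
      constructor
      · positivity
      · rw [div_le_div_iff₀ (by positivity) (by norm_num)]; linarith
    have hd := hdbl (1/(2*x)) hmem
    have h2 : 2 * (1/(2*x)) = 1/x := by field_simp
    rw [hg, hg]
    calc v (1 - 1/(2*x)) ≤ D * v (1 - 2*(1/(2*x))) := hd
      _ = D * v (1 - 1/x) := by rw [h2]
  have h2bk : ∀ k : ℕ, (1:ℝ) ≤ 2 ^ (b k) := fun k => one_le_pow₀ (by norm_num)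
  -- g (2^l) → ∞
  have hglim : Filter.Tendsto (fun l : ℕ => g ((2:ℝ)^l)) Filter.atTop Filter.atTop := by
    have h0 : Filter.Tendsto (fun l : ℕ => 1 - 1/(2:ℝ)^l) Filter.atTop (nhds 1) := by
      have hhalf : Filter.Tendsto (fun l : ℕ => 1/(2:ℝ)^l) Filter.atTop (nhds 0) := by
        simp only [one_div, ← inv_pow]
        exact tendsto_pow_atTop_nhds_zero_of_lt_one (by norm_num) (by norm_num)
      have := hhalf.const_sub 1
      simpa using this
    have h1 : Filter.Tendsto (fun l : ℕ => 1 - 1/(2:ℝ)^l) Filter.atTop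
        (nhdsWithin 1 (Set.Iio 1)) := by
      apply tendsto_nhdsWithin_of_tendsto_nhds_of_eventually_within _ h0
      filter_upwards with l
      have : 0 < 1/(2:ℝ)^l := by positivity
      simp only [Set.mem_Iio]; linarith
    have h2 := hv_top.comp h1
    refine h2.congr fun l => ?_
    simp only [Function.comp_apply]
    rw [hg]
  have hne : ∀ k : ℕ, {l : ℕ | A * g ((2:ℝ) ^ (b k)) < g ((2:ℝ) ^ l)}.Nonempty := by
    intro k
    obtain ⟨l, hl⟩ := (hglim.eventually_gt_atTop (A * g ((2:ℝ) ^ (b k)))).exists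
    exact ⟨l, hl⟩
  have hstep : ∀ k, A * g ((2:ℝ)^(b k)) < g ((2:ℝ)^(b (k+1))) := by
    intro k
    have h := Nat.sInf_mem (hne k)
    rw [← hbrec k] at h
    exact h
  have hbmono : StrictMono b := by
    apply strictMono_nat_of_lt_succ
    intro k
    by_contra h
    push_neg at h
    have h1 : g ((2:ℝ)^(b (k+1))) ≤ g ((2:ℝ)^(b k)) :=
      hgmono _ _ (h2bk _) (pow_le_pow_right₀ (by norm_num) h)
    have h2 := hstep k
    have h3 := hgpos ((2:ℝ)^(b k)) (h2bk k)
    nlinarith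
  -- geometric head estimate
  have hhead : ∀ N, ∑ k ∈ Finset.range (N+1), g ((2:ℝ)^(b k))
      ≤ A/(A-1) * g ((2:ℝ)^(b N)) := by
    intro N
    induction N with
    | zero =>
      rw [Finset.sum_range_one]
      have h := hgpos _ (h2bk 0)
      rw [div_mul_eq_mul_div, le_div_iff₀ hA1]
      nlinarith
    | succ N ih =>
      rw [Finset.sum_range_succ]
      have h1 := (hstep N).le
      have h2 := hgpos _ (h2bk N)
      have h3 := hgpos _ (h2bk (N+1))
      have key : A/(A-1) * g ((2:ℝ)^(b N)) + g ((2:ℝ)^(b (N+1)))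
          ≤ A/(A-1) * g ((2:ℝ)^(b (N+1))) := by
        rw [div_mul_eq_mul_div, div_mul_eq_mul_div, div_add' _ _ _ hA1.ne',
          div_le_div_iff₀ hA1 hA1]
        nlinarith
      linarith
  -- doubling growth of g along powers of 2
  have hDgrow : ∀ s t : ℕ, g ((2:ℝ)^(s+t)) ≤ D^t * g ((2:ℝ)^s) := by
    intro s t
    induction t with
    | zero => simp
    | succ t ih =>
      have h1 : ((2:ℝ))^(s+(t+1)) = 2 * 2^(s+t) := by ring
      have h2 : (1:ℝ) ≤ 2^(s+t) := one_le_pow₀ (by norm_num)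
      calc g ((2:ℝ)^(s+(t+1))) = g (2 * 2^(s+t)) := by rw [h1]
        _ ≤ D * g ((2:ℝ)^(s+t)) := hgdbl _ h2
        _ ≤ D * (D^t * g ((2:ℝ)^s)) := by nlinarith [hgpos _ h2]
        _ = D^(t+1) * g ((2:ℝ)^s) := by ring
  -- the tail comparison series
  set φ : ℕ → ℝ := fun i => D^(i+1) * Real.exp (-(2:ℝ)^i) with hφdef
  have hφpos : ∀ i, 0 < φ i := fun i => by positivity
  have hφsum : Summable φ := by
    apply summable_of_ratio_norm_eventually_le (r := 1/2) (by norm_num)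
    have hev : ∀ᶠ i : ℕ in Filter.atTop, 2*D ≤ Real.exp ((2:ℝ)^i) := by
      have ht : Filter.Tendsto (fun i : ℕ => Real.exp ((2:ℝ)^i)) Filter.atTop Filter.atTop :=
        Real.tendsto_exp_atTop.comp (tendsto_pow_atTop_atTop_of_one_lt (by norm_num))
      exact ht.eventually_ge_atTop _
    filter_upwards [hev] with i hi
    rw [Real.norm_of_nonneg (hφpos _).le, Real.norm_of_nonneg (hφpos _).le]
    have hexp : Real.exp (-(2:ℝ)^(i+1)) = Real.exp (-(2:ℝ)^i) * Real.exp (-(2:ℝ)^i) := by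
      rw [← Real.exp_add]; ring_nf
    have hkey : D * Real.exp (-(2:ℝ)^i) ≤ 1/2 := by
      rw [Real.exp_neg, ← div_eq_mul_inv, div_le_iff₀ (Real.exp_pos _)]
      linarith
    have h1 : (0:ℝ) ≤ D^(i+1) * Real.exp (-(2:ℝ)^i) := by positivity
    calc φ (i+1) = (D^(i+1) * Real.exp (-(2:ℝ)^i)) * (D * Real.exp (-(2:ℝ)^i)) := by
          simp only [hφdef]; rw [hexp]; ring
      _ ≤ (D^(i+1) * Real.exp (-(2:ℝ)^i)) * (1/2) := mul_le_mul_of_nonneg_left hkey h1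
      _ = 1/2 * φ i := by simp only [hφdef]; ring
  set Cφ : ℝ := ∑' i, φ i with hCφdef
  have hCφ0 : 0 ≤ Cφ := tsum_nonneg fun i => (hφpos i).le
  -- the main pointwise estimate
  have key : ∀ r : ℝ, 0 ≤ r → r < 1 →
      Summable (fun k : ℕ => g ((2:ℝ)^(b k)) * r ^ (2^(b k))) ∧
      ∑' k : ℕ, g ((2:ℝ)^(b k)) * r ^ (2^(b k)) ≤ (A/(A-1) + Cφ) * v r := by
    intro r hr0 hr1
    have hr1' : 0 < 1 - r := by linarith
    set X : ℝ := 1/(1-r) with hXdef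
    have hX0 : 0 < X := by positivity
    have hX1 : 1 ≤ X := by rw [hXdef, le_div_iff₀ hr1']; linarith
    have hXr : 1 - 1/X = r := by rw [hXdef]; field_simp; ring
    have hvr : 0 < v r := hv_pos r ⟨hr0, hr1⟩
    -- choose j with 2^(j-1) ≤ X < 2^j
    have hPex : ∃ l : ℕ, X < 2^l := pow_unbounded_of_one_lt X (by norm_num)
    set j := Nat.find hPex with hjdef
    have hj2 : X < 2^j := Nat.find_spec hPex
    have hj1 : 1 ≤ j := by
      rcases Nat.eq_zero_or_pos j with h | h
      · exfalso
        have := hj2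
        rw [h] at this
        simp only [pow_zero] at this
        linarith
      · exact h
    have hjlow : ¬ (X < (2:ℝ)^(j-1)) := Nat.find_min hPex (by omega)
    push_neg at hjlow
    -- choose n = first index with b k ≥ j
    have hnex : ∃ k, j ≤ b k := ⟨j, hbmono.le_apply⟩
    set n := Nat.find hnex with hndef
    have hn : j ≤ b n := Nat.find_spec hnex
    have hnlt : ∀ k, k < n → b k < j := by
      intro k hk
      have := Nat.find_min hnex hk
      omega
    have hnge : ∀ k, n ≤ k → j ≤ b k := fun k hk => le_trans hn (hbmono.le_iff_le.mpr hk)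
    -- head bound for small exponents
    have hgle : ∀ m : ℕ, m < j → g ((2:ℝ)^m) ≤ v r := by
      intro m hm
      have h1 : (2:ℝ)^m ≤ 2^(j-1) := pow_le_pow_right₀ (by norm_num) (by omega)
      have h2 : g ((2:ℝ)^m) ≤ g X :=
        hgmono _ _ (one_le_pow₀ (by norm_num)) (le_trans h1 hjlow)
      rwa [hg X, hXr] at h2
    -- tail bounds
    have hgD : ∀ m : ℕ, j ≤ m → g ((2:ℝ)^m) ≤ D^(m-j+1) * v r := by
      intro m hm
      have h0 : (j-1) + (m-j+1) = m := by omega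
      have h1 : g ((2:ℝ)^m) ≤ D^(m-j+1) * g ((2:ℝ)^(j-1)) := by
        calc g ((2:ℝ)^m) = g ((2:ℝ)^((j-1)+(m-j+1))) := by rw [h0]
          _ ≤ D^(m-j+1) * g ((2:ℝ)^(j-1)) := hDgrow _ _
      have h2 : g ((2:ℝ)^(j-1)) ≤ v r := hgle _ (by omega)
      calc g ((2:ℝ)^m) ≤ D^(m-j+1) * g ((2:ℝ)^(j-1)) := h1
        _ ≤ D^(m-j+1) * v r := mul_le_mul_of_nonneg_left h2 (by positivity)
    have hrpow : ∀ m : ℕ, j ≤ m → r ^ (2^m : ℕ) ≤ Real.exp (-(2:ℝ)^(m-j)) := by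
      intro m hm
      have h1 : r ≤ Real.exp (r - 1) := by
        have := Real.add_one_le_exp (r - 1); linarith
      have h2 : r ^ (2^m : ℕ) ≤ Real.exp (r-1) ^ (2^m : ℕ) := pow_le_pow_left₀ hr0 h1 _
      have h3 : Real.exp (r-1) ^ (2^m : ℕ) = Real.exp ((2^m : ℕ) * (r-1)) :=
        (Real.exp_nat_mul _ _).symm
      rw [h3] at h2
      refine le_trans h2 (Real.exp_le_exp.mpr ?_)
      have hc : ((2^m : ℕ) : ℝ) = (2:ℝ)^m := by push_cast; ring
      rw [hc]
      have hsplit : (2:ℝ)^m = 2^(m-j) * 2^j := by rw [← pow_add]; congr 1; omega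
      have h1r : 1 - r = 1/X := by rw [hXdef]; field_simp
      have hp0 : (0:ℝ) < 2^(m-j) := by positivity
      have h4 : (2:ℝ)^(m-j) * X ≤ 2^(m-j) * 2^j := by nlinarith
      have h5 : (2:ℝ)^(m-j) ≤ (1-r) * 2^m := by
        rw [h1r, hsplit, one_div, inv_mul_eq_div, le_div_iff₀ hX0]
        linarith
      have h6 : (2:ℝ)^m * (r-1) = -((1-r) * 2^m) := by ring
      rw [h6]
      linarith
    -- the real series
    set F : ℕ → ℝ := fun k => g ((2:ℝ)^(b k)) * r ^ (2^(b k)) with hFdef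
    have hFnn : ∀ k, 0 ≤ F k := fun k =>
      mul_nonneg (hgpos _ (h2bk k)).le (pow_nonneg hr0 _)
    set f : ℕ → ℝ := fun i => φ i * v r with hfdef
    have hfsum : Summable f := hφsum.mul_right _
    have hfnn : ∀ i, 0 ≤ f i := fun i => mul_nonneg (hφpos i).le hvr.le
    set inj : ℕ → ℕ := fun k => b (k + n) - j with hinjdef
    have hinjinj : Function.Injective inj := by
      intro k1 k2 h
      simp only [hinjdef] at h
      have h1 := hnge (k1 + n) (by omega)
      have h2 := hnge (k2 + n) (by omega)
      have h3 : b (k1 + n) = b (k2 + n) := by omega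
      have h4 := hbmono.injective h3
      omega
    have htail : ∀ k, F (k + n) ≤ f (inj k) := by
      intro k
      have hm := hnge (k + n) (by omega)
      have h1 := hgD (b (k+n)) hm
      have h2 := hrpow (b (k+n)) hm
      calc F (k+n) = g ((2:ℝ)^(b (k+n))) * r ^ (2^(b (k+n))) := rfl
        _ ≤ (D^(b (k+n)-j+1) * v r) * Real.exp (-(2:ℝ)^(b (k+n)-j)) :=
            mul_le_mul h1 h2 (pow_nonneg hr0 _) (by positivity)
        _ = (D^(b (k+n)-j+1) * Real.exp (-(2:ℝ)^(b (k+n)-j))) * v r := by ring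
        _ = f (inj k) := rfl
    have htailsum : Summable (fun k => F (k + n)) :=
      Summable.of_nonneg_of_le (fun k => hFnn _) htail (hfsum.comp_injective hinjinj)
    have hFsum : Summable F := (summable_nat_add_iff n).mp htailsum
    refine ⟨hFsum, ?_⟩
    have hsplit := Summable.sum_add_tsum_nat_add n hFsum
    have hheadle : ∑ k ∈ Finset.range n, F k ≤ A/(A-1) * v r := by
      have hc : 0 < A/(A-1) := by positivity
      rcases Nat.eq_zero_or_pos n with h0 | h0
      · rw [h0]
        simp only [Finset.range_zero, Finset.sum_empty]
        positivity
      · obtain ⟨N, hN⟩ : ∃ N, n = N + 1 := ⟨n-1, by omega⟩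
        rw [hN]
        calc ∑ k ∈ Finset.range (N+1), F k
            ≤ ∑ k ∈ Finset.range (N+1), g ((2:ℝ)^(b k)) := by
              apply Finset.sum_le_sum
              intro k _
              have hp1 : r ^ (2^(b k) : ℕ) ≤ 1 := pow_le_one₀ hr0 hr1.le
              have := hgpos _ (h2bk k)
              calc F k = g ((2:ℝ)^(b k)) * r ^ (2^(b k)) := rfl
                _ ≤ g ((2:ℝ)^(b k)) * 1 := mul_le_mul_of_nonneg_left hp1 this.le
                _ = g ((2:ℝ)^(b k)) := mul_one _
          _ ≤ A/(A-1) * g ((2:ℝ)^(b N)) := hhead N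
          _ ≤ A/(A-1) * v r :=
              mul_le_mul_of_nonneg_left (hgle _ (hnlt N (by omega))) hc.le
    have htailtsum : ∑' k, F (k + n) ≤ Cφ * v r := by
      have h1 : ∑' k, F (k + n) ≤ ∑' i, f i :=
        htailsum.tsum_le_tsum_of_inj inj hinjinj (fun c _ => hfnn c) htail hfsum
      have h2 : ∑' i, f i = Cφ * v r := by
        rw [hCφdef, hfdef]
        exact tsum_mul_right
      linarith
    calc ∑' k, F k = ∑ k ∈ Finset.range n, F k + ∑' k, F (k + n) := hsplit.symm
      _ ≤ A/(A-1) * v r + Cφ * v r := add_le_add hheadle htailtsum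
      _ = (A/(A-1) + Cφ) * v r := by ring
  -- norms of the complex terms
  have habs : ∀ z : ℂ, ∀ k : ℕ,
      ‖(g ((2:ℝ) ^ (b k)) : ℂ) * z ^ (2 ^ (b k))‖
        = g ((2:ℝ)^(b k)) * (‖z‖) ^ (2^(b k)) := by
    intro z k
    rw [norm_mul, norm_pow, Complex.norm_real,
      Real.norm_of_nonneg (hgpos _ (h2bk k)).le]
  have hzball : ∀ z : ℂ, z ∈ Metric.ball (0:ℂ) 1 → ‖z‖ < 1 := by
    intro z hz
    rw [Metric.mem_ball, dist_zero_right] at hz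
    exact hz
  have hsumC : ∀ z ∈ Metric.ball (0:ℂ) 1,
      Summable (fun k : ℕ => (g ((2:ℝ) ^ (b k)) : ℂ) * z ^ (2 ^ (b k))) := by
    intro z hz
    have h1 := (key (‖z‖) (norm_nonneg z) (hzball z hz)).1
    apply Summable.of_norm
    exact h1.congr fun k => (habs z k).symm
  refine ⟨hsumC, A/(A-1) + Cφ, ?_, ?_⟩
  · have : 0 < A/(A-1) := by positivity
    linarith
  · intro z hz
    have hr1 := hzball z hz
    have hr0 := norm_nonneg z
    obtain ⟨hFsum, hbound⟩ := key (‖z‖) hr0 hr1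
    have hnormsum : Summable (fun k : ℕ => ‖(g ((2:ℝ) ^ (b k)) : ℂ) * z ^ (2 ^ (b k))‖) :=
      hFsum.congr fun k => (habs z k).symm
    have h1 : |(∑' k : ℕ, (g ((2:ℝ) ^ (b k)) : ℂ) * z ^ (2 ^ (b k))).re|
        ≤ ‖∑' k : ℕ, (g ((2:ℝ) ^ (b k)) : ℂ) * z ^ (2 ^ (b k))‖ := by
      exact Complex.abs_re_le_norm _
    have h2 := norm_tsum_le_tsum_norm hnormsum
    have h3 : ∑' k : ℕ, ‖(g ((2:ℝ) ^ (b k)) : ℂ) * z ^ (2 ^ (b k))‖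
        = ∑' k : ℕ, g ((2:ℝ)^(b k)) * (‖z‖) ^ (2^(b k)) :=
      tsum_congr (habs z)
    rw [h3] at h2
    linarith
end

section
/- Let v be a weight function satisfying the doubling condition, and let g(x)=v(1-1/x). Suppose that for every C > 0 there exists a positive integer n = n(C) with ∑_{k=1}^{n} g(2^k) > C g(2^n). Then the function u(z) = Re ∑_{k=1}^∞ g(2^k) z^{2^k} (wherever the series converges on the disk) does not satisfy a one-sided bound: for every K > 0 there exists z in the open unit disk with u(z) > K v(|z|). -/
/-
STATEMENT 9

v is a weight function satisfying the doubling condition, g(x) = v(1-1/x), and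
for every C > 0 there is n ≥ 1 with ∑_{k=1}^n g(2^k) > C g(2^n).  Then the gap
series u(z) = Re ∑_{k=1}^∞ g(2^k) z^{2^k} admits no one-sided bound: for every
K > 0 there is z in the unit disk (where the series does converge) with
u(z) > K v(|z|).
-/
theorem stmt_9
    (v : ℝ → ℝ)
    (hv_pos : ∀ r ∈ Set.Ico (0:ℝ) 1, 0 < v r)
    (hv_mono : StrictMonoOn v (Set.Ico (0:ℝ) 1))
    (hv_cont : ContinuousOn v (Set.Ico (0:ℝ) 1))
    (hv_zero : v 0 = 1)
    (hv_top : Filter.Tendsto v (nhdsWithin 1 (Set.Iio (1:ℝ))) Filter.atTop)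
    (D : ℝ) (hD : 1 < D)
    (hdbl : ∀ d ∈ Set.Ioc (0:ℝ) (1/2:ℝ), v (1 - d) ≤ D * v (1 - 2*d))
    (g : ℝ → ℝ) (hg : ∀ x, g x = v (1 - 1/x))
    (hbig : ∀ C : ℝ, 0 < C → ∃ m : ℕ, 1 ≤ m ∧
      C * g ((2:ℝ) ^ m) < ∑ k ∈ Finset.Icc 1 m, g ((2:ℝ) ^ k)) :
    ∀ K : ℝ, 0 < K → ∃ z ∈ Metric.ball (0:ℂ) 1,
      Summable (fun k : ℕ => (g ((2:ℝ) ^ (k+1)) : ℂ) * z ^ (2 ^ (k+1))) ∧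
      K * v ‖z‖ <
        (∑' k : ℕ, (g ((2:ℝ) ^ (k+1)) : ℂ) * z ^ (2 ^ (k+1))).re := by
  intro K hK
  have hD0 : (0:ℝ) < D := lt_trans one_pos hD
  -- positivity of g at powers of 2
  have gpos : ∀ m : ℕ, 0 < g ((2:ℝ) ^ m) := by
    intro m
    rw [hg]
    apply hv_pos
    have h1 : (0:ℝ) < 1 / (2:ℝ) ^ m := by positivity
    have h2 : (1:ℝ) / (2:ℝ) ^ m ≤ 1 := by
      rw [div_le_one (by positivity)]
      have := Nat.one_le_two_pow (n := m)
      exact_mod_cast this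
    constructor <;> [linarith; linarith]
  -- doubling step for g
  have gdbl : ∀ m : ℕ, g ((2:ℝ) ^ (m+1)) ≤ D * g ((2:ℝ) ^ m) := by
    intro m
    rw [hg, hg]
    have hd : (1:ℝ) / (2:ℝ) ^ (m+1) ∈ Set.Ioc (0:ℝ) (1/2:ℝ) := by
      constructor
      · positivity
      · apply div_le_div_of_nonneg_left (by norm_num) (by norm_num)
        calc (2:ℝ) = 2 ^ 1 := (pow_one 2).symm
        _ ≤ 2 ^ (m+1) := pow_le_pow_right₀ (by norm_num) (by omega)
    have h2d : 2 * ((1:ℝ) / 2 ^ (m+1)) = 1 / 2 ^ m := by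
      rw [pow_succ]; field_simp
    have := hdbl _ hd
    rwa [h2d] at this
  obtain ⟨n, hn1, hsum⟩ := hbig (2*D*K) (by positivity)
  have h2le : (2:ℝ) ≤ 2 ^ (n+1) := by
    calc (2:ℝ) = 2 ^ 1 := (pow_one 2).symm
    _ ≤ 2 ^ (n+1) := pow_le_pow_right₀ (by norm_num) (by omega)
  have hdsmall : (1:ℝ) / 2 ^ (n+1) ≤ 1/2 :=
    div_le_div_of_nonneg_left (by norm_num) (by norm_num) h2le
  have hdpos : (0:ℝ) < 1 / 2 ^ (n+1) := by positivity
  have hr_half : (1:ℝ)/2 ≤ 1 - 1 / 2 ^ (n+1) := by linarith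
  have hr0 : (0:ℝ) ≤ 1 - 1 / 2 ^ (n+1) := by linarith
  have hr1 : (1 - 1 / 2 ^ (n+1) : ℝ) < 1 := by linarith
  set r : ℝ := 1 - 1 / 2 ^ (n+1) with hrdef
  -- Bernoulli: r ^ (2 ^ n) ≥ 1/2
  have hbern : (1:ℝ)/2 ≤ r ^ (2 ^ n : ℕ) := by
    have h := one_add_mul_le_pow (a := -(1 / 2 ^ (n+1) : ℝ)) (by nlinarith [hr_half]) (2 ^ n)
    have he : (1:ℝ) + (2 ^ n : ℕ) * -(1 / 2 ^ (n+1)) = 1/2 := by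
      push_cast
      rw [pow_succ]
      field_simp
      ring
    have he2 : (1:ℝ) + -(1 / 2 ^ (n+1)) = r := by simp only [hrdef]; ring
    rw [he, he2] at h
    exact h
  -- real coefficients
  set a : ℕ → ℝ := fun k => g ((2:ℝ) ^ (k+1)) * r ^ (2 ^ (k+1) : ℕ) with hadef
  have ha_nonneg : ∀ k, 0 ≤ a k := fun k => mul_nonneg (gpos (k+1)).le (pow_nonneg hr0 _)
  -- Summability via ratio test
  have hsummable : Summable a := by
    apply summable_of_ratio_norm_eventually_le (r := 1/2) (by norm_num)
    have htend : Filter.Tendsto (fun k : ℕ => r ^ k) Filter.atTop (nhds 0) :=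
      tendsto_pow_atTop_nhds_zero_of_lt_one hr0 hr1
    have hev : ∀ᶠ k : ℕ in Filter.atTop, r ^ k ≤ 1/(2*D) := by
      have := htend.eventually_le_const (show (0:ℝ) < 1/(2*D) by positivity)
      exact this
    filter_upwards [hev.and (Filter.eventually_ge_atTop 1)] with k ⟨hk, hk1⟩
    have hsmall : r ^ (2 ^ (k+1) : ℕ) ≤ 1/(2*D) := by
      refine le_trans ?_ hk
      exact pow_le_pow_of_le_one hr0 hr1.le (le_trans (Nat.le_of_lt (Nat.lt_two_pow_self (n := k))) (by
        exact Nat.pow_le_pow_right (by norm_num) (by omega)))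
    have hnorm1 : ‖a (k+1)‖ = a (k+1) := Real.norm_of_nonneg (ha_nonneg _)
    have hnorm2 : ‖a k‖ = a k := Real.norm_of_nonneg (ha_nonneg _)
    rw [hnorm1, hnorm2]
    have hpow : r ^ (2 ^ (k+2) : ℕ) = r ^ (2 ^ (k+1) : ℕ) * r ^ (2 ^ (k+1) : ℕ) := by
      rw [← pow_add]
      congr 1
      rw [pow_succ]
      ring
    have h1 : a (k+1) = g ((2:ℝ) ^ (k+2)) * r ^ (2 ^ (k+2) : ℕ) := rfl
    rw [h1, hpow]
    calc g ((2:ℝ) ^ (k+2)) * (r ^ (2 ^ (k+1) : ℕ) * r ^ (2 ^ (k+1) : ℕ))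
        ≤ (D * g ((2:ℝ) ^ (k+1))) * (r ^ (2 ^ (k+1) : ℕ) * r ^ (2 ^ (k+1) : ℕ)) := by
          apply mul_le_mul_of_nonneg_right (gdbl (k+1))
          positivity
      _ = (D * r ^ (2 ^ (k+1) : ℕ)) * a k := by rw [hadef]; ring
      _ ≤ (D * (1/(2*D))) * a k := by
          apply mul_le_mul_of_nonneg_right _ (ha_nonneg k)
          exact mul_le_mul_of_nonneg_left hsmall hD0.le
      _ = (1/2) * a k := by field_simp
  -- the complex point
  refine ⟨(r : ℂ), ?_, ?_, ?_⟩
  · simp [Complex.norm_of_nonneg hr0, abs_of_nonneg hr0, hr1]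
  · have : (fun k : ℕ => (g ((2:ℝ) ^ (k+1)) : ℂ) * (r:ℂ) ^ (2 ^ (k+1) : ℕ))
        = fun k => ((a k : ℝ) : ℂ) := by
      funext k
      simp only [hadef]
      push_cast
      ring
    rw [this]
    exact (Complex.summable_ofReal).2 hsummable
  · have habs : ‖(r : ℂ)‖ = r := by
      rw [Complex.norm_of_nonneg hr0]
    rw [habs]
    have hcoe : (fun k : ℕ => (g ((2:ℝ) ^ (k+1)) : ℂ) * (r:ℂ) ^ (2 ^ (k+1) : ℕ))
        = fun k => ((a k : ℝ) : ℂ) := by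
      funext k
      simp only [hadef]
      push_cast
      ring
    rw [hcoe, ← Complex.ofReal_tsum, Complex.ofReal_re]
    -- v r = g (2 ^ (n+1))
    have hvr : v r = g ((2:ℝ) ^ (n+1)) := by rw [hg]
    rw [hvr]
    -- partial sum bound
    have hpartial : ∑ k ∈ Finset.range n, a k ≤ ∑' k, a k :=
      Summable.sum_le_tsum _ (fun i _ => ha_nonneg i) hsummable
    have hterm : ∀ k ∈ Finset.range n, (1/2) * g ((2:ℝ) ^ (k+1)) ≤ a k := by
      intro k hk
      simp only [Finset.mem_range] at hk
      have hple : r ^ (2 ^ n : ℕ) ≤ r ^ (2 ^ (k+1) : ℕ) :=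
        pow_le_pow_of_le_one hr0 hr1.le (Nat.pow_le_pow_right (by norm_num) (by omega))
      have : (1:ℝ)/2 ≤ r ^ (2 ^ (k+1) : ℕ) := le_trans hbern hple
      have := mul_le_mul_of_nonneg_left this (gpos (k+1)).le
      simp only [hadef]
      linarith
    have hsum2 : (1/2) * ∑ k ∈ Finset.Icc 1 n, g ((2:ℝ) ^ k) ≤ ∑ k ∈ Finset.range n, a k := by
      have hre : ∑ k ∈ Finset.Icc 1 n, g ((2:ℝ) ^ k) = ∑ k ∈ Finset.range n, g ((2:ℝ) ^ (k+1)) := by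
        rw [← Finset.Ico_add_one_right_eq_Icc, Finset.sum_Ico_eq_sum_range]
        apply Finset.sum_congr rfl
        intro k _
        rw [add_comm]
      rw [hre, Finset.mul_sum]
      exact Finset.sum_le_sum hterm
    have hfinal : K * g ((2:ℝ) ^ (n+1)) < ∑ k ∈ Finset.range n, a k := by
      have h1 : K * g ((2:ℝ) ^ (n+1)) ≤ K * (D * g ((2:ℝ) ^ n)) :=
        mul_le_mul_of_nonneg_left (gdbl n) hK.le
      have h2 : (1/2) * (2*D*K * g ((2:ℝ) ^ n)) < (1/2) * ∑ k ∈ Finset.Icc 1 n, g ((2:ℝ) ^ k) := by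
        linarith
      calc K * g ((2:ℝ) ^ (n+1)) ≤ K * (D * g ((2:ℝ) ^ n)) := h1
        _ = (1/2) * (2*D*K * g ((2:ℝ) ^ n)) := by ring
        _ < (1/2) * ∑ k ∈ Finset.Icc 1 n, g ((2:ℝ) ^ k) := h2
        _ ≤ ∑ k ∈ Finset.range n, a k := hsum2
    linarith
end

section
/- Let v be a weight function satisfying the doubling condition with constant D. Then there exist a constant C > 0 and an integer n_0 ≥ 1, both depending only on D, such that for every integer n ≥ n_0 and every s ∈ (0, 1 - 1/n], one has ∫_0^s r^{n-1}/v(r) dr ≤ C s^n / (n v(s)). -/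
/-
STATEMENT 10

v is a weight function satisfying the doubling condition with constant D.
Then there are C > 0 and n₀ ≥ 1 (depending only on D) such that
∫_0^s r^{n-1}/v(r) dr ≤ C s^n/(n v(s)) for all n ≥ n₀ and 0 < s ≤ 1 - 1/n.
-/


lemma aux_v_one (v : ℝ → ℝ) (hv_mono : StrictMonoOn v (Set.Ico (0:ℝ) 1))
    (hv_zero : v 0 = 1) : ∀ r ∈ Set.Ico (0:ℝ) 1, 1 ≤ v r := by
  intro r hr
  rcases eq_or_lt_of_le hr.1 with h | h
  · rw [← h, hv_zero]
  · rw [← hv_zero]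
    exact (hv_mono ⟨le_refl 0, one_pos⟩ hr h).le

lemma aux_chain (v : ℝ → ℝ) (D : ℝ) (hD : 1 < D)
    (hdbl : ∀ d ∈ Set.Ioc (0:ℝ) (1/2:ℝ), v (1 - d) ≤ D * v (1 - 2*d)) :
    ∀ (j : ℕ) (d : ℝ), 0 < d → 2^j * d ≤ 1 → v (1 - d) ≤ D^j * v (1 - 2^j * d) := by
  intro j
  induction j with
  | zero => intro d hd h1; simp
  | succ j ih =>
    intro d hd h1
    have h2 : (2:ℝ) ≤ 2^(j+1) := by
      calc (2:ℝ) = 2^1 := (pow_one 2).symm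
      _ ≤ 2^(j+1) := pow_le_pow_right₀ one_le_two (by omega)
    have h3 : 2*d ≤ 2^(j+1)*d := mul_le_mul_of_nonneg_right h2 hd.le
    have hd2 : 2*d ≤ 1 := le_trans h3 h1
    have ha := hdbl d ⟨hd, by linarith⟩
    have hb := ih (2*d) (by linarith) (by
      calc (2:ℝ)^j*(2*d) = 2^(j+1)*d := by ring
      _ ≤ 1 := h1)
    calc v (1-d) ≤ D * v (1 - 2*d) := ha
    _ ≤ D * (D^j * v (1 - 2^j*(2*d))) := mul_le_mul_of_nonneg_left hb (by linarith)
    _ = D^(j+1) * v (1 - 2^(j+1)*d) := by rw [show (2:ℝ)^j*(2*d) = 2^(j+1)*d by ring]; ring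

lemma aux_int (v : ℝ → ℝ)
    (hv_pos : ∀ r ∈ Set.Ico (0:ℝ) 1, 0 < v r)
    (hv_cont : ContinuousOn v (Set.Ico (0:ℝ) 1))
    (k : ℕ) {a b : ℝ} (ha : 0 ≤ a) (hab : a ≤ b) (hb : b < 1) :
    IntervalIntegrable (fun r => r ^ k / v r) MeasureTheory.volume a b := by
  apply ContinuousOn.intervalIntegrable
  have hsub : Set.uIcc a b ⊆ Set.Ico (0:ℝ) 1 := by
    rw [Set.uIcc_of_le hab]
    intro x hx; exact ⟨le_trans ha hx.1, lt_of_le_of_lt hx.2 hb⟩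
  apply ContinuousOn.div
  · exact (continuous_pow k).continuousOn
  · exact hv_cont.mono hsub
  · intro x hx; exact (hv_pos x (hsub hx)).ne'

lemma aux_m (D : ℝ) (hD : 1 < D) : ∃ m : ℕ, 1 ≤ m ∧ (m:ℝ) * D + 2 ≤ 2^m := by
  set j : ℕ := ⌈D⌉₊ + 4 with hj
  refine ⟨3*j, by omega, ?_⟩
  have hDj : D ≤ (j:ℝ) := by
    have h1 := Nat.le_ceil D
    have h2 : (⌈D⌉₊:ℝ) ≤ j := by exact_mod_cast Nat.le_add_right _ 4
    linarith
  have hj4 : (4:ℝ) ≤ j := by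
    have : 4 ≤ j := by rw [hj]; omega
    exact_mod_cast this
  have h2j : (j:ℝ) + 1 ≤ 2^j := by
    have h := Nat.lt_two_pow_self (n := j)
    have h' : j + 1 ≤ 2^j := h
    exact_mod_cast h'
  have hexp : ((2:ℝ))^(3*j) = ((2:ℝ)^j)^3 := by
    rw [← pow_mul]; ring_nf
  rw [hexp]
  have hcast : ((3*j : ℕ):ℝ) = 3 * (j:ℝ) := by push_cast; ring
  rw [hcast]
  have hcube : ((j:ℝ)+1)^3 ≤ ((2:ℝ)^j)^3 := by
    apply pow_le_pow_left₀ (by positivity) h2j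
  have hj0 : (0:ℝ) ≤ j := by positivity
  nlinarith [hcube, hDj, hj4, mul_le_mul_of_nonneg_left hDj (by positivity : (0:ℝ) ≤ 3*(j:ℝ)),
    mul_nonneg (mul_nonneg hj0 hj0) hj0]


set_option maxHeartbeats 1000000 in
theorem stmt_10
    (v : ℝ → ℝ)
    (hv_pos : ∀ r ∈ Set.Ico (0:ℝ) 1, 0 < v r)
    (hv_mono : StrictMonoOn v (Set.Ico (0:ℝ) 1))
    (hv_cont : ContinuousOn v (Set.Ico (0:ℝ) 1))
    (hv_zero : v 0 = 1)
    (hv_top : Filter.Tendsto v (nhdsWithin 1 (Set.Iio (1:ℝ))) Filter.atTop)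
    (D : ℝ) (hD : 1 < D)
    (hdbl : ∀ d ∈ Set.Ioc (0:ℝ) (1/2:ℝ), v (1 - d) ≤ D * v (1 - 2*d)) :
    ∃ C > 0, ∃ n₀ : ℕ, 1 ≤ n₀ ∧ ∀ n : ℕ, n₀ ≤ n →
      ∀ s : ℝ, 0 < s → s ≤ 1 - 1/(n:ℝ) →
        (∫ r in (0:ℝ)..s, r ^ (n - 1) / v r) ≤ C * s ^ n / ((n : ℝ) * v s) := by
  have hD0 : (0:ℝ) < D := lt_trans one_pos hD
  obtain ⟨m, hm1, hm⟩ := aux_m D hD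
  have hDmpos : (0:ℝ) < D^(m+1) := pow_pos hD0 _
  have hC0 : (0:ℝ) < 2 * D^(m+1) := by linarith
  have hv1 := aux_v_one v hv_mono hv_zero
  have h2m2 : (2:ℝ) ≤ 2^m := by
    calc (2:ℝ) = 2^1 := (pow_one 2).symm
    _ ≤ 2^m := pow_le_pow_right₀ one_le_two hm1
  -- contraction constant
  have hcontr : D^m * Real.exp (1 - 2^m) ≤ 1/2 := by
    have hlog : Real.log D ≤ D := by
      have := Real.log_le_sub_one_of_pos hD0; linarith
    have hDm : (D:ℝ)^m = Real.exp ((m:ℝ) * Real.log D) := by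
      rw [Real.exp_nat_mul, Real.exp_log hD0]
    have hlog2 : Real.log 2 ≤ 1 := by
      have := Real.log_le_sub_one_of_pos (by norm_num : (0:ℝ) < 2); linarith
    have hmD : (m:ℝ) * Real.log D ≤ (m:ℝ) * D :=
      mul_le_mul_of_nonneg_left hlog (by positivity)
    rw [hDm, ← Real.exp_add]
    calc Real.exp ((m:ℝ)*Real.log D + (1 - 2^m)) ≤ Real.exp (-Real.log 2) := by
          rw [Real.exp_le_exp]; linarith
    _ = 1/2 := by rw [Real.exp_neg, Real.exp_log (by norm_num : (0:ℝ) < 2)]; norm_num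
  -- the integral of the pure power
  have hpow : ∀ n : ℕ, 1 ≤ n → ∀ a b : ℝ,
      (∫ r in a..b, r ^ (n-1)) = (b^n - a^n)/(n:ℝ) := by
    intro n hn a b
    rw [integral_pow, Nat.sub_add_cancel hn, Nat.cast_sub hn]
    norm_num
  -- base regime : 1-s ≥ 2^-(m+1)
  have hbase : ∀ n : ℕ, 1 ≤ n → ∀ s : ℝ, 0 < s → s ≤ 1 - 1/(n:ℝ) →
      1 ≤ 2^(m+1) * (1-s) →
      (∫ r in (0:ℝ)..s, r ^ (n - 1) / v r) ≤ 2 * D^(m+1) * s ^ n / ((n : ℝ) * v s) := by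
    intro n hn s hs0 hs1 hreg
    have hn0 : (0:ℝ) < n := by exact_mod_cast Nat.lt_of_lt_of_le Nat.zero_lt_one hn
    have hs1' : s < 1 := by
      have : (0:ℝ) < 1/n := by positivity
      linarith
    have hsI : s ∈ Set.Ico (0:ℝ) 1 := ⟨hs0.le, hs1'⟩
    have hvs : 0 < v s := hv_pos s hsI
    have h2pos : (0:ℝ) < 2^(m+1) := by positivity
    have hinv1 : ((2:ℝ)^(m+1))⁻¹ ≤ 1 := by
      rw [inv_le_one_iff₀]; right
      calc (1:ℝ) ≤ 2 := one_le_two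
      _ ≤ 2^(m+1) := by
        calc (2:ℝ) = 2^1 := (pow_one 2).symm
        _ ≤ 2^(m+1) := pow_le_pow_right₀ one_le_two (by omega)
    have hptI : (1 : ℝ) - ((2:ℝ)^(m+1))⁻¹ ∈ Set.Ico (0:ℝ) 1 := by
      constructor
      · linarith
      · have : (0:ℝ) < ((2:ℝ)^(m+1))⁻¹ := by positivity
        linarith
    have hsle : s ≤ 1 - ((2:ℝ)^(m+1))⁻¹ := by
      have h := mul_le_mul_of_nonneg_left hreg (by positivity : (0:ℝ) ≤ ((2:ℝ)^(m+1))⁻¹)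
      rw [mul_one, ← mul_assoc, inv_mul_cancel₀ h2pos.ne', one_mul] at h
      linarith
    have hchain := aux_chain v D hD hdbl (m+1) ((2:ℝ)^(m+1))⁻¹ (by positivity)
      (le_of_eq (mul_inv_cancel₀ h2pos.ne'))
    rw [mul_inv_cancel₀ h2pos.ne'] at hchain
    simp only [sub_self, hv_zero, mul_one] at hchain
    have hvsD : v s ≤ D^(m+1) :=
      le_trans (hv_mono.monotoneOn hsI hptI hsle) hchain
    -- integral comparison
    have hint1 := aux_int v hv_pos hv_cont (n-1) (le_refl (0:ℝ)) hs0.le hs1'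
    have hint2 : IntervalIntegrable (fun r => r^(n-1)) MeasureTheory.volume 0 s :=
      (continuous_pow (n-1)).intervalIntegrable 0 s
    have hmono2 : (∫ r in (0:ℝ)..s, r^(n-1)/v r) ≤ ∫ r in (0:ℝ)..s, r^(n-1) := by
      apply intervalIntegral.integral_mono_on hs0.le hint1 hint2
      intro x hx
      have hxI : x ∈ Set.Ico (0:ℝ) 1 := ⟨hx.1, lt_of_le_of_lt hx.2 hs1'⟩
      exact div_le_self (pow_nonneg hx.1 _) (hv1 x hxI)
    rw [hpow n hn 0 s, zero_pow (by omega : n ≠ 0)] at hmono2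
    refine le_trans hmono2 ?_
    rw [div_le_div_iff₀ hn0 (by positivity)]
    have hPn : (0:ℝ) ≤ s^n * n := mul_nonneg (pow_nonneg hs0.le n) hn0.le
    nlinarith [mul_le_mul_of_nonneg_left (show v s ≤ 2*D^(m+1) by linarith) hPn]
  -- main induction
  have main : ∀ k : ℕ, ∀ n : ℕ, 1 ≤ n → ∀ s : ℝ, 0 < s → s ≤ 1 - 1/(n:ℝ) →
      1 ≤ 2^(m*k+1) * (1 - s) →
      (∫ r in (0:ℝ)..s, r ^ (n - 1) / v r) ≤ 2 * D^(m+1) * s ^ n / ((n : ℝ) * v s) := by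
    intro k
    induction k with
    | zero =>
      intro n hn s hs0 hs1 hreg
      apply hbase n hn s hs0 hs1
      have hreg' : (1:ℝ) ≤ 2*(1-s) := by
        have : (2:ℝ)^(m*0+1) = 2 := by norm_num
        rw [this] at hreg; exact hreg
      have h1 : (2:ℝ) ≤ 2^(m+1) := by
        calc (2:ℝ) = 2^1 := (pow_one 2).symm
        _ ≤ 2^(m+1) := pow_le_pow_right₀ one_le_two (by omega)
      have h2 : (0:ℝ) ≤ 1 - s := by linarith
      calc (1:ℝ) ≤ 2 * (1-s) := hreg'
      _ ≤ 2^(m+1) * (1-s) := mul_le_mul_of_nonneg_right h1 h2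
    | succ k ih =>
      intro n hn s hs0 hs1 hreg
      by_cases hbig : 1 ≤ 2^(m+1) * (1-s)
      · exact hbase n hn s hs0 hs1 hbig
      push_neg at hbig
      have hn0 : (0:ℝ) < n := by exact_mod_cast Nat.lt_of_lt_of_le Nat.zero_lt_one hn
      have hδn : 1/(n:ℝ) ≤ 1 - s := by linarith
      have hδ0 : (0:ℝ) < 1 - s := lt_of_lt_of_le (by positivity) hδn
      have hs1' : s < 1 := by linarith
      have h2mδ : (2:ℝ)^m * (1-s) < 1/2 := by
        have : (2:ℝ)^(m+1) = 2 * 2^m := by ring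
        rw [this] at hbig; linarith
      have h2mpos : (0:ℝ) < 2^m := by positivity
      set s' := 1 - 2^m * (1-s) with hs'def
      have hs'0 : 0 < s' := by rw [hs'def]; linarith
      have hs's : s' < s := by
        rw [hs'def]
        nlinarith [h2m2, hδ0]
      have hs'le : s' ≤ 1 - 1/(n:ℝ) := by
        rw [hs'def]
        nlinarith [h2m2, hδ0, hδn]
      have hreg' : 1 ≤ 2^(m*k+1) * (1 - s') := by
        have h1s' : (1:ℝ) - s' = 2^m * (1-s) := by rw [hs'def]; ring
        have hexp : (2:ℝ)^(m*(k+1)+1) = 2^(m*k+1) * 2^m := by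
          rw [← pow_add]; congr 1; ring
        rw [h1s', ← mul_assoc, ← hexp]
        exact hreg
      have IH := ih n hn s' hs'0 hs'le hreg'
      -- memberships and positivity
      have hsI : s ∈ Set.Ico (0:ℝ) 1 := ⟨hs0.le, hs1'⟩
      have hs'I : s' ∈ Set.Ico (0:ℝ) 1 := ⟨hs'0.le, lt_trans hs's hs1'⟩
      have hvs : 0 < v s := hv_pos s hsI
      have hvs' : 0 < v s' := hv_pos s' hs'I
      -- doubling chain from s to s'
      have hvchain : v s ≤ D^m * v s' := by
        have h := aux_chain v D hD hdbl m (1-s) hδ0 (by linarith)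
        have he : (1:ℝ) - (1-s) = s := by ring
        rw [he] at h
        exact h
      -- split the integral
      have hint01 := aux_int v hv_pos hv_cont (n-1) (le_refl (0:ℝ)) hs'0.le (lt_trans hs's hs1')
      have hint12 := aux_int v hv_pos hv_cont (n-1) hs'0.le hs's.le hs1'
      have hsplit := intervalIntegral.integral_add_adjacent_intervals hint01 hint12
      -- middle piece
      have hmid : (∫ r in s'..s, r^(n-1)/v r) ≤ (s^n - s'^n)/((n:ℝ) * v s') := by
        have hintc : IntervalIntegrable (fun r => r^(n-1)/v s') MeasureTheory.volume s' s :=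
          ((continuous_pow (n-1)).div_const (v s')).intervalIntegrable s' s
        have h1 : (∫ r in s'..s, r^(n-1)/v r) ≤ ∫ r in s'..s, r^(n-1)/v s' := by
          apply intervalIntegral.integral_mono_on hs's.le hint12 hintc
          intro x hx
          have hxI : x ∈ Set.Ico (0:ℝ) 1 := ⟨le_trans hs'0.le hx.1, lt_of_le_of_lt hx.2 hs1'⟩
          have hvx : v s' ≤ v x := by
            rcases eq_or_lt_of_le hx.1 with h | h
            · rw [← h]
            · exact (hv_mono hs'I hxI h).le
          exact div_le_div_of_nonneg_left (pow_nonneg (le_trans hs'0.le hx.1) _) hvs' hvx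
        rw [intervalIntegral.integral_div, hpow n hn s' s, div_div] at h1
        exact h1
      -- decay of s'^n
      have hE : s'^n ≤ Real.exp (1 - 2^m) * s^n := by
        have hx2 : (2^m - 1) * (1-s) < 1/2 := by nlinarith [hδ0]
        have hx0 : (0:ℝ) ≤ 1 - (2^m - 1)*(1-s) := by linarith
        have h1 : s' ≤ s * (1 - (2^m - 1)*(1-s)) := by
          rw [hs'def]; nlinarith [hδ0, h2m2]
        have h2 : s'^n ≤ (s * (1 - (2^m-1)*(1-s)))^n := pow_le_pow_left₀ hs'0.le h1 n
        have h3 : (1 - (2^m-1)*(1-s)) ≤ Real.exp (-((2^m-1)*(1-s))) := by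
          have := Real.add_one_le_exp (-((2^m-1)*(1-s))); linarith
        have h4 : (1 - (2^m-1)*(1-s))^n ≤ Real.exp (-((2^m-1)*(1-s)))^n :=
          pow_le_pow_left₀ hx0 h3 n
        have h5 : Real.exp (-((2^m-1)*(1-s)))^n = Real.exp ((n:ℝ) * -((2^m-1)*(1-s))) := by
          rw [Real.exp_nat_mul]
        have hnδ : 1 ≤ (n:ℝ)*(1-s) := by
          have := mul_le_mul_of_nonneg_left hδn hn0.le
          rw [mul_one_div, div_self hn0.ne'] at this
          linarith
        have h6 : Real.exp ((n:ℝ) * -((2^m-1)*(1-s))) ≤ Real.exp (1 - 2^m) := by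
          rw [Real.exp_le_exp]
          nlinarith [h2m2, hnδ]
        calc s'^n ≤ (s * (1 - (2^m-1)*(1-s)))^n := h2
        _ = s^n * (1 - (2^m-1)*(1-s))^n := mul_pow s _ n
        _ ≤ s^n * Real.exp (1 - 2^m) := by
            apply mul_le_mul_of_nonneg_left _ (pow_nonneg hs0.le n)
            calc (1 - (2^m-1)*(1-s))^n ≤ Real.exp (-((2^m-1)*(1-s)))^n := h4
            _ = Real.exp ((n:ℝ) * -((2^m-1)*(1-s))) := h5
            _ ≤ Real.exp (1 - 2^m) := h6
        _ = Real.exp (1 - 2^m) * s^n := mul_comm _ _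
      -- assemble
      have hP0 : (0:ℝ) ≤ s^n := pow_nonneg hs0.le n
      have hQ0 : (0:ℝ) ≤ s'^n := pow_nonneg hs'0.le n
      have hE0 : (0:ℝ) < Real.exp (1 - 2^m) := Real.exp_pos _
      have h1 : 2*D^(m+1)*(s'^n * v s) ≤ D^(m+1)*(s^n * v s') := by
        have hA : s'^n * v s ≤ (Real.exp (1-2^m) * s^n) * (D^m * v s') :=
          mul_le_mul hE hvchain hvs.le (by positivity)
        have hB := mul_le_mul_of_nonneg_left hA (by linarith : (0:ℝ) ≤ 2*D^(m+1))
        have hEq : 2*D^(m+1) * ((Real.exp (1-2^m) * s^n) * (D^m * v s')) =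
            (2 * (D^m * Real.exp (1-2^m))) * (D^(m+1) * (s^n * v s')) := by ring
        rw [hEq] at hB
        have hC : (2 * (D^m * Real.exp (1-2^m))) * (D^(m+1) * (s^n * v s')) ≤
            (2 * (1/2)) * (D^(m+1) * (s^n * v s')) := by
          apply mul_le_mul_of_nonneg_right (by linarith) (by positivity)
        calc 2*D^(m+1)*(s'^n * v s) ≤ (2 * (1/2)) * (D^(m+1) * (s^n * v s')) :=
              le_trans hB hC
        _ = D^(m+1)*(s^n * v s') := by ring
      have h2 : s^n * v s ≤ D^(m+1)*(s^n * v s') := by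
        have hA : s^n * v s ≤ s^n * (D^m * v s') :=
          mul_le_mul_of_nonneg_left hvchain hP0
        have hDle : D^m ≤ D^(m+1) := pow_le_pow_right₀ hD.le (by omega)
        have hB : s^n * (D^m * v s') ≤ s^n * (D^(m+1) * v s') := by
          apply mul_le_mul_of_nonneg_left _ hP0
          exact mul_le_mul_of_nonneg_right hDle hvs'.le
        calc s^n * v s ≤ s^n * (D^(m+1) * v s') := le_trans hA hB
        _ = D^(m+1)*(s^n * v s') := by ring
      have key : (2*D^(m+1)*s'^n + (s^n - s'^n))/((n:ℝ)*v s') ≤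
          2*D^(m+1)*s^n/((n:ℝ)*v s) := by
        rw [div_le_div_iff₀ (by positivity) (by positivity)]
        have hQW : (0:ℝ) ≤ s'^n * v s := mul_nonneg hQ0 hvs.le
        have h3 : 2*D^(m+1)*(s'^n * v s) + s^n * v s - s'^n * v s ≤
            2*D^(m+1)*(s^n * v s') := by linarith [h1, h2, hQW]
        linarith [mul_le_mul_of_nonneg_left h3 hn0.le]
      calc (∫ r in (0:ℝ)..s, r ^ (n - 1) / v r)
          = (∫ r in (0:ℝ)..s', r ^ (n - 1) / v r) + ∫ r in s'..s, r ^ (n - 1) / v r :=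
            hsplit.symm
      _ ≤ 2*D^(m+1)*s'^n/((n:ℝ)*v s') + (s^n - s'^n)/((n:ℝ)*v s') := add_le_add IH hmid
      _ = (2*D^(m+1)*s'^n + (s^n - s'^n))/((n:ℝ)*v s') := (add_div _ _ _).symm
      _ ≤ 2*D^(m+1)*s^n/((n:ℝ)*v s) := key
  -- wrap up
  refine ⟨2 * D^(m+1), hC0, 1, le_refl 1, ?_⟩
  intro n hn s hs0 hs1
  have hn0 : (0:ℝ) < n := by exact_mod_cast Nat.lt_of_lt_of_le Nat.zero_lt_one hn
  have hδn : 1/(n:ℝ) ≤ 1 - s := by linarith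
  apply main n n hn s hs0 hs1
  have hpow2 : (n:ℝ) ≤ 2^(m*n+1) := by
    have h1 : n < 2^n := Nat.lt_two_pow_self (n := n)
    have h2 : (2:ℕ)^n ≤ 2^(m*n+1) := by
      apply Nat.pow_le_pow_right (by norm_num)
      calc n ≤ m*n := Nat.le_mul_of_pos_left n (by omega)
      _ ≤ m*n+1 := by omega
    have h3 : n ≤ 2^(m*n+1) := le_trans (le_of_lt h1) h2
    exact_mod_cast h3
  have hid : ((n:ℝ))*(1/n) = 1 := by field_simp
  calc (1:ℝ) = n*(1/n) := hid.symm
  _ ≤ 2^(m*n+1)*(1-s) := mul_le_mul hpow2 hδn (by positivity) (by positivity)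
end

section
/- Let v be a weight function satisfying the doubling condition with constant D, and let g(x)=v(1-1/x). Then there exist constants C > 0, c > 0 and an integer n_0 ≥ 2, depending only on D, such that for every integer n ≥ n_0, c / g(n) ≤ ∫_{1/2}^{1} r^{n} v(r)^{-2} dv(r) ≤ C / g(n), where the integral is the Riemann–Stieltjes integral with respect to v. -/
open Real MeasureTheory Set Filter

/-
STATEMENT 16

v is a weight function satisfying the doubling condition with constant D,
g(x) = v(1-1/x).  Then there are C > 0, c > 0 and n₀ ≥ 2, depending only on D,
with c/g(n) ≤ ∫_{1/2}^1 r^n v(r)^{-2} dv(r) ≤ C/g(n) for all n ≥ n₀.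

Modelling of the Riemann–Stieltjes integral: v is continuous and strictly
increasing on [0,1) with v(r) → ∞ as r → 1⁻, so by the change of variables
t = v(r) the (improper) Riemann–Stieltjes integral ∫_{1/2}^1 r^n v(r)^{-2} dv(r)
equals the Lebesgue integral ∫_{(v(1/2),∞)} w(t)^n / t² dt, where w is the
(hypothesized) inverse of v.
-/
set_option maxHeartbeats 1000000 in
theorem stmt_16
    (v : ℝ → ℝ)
    (hv_pos : ∀ r ∈ Set.Ico (0:ℝ) 1, 0 < v r)
    (hv_mono : StrictMonoOn v (Set.Ico (0:ℝ) 1))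
    (hv_cont : ContinuousOn v (Set.Ico (0:ℝ) 1))
    (hv_zero : v 0 = 1)
    (hv_top : Filter.Tendsto v (nhdsWithin 1 (Set.Iio (1:ℝ))) Filter.atTop)
    (D : ℝ) (hD : 1 < D)
    (hdbl : ∀ d ∈ Set.Ioc (0:ℝ) (1/2:ℝ), v (1 - d) ≤ D * v (1 - 2*d))
    (g : ℝ → ℝ) (hg : ∀ x, g x = v (1 - 1/x))
    (w : ℝ → ℝ) (hw : ∀ r ∈ Set.Ico (0:ℝ) 1, w (v r) = r) :
    ∃ C > 0, ∃ c > 0, ∃ n₀ : ℕ, 2 ≤ n₀ ∧ ∀ m : ℕ, n₀ ≤ m →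
      c / g m ≤ (∫ t in Set.Ioi (v (1/2:ℝ)), w t ^ m / t ^ 2) ∧
      (∫ t in Set.Ioi (v (1/2:ℝ)), w t ^ m / t ^ 2) ≤ C / g m := by
  have hD0 : (0:ℝ) < D := lt_trans one_pos hD
  have h0m : (0:ℝ) ∈ Set.Ico (0:ℝ) 1 := by norm_num
  have hhm : (1/2:ℝ) ∈ Set.Ico (0:ℝ) 1 := by norm_num
  have hv_half : 1 < v (1/2) := by
    have := hv_mono h0m hhm (by norm_num)
    rwa [hv_zero] at this
  have hv_half_pos : (0:ℝ) < v (1/2) := lt_trans one_pos hv_half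
  -- surjectivity of v from [1/2,1) onto [v(1/2),∞)
  have hsurj : ∀ t : ℝ, v (1/2) ≤ t → ∃ r ∈ Set.Ico (1/2:ℝ) 1, v r = t := by
    intro t ht
    obtain ⟨x, hx, hxt⟩ : ∃ x, x ∈ Set.Ioo (1/2:ℝ) 1 ∧ t ≤ v x := by
      have h1 : ∀ᶠ x in nhdsWithin 1 (Set.Iio (1:ℝ)), t ≤ v x :=
        hv_top.eventually_ge_atTop t
      have h2 : Set.Ioo (1/2:ℝ) 1 ∈ nhdsWithin 1 (Set.Iio (1:ℝ)) :=
        Ioo_mem_nhdsLT_of_mem (by norm_num)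
      exact (h1.and (Filter.eventually_of_mem h2 (fun x hx => hx))).exists.imp
        (fun x hx => ⟨hx.2, hx.1⟩)
    have hsub : Set.Icc (1/2:ℝ) x ⊆ Set.Ico (0:ℝ) 1 := fun y hy =>
      ⟨by linarith [hy.1], lt_of_le_of_lt hy.2 hx.2⟩
    have := intermediate_value_Icc (le_of_lt hx.1) (hv_cont.mono hsub)
    obtain ⟨r, hr, hrt⟩ := this ⟨ht, hxt⟩
    exact ⟨r, ⟨hr.1, lt_of_le_of_lt hr.2 hx.2⟩, hrt⟩
  -- basic facts about w on (v(1/2),∞)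
  have hwt : ∀ t ∈ Set.Ioi (v (1/2:ℝ)), (1/2:ℝ) ≤ w t ∧ w t < 1 ∧ v (w t) = t := by
    intro t ht
    obtain ⟨r, hr, hrt⟩ := hsurj t (le_of_lt ht)
    have : w t = r := by rw [← hrt, hw r ⟨by linarith [hr.1], hr.2⟩]
    rw [this]; exact ⟨hr.1, hr.2, hrt⟩
  have hwmem : ∀ t ∈ Set.Ioi (v (1/2:ℝ)), w t ∈ Set.Ico (0:ℝ) 1 := by
    intro t ht
    obtain ⟨h1, h2, _⟩ := hwt t ht
    exact ⟨by linarith, h2⟩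
  have hwmono : MonotoneOn w (Set.Ioi (v (1/2:ℝ))) := by
    intro t1 h1 t2 h2 h12
    by_contra hcon
    push_neg at hcon
    have := hv_mono (hwmem t2 h2) (hwmem t1 h1) hcon
    rw [(hwt t1 h1).2.2, (hwt t2 h2).2.2] at this
    exact absurd h12 (not_le.mpr this)
  -- measurability & integrability
  have hameas : ∀ n : ℕ, AEMeasurable (fun t => w t ^ n / t ^ 2)
      (volume.restrict (Set.Ioi (v (1/2:ℝ)))) := by
    intro n
    have h1 : AEMeasurable w (volume.restrict (Set.Ioi (v (1/2:ℝ)))) :=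
      aemeasurable_restrict_of_monotoneOn measurableSet_Ioi hwmono
    exact (h1.pow_const n).div ((measurable_id.pow_const 2).aemeasurable)
  have hinv_int : IntegrableOn (fun t : ℝ => t ^ (-2:ℝ)) (Set.Ioi (v (1/2:ℝ))) :=
    integrableOn_Ioi_rpow_of_lt (by norm_num) hv_half_pos
  have hrpow_eq : ∀ t : ℝ, 0 < t → t ^ (-2:ℝ) = 1 / t ^ 2 := by
    intro t ht
    rw [Real.rpow_neg (le_of_lt ht), one_div]
    norm_cast
  have hint : ∀ n : ℕ, IntegrableOn (fun t => w t ^ n / t ^ 2) (Set.Ioi (v (1/2:ℝ))) := by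
    intro n
    apply Integrable.mono' hinv_int ((hameas n).aestronglyMeasurable)
    filter_upwards [ae_restrict_mem measurableSet_Ioi] with t ht
    have ht0 : (0:ℝ) < t := lt_trans hv_half_pos ht
    obtain ⟨hw1, hw2, _⟩ := hwt t ht
    have hwn : w t ^ n ≤ 1 := pow_le_one₀ (by linarith) (le_of_lt hw2)
    have hwn0 : 0 ≤ w t ^ n := pow_nonneg (by linarith) n
    rw [Real.norm_eq_abs, abs_of_nonneg (by positivity), hrpow_eq t ht0]
    gcongr

  -- constants
  set p : ℝ := Real.logb 2 (D^2) with hp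
  have hp0 : 0 ≤ p := Real.logb_nonneg (by norm_num) (by nlinarith)
  set M : ℕ := ⌈p⌉₊ with hM
  set A : ℝ := D^2 * (Nat.factorial M : ℝ) with hA
  have hA0 : (0:ℝ) < A := by positivity
  refine ⟨A + 1, by positivity, Real.exp (-2), Real.exp_pos _, 2, le_refl 2, ?_⟩
  intro m hm
  have hN2 : (2:ℝ) ≤ (m:ℝ) := by exact_mod_cast hm
  set N : ℝ := (m:ℝ) with hNdef
  have hN0 : (0:ℝ) < N := by linarith
  have hNinv : 1/N ≤ 1/2 := by
    rw [div_le_div_iff₀ hN0 (by norm_num)]; linarith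
  have hNinv0 : 0 < 1/N := by positivity
  have hhalf_le : (1/2:ℝ) ≤ 1 - 1/N := by linarith
  have hgmem : (1 - 1/N) ∈ Set.Ico (0:ℝ) 1 := ⟨by linarith, by linarith⟩
  have hgm : g N = v (1 - 1/N) := hg N
  have hgm_ge : v (1/2) ≤ g N := by
    rw [hgm]
    rcases eq_or_lt_of_le hhalf_le with h | h
    · rw [← h]
    · exact le_of_lt (hv_mono hhm hgmem h)
  have hgm_pos : (0:ℝ) < g N := lt_of_lt_of_le hv_half_pos hgm_ge
  -- tail integral of t^(-2)
  have htail : (∫ t in Set.Ioi (g N), t ^ (-2:ℝ)) = 1 / g N := by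
    rw [integral_Ioi_rpow_of_lt (by norm_num) hgm_pos]
    norm_num [Real.rpow_neg_one]
  -- w ≥ 1 - 1/N on Ioi (g N)
  have hw_ge : ∀ t ∈ Set.Ioi (g N), 1 - 1/N ≤ w t := by
    intro t ht
    have htI : t ∈ Set.Ioi (v (1/2:ℝ)) := lt_of_le_of_lt hgm_ge ht
    by_contra hcon
    push_neg at hcon
    have := hv_mono (hwmem t htI) hgmem hcon
    rw [(hwt t htI).2.2, ← hgm] at this
    exact absurd ht (not_lt.mpr this.le)
  -- LOWER BOUND
  have hlow1 : (∫ t in Set.Ioi (g N), (1 - 1/N)^m * t^(-2:ℝ))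
      ≤ ∫ t in Set.Ioi (g N), w t ^ m / t ^ 2 := by
    apply setIntegral_mono_on
    · exact (hinv_int.mono_set (Set.Ioi_subset_Ioi hgm_ge)).const_mul _
    · exact (hint m).mono_set (Set.Ioi_subset_Ioi hgm_ge)
    · exact measurableSet_Ioi
    · intro t ht
      have htI : t ∈ Set.Ioi (v (1/2:ℝ)) := lt_of_le_of_lt hgm_ge ht
      have ht0 : (0:ℝ) < t := lt_trans hv_half_pos htI
      rw [hrpow_eq t ht0, mul_one_div]
      exact (div_le_div_iff_of_pos_right (by positivity)).mpr
        (pow_le_pow_left₀ (by linarith) (hw_ge t ht) m)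
  have hlow2 : (∫ t in Set.Ioi (g N), (1 - 1/N)^m * t^(-2:ℝ)) = (1 - 1/N)^m / g N := by
    rw [MeasureTheory.integral_const_mul, htail, mul_one_div]
  have hlow3 : (∫ t in Set.Ioi (g N), w t ^ m / t ^ 2)
      ≤ ∫ t in Set.Ioi (v (1/2:ℝ)), w t ^ m / t ^ 2 := by
    apply setIntegral_mono_set (hint m)
    · filter_upwards [ae_restrict_mem measurableSet_Ioi] with t ht
      have h1 := (hwt t ht).1
      positivity
    · exact HasSubset.Subset.eventuallyLE (Set.Ioi_subset_Ioi hgm_ge)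
  have hexp : Real.exp (-2) ≤ (1 - 1/N)^m := by
    have hNm1 : (0:ℝ) < N - 1 := by linarith
    have h2 : (1 + 1/(N-1)) ≤ Real.exp (1/(N-1)) := by
      have := Real.add_one_le_exp (1/(N-1)); linarith
    have h4 : (Real.exp (1/(N-1)))⁻¹ ≤ (1 + 1/(N-1))⁻¹ :=
      inv_anti₀ (by positivity) h2
    have h5 : (1 + 1/(N-1))⁻¹ = 1 - 1/N := by
      rw [show (1:ℝ) + 1/(N-1) = N/(N-1) by field_simp; ring]
      rw [show (1:ℝ) - 1/N = (N-1)/N by field_simp]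
      rw [inv_div]
    have h1 : Real.exp (-(1/(N-1))) ≤ 1 - 1/N := by
      rw [Real.exp_neg]; rw [h5] at h4; exact h4
    calc Real.exp (-2) ≤ Real.exp ((m:ℝ) * (-(1/(N-1)))) := by
          apply Real.exp_le_exp.mpr
          rw [← hNdef, mul_neg, mul_one_div, neg_le_neg_iff]
          rw [div_le_iff₀ hNm1]; linarith
      _ = (Real.exp (-(1/(N-1))))^m := Real.exp_nat_mul _ m
      _ ≤ (1 - 1/N)^m := pow_le_pow_left₀ (Real.exp_pos _).le h1 m
  have hlower : Real.exp (-2) / g N ≤ ∫ t in Set.Ioi (v (1/2:ℝ)), w t ^ m / t ^ 2 := by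
    calc Real.exp (-2) / g N ≤ (1 - 1/N)^m / g N := by gcongr
      _ = _ := hlow2.symm
      _ ≤ _ := hlow1
      _ ≤ _ := hlow3
  -- UPPER BOUND
  -- the doubling chain
  have chain : ∀ j : ℕ, (2:ℝ)^j ≤ N → v (1 - 1/N) ≤ D^j * v (1 - 2^j/N) := by
    intro j
    induction j with
    | zero => intro _; simp
    | succ k ih =>
      intro hle
      have h2 : (0:ℝ) < 2^k := by positivity
      have h2' : (2:ℝ)^(k+1) = 2 * 2^k := by ring
      have hk : (2:ℝ)^k ≤ N := by nlinarith
      have hdk : (2:ℝ)^k / N ∈ Set.Ioc (0:ℝ) (1/2) := by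
        constructor
        · positivity
        · rw [div_le_div_iff₀ hN0 (by norm_num)]; nlinarith
      calc v (1 - 1/N) ≤ D^k * v (1 - 2^k/N) := ih hk
        _ ≤ D^k * (D * v (1 - 2*(2^k/N))) :=
            mul_le_mul_of_nonneg_left (hdbl _ hdk) (by positivity)
        _ = D^(k+1) * v (1 - 2^(k+1)/N) := by
            rw [show 2*((2:ℝ)^k/N) = 2^(k+1)/N by ring]; ring
  -- key pointwise estimate on the middle piece
  have key : ∀ t ∈ Set.Ioc (v (1/2:ℝ)) (g N), w t ^ m / t ^ 2 ≤ A / (g N)^2 := by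
    intro t ht
    have htI : t ∈ Set.Ioi (v (1/2:ℝ)) := ht.1
    obtain ⟨hw1, hw2, hwv⟩ := hwt t htI
    have ht0 : (0:ℝ) < t := lt_trans hv_half_pos ht.1
    set d : ℝ := 1 - w t with hdd
    have hd1 : (0:ℝ) < d := by simp only [hdd]; linarith
    have hd2 : d ≤ 1/2 := by simp only [hdd]; linarith
    have hdN : 1 ≤ d * N := by
      have hr : w t ≤ 1 - 1/N := by
        by_contra hcon; push_neg at hcon
        have := hv_mono hgmem (hwmem t htI) hcon
        rw [hwv, ← hgm] at this
        exact absurd ht.2 (not_le.mpr this)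
      have h6 : 1/N ≤ d := by simp only [hdd]; linarith
      calc (1:ℝ) = (1/N) * N := by field_simp
        _ ≤ d * N := mul_le_mul_of_nonneg_right h6 hN0.le
    set x : ℝ := d * N with hxd
    have hx1 : (1:ℝ) ≤ x := hdN
    have hx0 : (0:ℝ) < x := lt_of_lt_of_le one_pos hx1
    obtain ⟨k, hk1, hk2⟩ : ∃ k : ℕ, (2:ℝ)^k ≤ x ∧ x ≤ 2^(k+1) := by
      refine ⟨Nat.log 2 ⌊x⌋₊, ?_, ?_⟩
      · have hfl : ⌊x⌋₊ ≠ 0 := (Nat.floor_pos.mpr hx1).ne'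
        have h1 : (2:ℕ)^(Nat.log 2 ⌊x⌋₊) ≤ ⌊x⌋₊ := Nat.pow_log_le_self 2 hfl
        calc ((2:ℝ))^(Nat.log 2 ⌊x⌋₊) ≤ (⌊x⌋₊:ℝ) := by exact_mod_cast h1
          _ ≤ x := Nat.floor_le hx0.le
      · have h2 : ⌊x⌋₊ < 2^(Nat.log 2 ⌊x⌋₊ + 1) := Nat.lt_pow_succ_log_self (by norm_num) _
        have h3 : x < (⌊x⌋₊:ℝ) + 1 := Nat.lt_floor_add_one x
        have h4 : ((⌊x⌋₊:ℕ):ℝ) + 1 ≤ ((2:ℕ)^(Nat.log 2 ⌊x⌋₊ + 1) : ℝ) := by exact_mod_cast h2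
        calc x ≤ (⌊x⌋₊:ℝ) + 1 := h3.le
          _ ≤ _ := by exact_mod_cast h4
    have h2k1 : (2:ℝ)^(k+1) = 2 * 2^k := by ring
    have h2jN : (2:ℝ)^(k+1) ≤ N := by nlinarith
    have hdle : d ≤ (2:ℝ)^(k+1) / N := by
      rw [le_div_iff₀ hN0]; exact hk2
    have hmem2 : (1 - (2:ℝ)^(k+1)/N) ∈ Set.Ico (0:ℝ) 1 := by
      constructor
      · rw [sub_nonneg, div_le_one hN0]; exact h2jN
      · have h7 : (0:ℝ) < (2:ℝ)^(k+1)/N := by positivity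
        linarith
    have hvle : v (1 - 2^(k+1)/N) ≤ t := by
      rcases eq_or_lt_of_le hdle with h | h
      · rw [show (1:ℝ) - 2^(k+1)/N = w t by rw [← h]; simp [hdd], hwv]
      · have h8 : 1 - 2^(k+1)/N < w t := by simp only [hdd] at h; linarith
        exact le_of_lt (by rw [← hwv]; exact hv_mono hmem2 (hwmem t htI) h8)
    have hgmt : g N ≤ D^(k+1) * t := by
      rw [hgm]
      calc v (1-1/N) ≤ D^(k+1) * v (1 - 2^(k+1)/N) := chain (k+1) h2jN
        _ ≤ D^(k+1) * t := mul_le_mul_of_nonneg_left hvle (by positivity)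
    have hpow : w t ^ m ≤ Real.exp (-x) := by
      have h9 : w t = 1 - x / N := by
        rw [hxd, mul_div_assoc, div_self hN0.ne', mul_one, hdd]; ring
      rw [h9]
      exact Real.one_sub_div_pow_le_exp_neg (by nlinarith)
    have hDj : (D:ℝ)^(2*(k+1)) ≤ D^2 * (Nat.factorial M : ℝ) * Real.exp x := by
      have e1 : (D:ℝ)^(2*(k+1)) = D^2 * ((D^2)^k) := by
        rw [show 2*(k+1) = 2 + 2*k by omega, pow_add, pow_mul]
      have hD2 : (2:ℝ) ^ p = D^2 := Real.rpow_logb (by norm_num) (by norm_num) (by positivity)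
      have e2 : ((D:ℝ)^2)^k = ((2:ℝ)^(k:ℕ)) ^ p := by
        rw [← hD2, ← Real.rpow_natCast ((2:ℝ)^p) k, ← Real.rpow_mul (by norm_num),
          mul_comm, Real.rpow_mul (by norm_num), Real.rpow_natCast]
      have e3 : ((2:ℝ)^(k:ℕ)) ^ p ≤ x ^ p := Real.rpow_le_rpow (by positivity) hk1 hp0
      have e4 : x ^ p ≤ x ^ (M:ℝ) := Real.rpow_le_rpow_of_exponent_le hx1 (Nat.le_ceil p)
      have e5 : x ^ (M:ℝ) = x ^ M := Real.rpow_natCast x M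
      have e6 : x ^ M ≤ (Nat.factorial M : ℝ) * Real.exp x := by
        have h7 := Real.sum_le_exp_of_nonneg hx0.le (M+1)
        have h8 : x^M / (Nat.factorial M : ℝ) ≤ ∑ i ∈ Finset.range (M+1), x^i / (Nat.factorial i : ℝ) :=
          Finset.single_le_sum (f := fun i => x^i / (Nat.factorial i : ℝ))
            (fun i _ => by positivity) (Finset.self_mem_range_succ M)
        have h9 : (0:ℝ) < (Nat.factorial M : ℝ) := by
          exact_mod_cast Nat.factorial_pos M
        have h10 : x^M / (Nat.factorial M : ℝ) ≤ Real.exp x := le_trans h8 h7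
        rw [div_le_iff₀ h9] at h10
        linarith [h10]
      calc (D:ℝ)^(2*(k+1)) = D^2 * ((D^2)^k) := e1
        _ ≤ D^2 * (x ^ M) := by
            apply mul_le_mul_of_nonneg_left _ (by positivity)
            rw [e2, ← e5]; exact le_trans e3 e4
        _ ≤ D^2 * ((Nat.factorial M : ℝ) * Real.exp x) :=
            mul_le_mul_of_nonneg_left e6 (by positivity)
        _ = D^2 * (Nat.factorial M : ℝ) * Real.exp x := by ring
    have hfinal : w t ^ m * (g N)^2 ≤ A * t^2 := by
      have h1 : (g N)^2 ≤ (D^(k+1) * t)^2 := by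
        apply pow_le_pow_left₀ hgm_pos.le hgmt
      calc w t ^ m * (g N)^2 ≤ Real.exp (-x) * ((D^(k+1)*t)^2) :=
            mul_le_mul hpow h1 (by positivity) (Real.exp_pos _).le
        _ = (D^(2*(k+1)) * Real.exp (-x)) * t^2 := by
            rw [mul_pow, ← pow_mul]; ring_nf
        _ ≤ ((D^2 * (Nat.factorial M : ℝ) * Real.exp x) * Real.exp (-x)) * t^2 := by
            have := Real.exp_pos (-x)
            apply mul_le_mul_of_nonneg_right _ (by positivity)
            exact mul_le_mul_of_nonneg_right hDj (Real.exp_pos _).le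
        _ = A * t^2 := by
            rw [hA, mul_assoc (D^2 * (Nat.factorial M : ℝ)), ← Real.exp_add]
            simp
    rw [div_le_div_iff₀ (by positivity) (by positivity)]
    exact hfinal
  -- assemble the upper bound
  have hup_mid : (∫ t in Set.Ioc (v (1/2:ℝ)) (g N), w t ^ m / t ^ 2) ≤ A / g N := by
    have hconst : IntegrableOn (fun _ : ℝ => A / (g N)^2) (Set.Ioc (v (1/2:ℝ)) (g N)) := by
      apply (integrableOn_const_iff (hC := by simp)).mpr
      exact Or.inr measure_Ioc_lt_top
    calc (∫ t in Set.Ioc (v (1/2:ℝ)) (g N), w t ^ m / t ^ 2)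
        ≤ ∫ _ in Set.Ioc (v (1/2:ℝ)) (g N), A / (g N)^2 :=
          setIntegral_mono_on ((hint m).mono_set Set.Ioc_subset_Ioi_self) hconst
            measurableSet_Ioc key
      _ = (volume (Set.Ioc (v (1/2:ℝ)) (g N))).toReal * (A / (g N)^2) := by
          rw [setIntegral_const, smul_eq_mul, measureReal_def]
      _ ≤ (g N) * (A / (g N)^2) := by
          apply mul_le_mul_of_nonneg_right _ (by positivity)
          rw [Real.volume_Ioc, ENNReal.toReal_ofReal (by linarith)]
          linarith
      _ = A / g N := by field_simp
  have hup_tail : (∫ t in Set.Ioi (g N), w t ^ m / t ^ 2) ≤ 1 / g N := by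
    rw [← htail]
    apply setIntegral_mono_on ((hint m).mono_set (Set.Ioi_subset_Ioi hgm_ge))
      (hinv_int.mono_set (Set.Ioi_subset_Ioi hgm_ge)) measurableSet_Ioi
    intro t ht
    have htI : t ∈ Set.Ioi (v (1/2:ℝ)) := lt_of_le_of_lt hgm_ge ht
    obtain ⟨hw1, hw2, _⟩ := hwt t htI
    have ht0 : (0:ℝ) < t := lt_trans hv_half_pos htI
    rw [hrpow_eq t ht0]
    exact (div_le_div_iff_of_pos_right (by positivity)).mpr
      (pow_le_one₀ (by linarith) hw2.le)
  have hsplit : (∫ t in Set.Ioi (v (1/2:ℝ)), w t ^ m / t ^ 2)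
      = (∫ t in Set.Ioc (v (1/2:ℝ)) (g N), w t ^ m / t ^ 2)
        + ∫ t in Set.Ioi (g N), w t ^ m / t ^ 2 := by
    rw [← Set.Ioc_union_Ioi_eq_Ioi hgm_ge]
    exact setIntegral_union (Set.Ioc_disjoint_Ioi le_rfl) measurableSet_Ioi
      ((hint m).mono_set Set.Ioc_subset_Ioi_self)
      ((hint m).mono_set (Set.Ioi_subset_Ioi hgm_ge))
  have hupper : (∫ t in Set.Ioi (v (1/2:ℝ)), w t ^ m / t ^ 2) ≤ (A + 1) / g N := by
    rw [hsplit, add_div]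
    exact add_le_add hup_mid hup_tail
  exact ⟨hlower, hupper⟩
end
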